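/- arXiv:1602.01020 — 12 statements merged into one kernel-verified Lean document; each statement's English description precedes it below -/
import Mathlib

section
/- Let $[x_i-\tau_i, x_i+\tau_i]$, $i=1,\dots,n$, be closed intervals in $\mathbb{R}$ with $\tau_i>0$ such that their union is a single closed interval. Let $x = \left(\sum_{i=1}^n \tau_i x_i\right)/\left(\sum_{i=1}^n \tau_i\right)$. Then the interval $\left[x - \sum_{i=1}^n \tau_i,\ x + \sum_{i=1}^n \tau_i\right]$ contains $\bigcup_{i=1}^n [x_i-\tau_i, x_i+\tau_i]$. -/
open scoped Pointwise

lemma gg_aux (n : ℕ) (hn : 1 ≤ n) (x τ : Fin n → ℝ) (hτ : ∀ i, 0 < τ i)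
    (hconn : IsPreconnected (⋃ i, Set.Icc (x i - τ i) (x i + τ i))) (j : Fin n) :
    (∑ i, τ i * x i) / (∑ i, τ i) - ∑ i, τ i ≤ x j - τ j := by
  have hne : Nonempty (Fin n) := ⟨⟨0, hn⟩⟩
  have hune : (Finset.univ : Finset (Fin n)).Nonempty := Finset.univ_nonempty
  set T := ∑ i, τ i with hTdef
  have hT : 0 < T := Finset.sum_pos (fun i _ => hτ i) hune
  set m := Finset.univ.inf' hune (fun i => x i - τ i) with hmdef
  have hm_le : ∀ i, m ≤ x i - τ i := fun i => Finset.inf'_le _ (Finset.mem_univ i)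
  have hmem : ∀ i, x i - τ i ∈ ⋃ k, Set.Icc (x k - τ k) (x k + τ k) := by
    intro i
    exact Set.mem_iUnion.2 ⟨i, le_refl _, by linarith [hτ i]⟩
  have hm_mem : m ∈ ⋃ k, Set.Icc (x k - τ k) (x k + τ k) := by
    obtain ⟨i₀, -, h⟩ := Finset.exists_mem_eq_inf' hune (fun i => x i - τ i)
    rw [hmdef, h]; exact hmem i₀
  have hOC := hconn.ordConnected
  -- key covering estimate
  have key : ∀ i, x i - m ≤ τ i +
      ∑ k ∈ Finset.univ.filter (fun k => x k - τ k < x i - τ i), 2 * τ k := by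
    intro i
    have hnn : 0 ≤ ∑ k ∈ Finset.univ.filter (fun k => x k - τ k < x i - τ i), 2 * τ k :=
      Finset.sum_nonneg (fun k _ => by linarith [hτ k])
    rcases le_or_gt (x i - τ i) m with h | h
    · have := hm_le i; linarith
    · -- cover Ico m (x i - τ i)
      have hcov : Set.Ico m (x i - τ i) ⊆
          ⋃ k ∈ Finset.univ.filter (fun k => x k - τ k < x i - τ i),
            Set.Icc (x k - τ k) (x k + τ k) := by
        intro y hy
        have hy' : y ∈ ⋃ k, Set.Icc (x k - τ k) (x k + τ k) :=
          hOC.out hm_mem (hmem i) ⟨hy.1, hy.2.le⟩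
        obtain ⟨k, hk⟩ := Set.mem_iUnion.1 hy'
        exact Set.mem_biUnion (Finset.mem_filter.2 ⟨Finset.mem_univ k, lt_of_le_of_lt hk.1 hy.2⟩) hk
      have hvol : MeasureTheory.volume (Set.Ico m (x i - τ i)) ≤
          ∑ k ∈ Finset.univ.filter (fun k => x k - τ k < x i - τ i),
            MeasureTheory.volume (Set.Icc (x k - τ k) (x k + τ k)) :=
        (MeasureTheory.measure_mono hcov).trans
          (MeasureTheory.measure_biUnion_finset_le _ _)
      rw [Real.volume_Ico] at hvol
      have hvol2 : ENNReal.ofReal (x i - τ i - m) ≤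
          ENNReal.ofReal (∑ k ∈ Finset.univ.filter (fun k => x k - τ k < x i - τ i), 2 * τ k) := by
        rw [ENNReal.ofReal_sum_of_nonneg (fun k _ => by linarith [hτ k])]
        refine hvol.trans (le_of_eq (Finset.sum_congr rfl (fun k _ => ?_)))
        rw [Real.volume_Icc]; congr 1; ring
      have := (ENNReal.ofReal_le_ofReal_iff hnn).1 hvol2
      linarith
  -- weighted sum
  have step : ∑ i, τ i * (x i - m) ≤ T ^ 2 := by
    have h1 : ∑ i, τ i * (x i - m) ≤
        ∑ i, τ i * (τ i + ∑ k ∈ Finset.univ.filter (fun k => x k - τ k < x i - τ i), 2 * τ k) :=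
      Finset.sum_le_sum (fun i _ => mul_le_mul_of_nonneg_left (key i) (hτ i).le)
    have h2 : ∑ i, τ i * (τ i + ∑ k ∈ Finset.univ.filter (fun k => x k - τ k < x i - τ i), 2 * τ k)
        ≤ T ^ 2 := by
      have expand : ∀ i, τ i * (τ i + ∑ k ∈ Finset.univ.filter (fun k => x k - τ k < x i - τ i), 2 * τ k)
          = τ i * τ i + ∑ k, (if x k - τ k < x i - τ i then 2 * (τ i * τ k) else 0) := by
        intro i
        rw [Finset.sum_filter, mul_add, Finset.mul_sum]
        congr 1
        refine Finset.sum_congr rfl (fun k _ => ?_)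
        split <;> ring
      simp only [expand]
      rw [Finset.sum_add_distrib]
      have hT2 : T ^ 2 = ∑ i, ∑ k, τ i * τ k := by
        rw [hTdef, sq, Finset.sum_mul_sum]
      rw [hT2]
      have pointwise : ∀ i k : Fin n,
          (if x k - τ k < x i - τ i then 2 * (τ i * τ k) else 0) ≤
            τ i * τ k + τ k * τ i - (if k = i then 2 * (τ i * τ i) else 0)
              - (if x i - τ i < x k - τ k then 2 * (τ k * τ i) else 0) := by
        intro i k
        have hik : 0 ≤ τ i * τ k := mul_nonneg (hτ i).le (hτ k).le
        by_cases h1 : x k - τ k < x i - τ i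
        · have hne' : ¬ (x i - τ i < x k - τ k) := by linarith
          have hkne : k ≠ i := by rintro rfl; exact lt_irrefl _ h1
          simp [h1, hne', hkne]; nlinarith
        · by_cases h2 : x i - τ i < x k - τ k
          · have hkne : k ≠ i := by rintro rfl; exact lt_irrefl _ h2
            simp [h1, h2, hkne]; nlinarith
          · by_cases h3 : k = i <;> simp [h1, h2, h3] <;> nlinarith [mul_nonneg (hτ k).le (hτ i).le]
      -- sum the pointwise inequality
      have main : ∑ i, ∑ k, (if x k - τ k < x i - τ i then 2 * (τ i * τ k) else 0) ≤
          ∑ i, ∑ k, (τ i * τ k + τ k * τ i - (if k = i then 2 * (τ i * τ i) else 0)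
              - (if x i - τ i < x k - τ k then 2 * (τ k * τ i) else 0)) :=
        Finset.sum_le_sum (fun i _ => Finset.sum_le_sum (fun k _ => pointwise i k))
      have swap1 : ∑ i, ∑ k : Fin n, (if x i - τ i < x k - τ k then 2 * (τ k * τ i) else 0)
          = ∑ i, ∑ k : Fin n, (if x k - τ k < x i - τ i then 2 * (τ i * τ k) else 0) :=
        Finset.sum_comm
      have swap2 : ∑ i, ∑ k : Fin n, τ k * τ i = ∑ i, ∑ k : Fin n, τ i * τ k := Finset.sum_comm
      have diag : ∑ i, ∑ k : Fin n, (if k = i then 2 * (τ i * τ i) else 0)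
          = 2 * ∑ i, τ i * τ i := by
        simp only [Finset.sum_ite_eq', Finset.mem_univ, if_true]
        rw [Finset.mul_sum]
      simp only [Finset.sum_sub_distrib, Finset.sum_add_distrib] at main
      rw [swap1, swap2, diag] at main
      simp only [← sq] at main ⊢
      linarith [main]
    linarith
  -- conclude
  have hsum : ∑ i, τ i * (x i - m) = (∑ i, τ i * x i) - T * m := by
    rw [hTdef, Finset.sum_mul]
    rw [← Finset.sum_sub_distrib]
    exact Finset.sum_congr rfl (fun i _ => by ring)
  rw [hsum] at step
  have hdiv : (∑ i, τ i * x i) / T - T ≤ m := by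
    rw [div_sub' hT.ne', div_le_iff₀ hT]
    nlinarith
  exact hdiv.trans (hm_le j)


/-- Goodman–Goodman interval lemma: if the union of the closed intervals
`[x i - τ i, x i + τ i]` is a single closed interval (i.e. connected), then it is
contained in `[x̄ - ∑ τ i, x̄ + ∑ τ i]`, where `x̄` is the `τ`-weighted average of the `x i`. -/
theorem stmt_0 (n : ℕ) (hn : 1 ≤ n) (x τ : Fin n → ℝ) (hτ : ∀ i, 0 < τ i)
    (hconn : IsPreconnected (⋃ i, Set.Icc (x i - τ i) (x i + τ i))) :
    (⋃ i, Set.Icc (x i - τ i) (x i + τ i)) ⊆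
      Set.Icc ((∑ i, τ i * x i) / (∑ i, τ i) - ∑ i, τ i)
        ((∑ i, τ i * x i) / (∑ i, τ i) + ∑ i, τ i) := by
  have hlow := gg_aux n hn x τ hτ hconn
  have hconn' : IsPreconnected (⋃ i, Set.Icc ((-x) i - τ i) ((-x) i + τ i)) := by
    have himg := hconn.image (fun y : ℝ => -y) continuous_neg.continuousOn
    have heq : (fun y : ℝ => -y) '' (⋃ i, Set.Icc (x i - τ i) (x i + τ i)) =
        ⋃ i, Set.Icc ((-x) i - τ i) ((-x) i + τ i) := by
      rw [Set.image_iUnion]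
      refine Set.iUnion_congr (fun i => ?_)
      ext y
      simp only [Set.mem_image, Set.mem_Icc, Pi.neg_apply]
      constructor
      · rintro ⟨z, ⟨h1, h2⟩, rfl⟩; constructor <;> linarith
      · rintro ⟨h1, h2⟩; exact ⟨-y, ⟨by linarith, by linarith⟩, by ring⟩
    rwa [heq] at himg
  have hhigh := gg_aux n hn (-x) τ hτ hconn'
  intro y hy
  obtain ⟨i, hi⟩ := Set.mem_iUnion.1 hy
  have h1 := hlow i
  have h2 := hhigh i
  simp only [Pi.neg_apply] at h2
  have hsum : ∑ k, τ k * -x k = -∑ k, τ k * x k := by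
    rw [← Finset.sum_neg_distrib]
    exact Finset.sum_congr rfl (fun k _ => by ring)
  rw [hsum, neg_div] at h2
  exact ⟨by linarith [hi.1], by linarith [hi.2]⟩
end

section
/- Let $Q$ be a convex body in $\mathbb{R}^d$ (a compact convex set with nonempty interior) and let $Q_0 = \frac{1}{2}(Q - Q)$ be its central symmetrization. Then there exist $x, y \in \mathbb{R}^d$ such that $x + \frac{2}{d+1} Q_0 \subseteq Q \subseteq y + \frac{2d}{d+1} Q_0$. -/
open scoped Pointwise

open Finset in
lemma helly_point (d : ℕ) (Q : Set (EuclideanSpace ℝ (Fin d)))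
    (hQc : IsCompact Q) (hQconv : Convex ℝ Q) (hne : Q.Nonempty) :
    ∃ x : EuclideanSpace ℝ (Fin d),
      ∀ a ∈ Q, ∀ b ∈ Q, x + (1 / ((d : ℝ) + 1)) • (a - b) ∈ Q := by
  classical
  have hD : (0:ℝ) < (d:ℝ) + 1 := by positivity
  set t : ℝ := 1 / ((d : ℝ) + 1) with ht
  have htpos : 0 < t := by rw [ht]; positivity
  set F : Q × Q → Set (EuclideanSpace ℝ (Fin d)) :=
    fun p => (t • ((p.2 : EuclideanSpace ℝ (Fin d)) - (p.1 : EuclideanSpace ℝ (Fin d)))) +ᵥ Q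
    with hF
  have hconv : ∀ p, Convex ℝ (F p) := by
    intro p; rw [hF]; exact hQconv.vadd _
  have hcomp : ∀ p, IsCompact (F p) := by
    intro p; rw [hF]
    simpa [← Set.image_vadd] using hQc.image
      (continuous_const_vadd (t • ((p.2 : EuclideanSpace ℝ (Fin d)) - (p.1 : EuclideanSpace ℝ (Fin d)))))
  have h_inter : ∀ I : Finset (Q × Q), #I ≤ Module.finrank ℝ (EuclideanSpace ℝ (Fin d)) + 1 →
      (⋂ i ∈ I, F i).Nonempty := by
    intro I hI
    rw [finrank_euclideanSpace_fin] at hI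
    rcases I.eq_empty_or_nonempty with rfl | ⟨i₀, hi₀⟩
    · simp
    set K : ℝ := (#I : ℝ) with hK
    have hK1 : 1 ≤ #I := Finset.card_pos.mpr ⟨i₀, hi₀⟩
    have hKd : K ≤ (d:ℝ) + 1 := by rw [hK]; exact_mod_cast hI
    have hK1' : (1:ℝ) ≤ K := by rw [hK]; exact_mod_cast hK1
    have hd2k : (1:ℝ) ≤ (d:ℝ) + 2 - K := by linarith
    have hd2k0 : ((d:ℝ) + 2 - K) ≠ 0 := by linarith
    have hb₀Q : (i₀.2 : EuclideanSpace ℝ (Fin d)) ∈ Q := i₀.2.2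
    refine ⟨(∑ j ∈ I, t • ((j.2 : EuclideanSpace ℝ (Fin d))))
      + ((((d:ℝ) + 1 - K) * t) • (i₀.2 : EuclideanSpace ℝ (Fin d))), ?_⟩
    simp only [Set.mem_iInter]
    intro i hi
    rw [hF]
    rw [Set.mem_vadd_set_iff_neg_vadd_mem, vadd_eq_add]
    set c : EuclideanSpace ℝ (Fin d) := (1 / ((d:ℝ) + 2 - K)) • (i.1 : EuclideanSpace ℝ (Fin d))
      + (((d:ℝ) + 1 - K) / ((d:ℝ) + 2 - K)) • (i₀.2 : EuclideanSpace ℝ (Fin d)) with hc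
    have hcQ : c ∈ Q := by
      rw [hc]
      apply hQconv i.1.2 hb₀Q
        (by positivity) (div_nonneg (by linarith) (by linarith))
      field_simp
      ring
    set w : Q × Q → ℝ := fun j => if j = i then ((d:ℝ) + 2 - K) / ((d:ℝ) + 1) else t with hw
    set z : Q × Q → EuclideanSpace ℝ (Fin d) :=
      fun j => if j = i then c else (j.2 : EuclideanSpace ℝ (Fin d)) with hz
    have hwi : w i = ((d:ℝ) + 2 - K) / ((d:ℝ) + 1) := if_pos rfl
    have hwj : ∀ j, j ≠ i → w j = t := fun j hj => if_neg hj
    have hzi : z i = c := if_pos rfl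
    have hzj : ∀ j, j ≠ i → z j = (j.2 : EuclideanSpace ℝ (Fin d)) := fun j hj => if_neg hj
    have hcast : ((#I - 1 : ℕ) : ℝ) = K - 1 := by rw [Nat.cast_sub hK1]; simp [hK]
    have hsumw : ∑ j ∈ I, w j = 1 := by
      rw [← Finset.add_sum_erase I w hi]
      rw [Finset.sum_eq_card_nsmul (fun j hj => hwj j (Finset.ne_of_mem_erase hj))]
      rw [Finset.card_erase_of_mem hi, nsmul_eq_mul, hcast, hwi, ht]
      field_simp
      ring
    have key : ∑ j ∈ I, w j • z j ∈ Q := by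
      apply hQconv.sum_mem
      · intro j hj
        by_cases h : j = i
        · rw [h, hwi]
          exact div_nonneg (by linarith) (by linarith)
        · rw [hwj j h]; linarith
      · exact hsumw
      · intro j hj
        by_cases h : j = i
        · rw [h, hzi]; exact hcQ
        · rw [hzj j h]; exact j.2.2
    have h1 : ∑ j ∈ I.erase i, w j • z j
        = ∑ j ∈ I.erase i, t • ((j.2 : EuclideanSpace ℝ (Fin d))) :=
      Finset.sum_congr rfl (fun j hj => by
        rw [hwj j (Finset.ne_of_mem_erase hj), hzj j (Finset.ne_of_mem_erase hj)])
    have hsumv : ∑ j ∈ I, w j • z j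
        = (((d:ℝ) + 2 - K) / ((d:ℝ) + 1)) • c
          + ((∑ j ∈ I, t • ((j.2 : EuclideanSpace ℝ (Fin d))))
            - t • ((i.2 : EuclideanSpace ℝ (Fin d)))) := by
      rw [← Finset.add_sum_erase I (fun j => w j • z j) hi, h1,
        Finset.sum_erase_eq_sub hi, hwi, hzi]
    rw [hsumv] at key
    convert key using 1
    rw [hc, ht]
    match_scalars <;> field_simp <;> ring
  obtain ⟨x, hx⟩ := Convex.helly_theorem_compact' (𝕜 := ℝ) hconv hcomp h_inter
  refine ⟨x, fun a ha b hb => ?_⟩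
  have hmem := Set.mem_iInter.mp hx (⟨⟨a, ha⟩, ⟨b, hb⟩⟩ : Q × Q)
  rw [hF, Set.mem_vadd_set_iff_neg_vadd_mem, vadd_eq_add] at hmem
  have heq : x + (1 / ((d:ℝ) + 1)) • (a - b) = -(t • (b - a)) + x := by
    rw [ht]; module
  rw [heq]
  exact hmem

/-- For any convex body `Q ⊆ ℝ^d` with central symmetrization `Q₀ = (1/2)(Q - Q)`,
there are `x, y` with `x + (2/(d+1)) Q₀ ⊆ Q ⊆ y + (2d/(d+1)) Q₀`. -/
theorem stmt_3 (d : ℕ) (Q : Set (EuclideanSpace ℝ (Fin d)))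
    (hQc : IsCompact Q) (hQconv : Convex ℝ Q) (hQint : (interior Q).Nonempty) :
    ∃ x y : EuclideanSpace ℝ (Fin d),
      x +ᵥ (2 / ((d : ℝ) + 1)) • ((1 / 2 : ℝ) • (Q - Q)) ⊆ Q ∧
      Q ⊆ y +ᵥ (2 * (d : ℝ) / ((d : ℝ) + 1)) • ((1 / 2 : ℝ) • (Q - Q)) := by
  have hQne : Q.Nonempty := hQint.mono interior_subset
  obtain ⟨x, hx⟩ := helly_point d Q hQc hQconv hQne
  rcases Nat.eq_zero_or_pos d with hd0 | hd
  · subst hd0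
    obtain ⟨q, hq⟩ := hQne
    have hall : ∀ z w : EuclideanSpace ℝ (Fin 0), z = w := by
      intro z w; ext i; exact i.elim0
    refine ⟨q, q, fun z _ => (hall z q) ▸ hq, fun z _ => ?_⟩
    have hm : q + (2 * ((0:ℕ) : ℝ) / (((0:ℕ) : ℝ) + 1)) • ((1/2 : ℝ) • (q - q))
        ∈ q +ᵥ (2 * ((0:ℕ) : ℝ) / (((0:ℕ) : ℝ) + 1)) • ((1 / 2 : ℝ) • (Q - Q)) := by
      exact Set.vadd_mem_vadd_set
        (Set.smul_mem_smul_set (Set.smul_mem_smul_set (Set.sub_mem_sub hq hq)))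
    exact (hall z _) ▸ hm
  · have hD : (0:ℝ) < (d:ℝ) + 1 := by positivity
    have hd1 : (1:ℝ) ≤ (d:ℝ) := by exact_mod_cast hd
    have hdne : (d:ℝ) ≠ 0 := by linarith
    have hx0 : x ∈ Q := by
      obtain ⟨q, hq⟩ := hQne
      simpa using hx q hq q hq
    set r : ℝ := 1 / ((d:ℝ) + 1) with hr
    have hstar : ∀ q ∈ Q, x + (1/(d:ℝ)) • (x - q) ∈ Q := by
      intro q hq
      set zs : EuclideanSpace ℝ (Fin d) := x + (1/(d:ℝ)) • (x - q) with hzs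
      set u : ℕ → EuclideanSpace ℝ (Fin d) := fun n => zs + (r^n) • (x - zs) with hu
      have humem : ∀ n, u n ∈ Q := by
        intro n
        induction n with
        | zero => simpa [hu] using hx0
        | succ n ih =>
          have h2 := hx (u n) ih q hq
          have heq : u (n+1) = x + r • (u n - q) := by
            rw [hu, hzs, hr]
            have hinv : ((d:ℝ) + 1)⁻¹ * ((d:ℝ) + 1) = 1 := inv_mul_cancel₀ hD.ne'
            match_scalars
            · field_simp
              linear_combination (-((d:ℝ) + 1)⁻¹ ^ n) * hinv
            · field_simp
              linear_combination (((d:ℝ) + 1)⁻¹ ^ n) * hinv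
          rw [heq, hr]
          exact h2
      have hr1 : |r| < 1 := by
        rw [hr, abs_of_pos (by positivity)]
        rw [div_lt_one hD]
        linarith
      have h1 : Filter.Tendsto (fun n => r^n) Filter.atTop (nhds 0) :=
        tendsto_pow_atTop_nhds_zero_of_abs_lt_one hr1
      have h2 := h1.smul_const (x - zs)
      have hlim : Filter.Tendsto u Filter.atTop (nhds zs) := by
        rw [hu]
        simpa using tendsto_const_nhds.add h2
      exact hQc.isClosed.mem_of_tendsto hlim (Filter.Eventually.of_forall humem)
    refine ⟨x, x, ?_, ?_⟩
    · intro p hp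
      rw [Set.mem_vadd_set_iff_neg_vadd_mem, vadd_eq_add] at hp
      obtain ⟨v, ⟨w, ⟨a, ha, b, hb, rfl⟩, rfl⟩, hpv⟩ := hp
      dsimp only at hpv
      have hkey := hx a ha b hb
      have heq : x + (1/((d:ℝ)+1)) • (a - b) = p := by
        have h3 : x + (1/((d:ℝ)+1)) • (a - b)
            = x + (2/((d:ℝ)+1)) • ((1/2 : ℝ) • (a - b)) := by
          match_scalars <;> ring
        rw [h3, hpv]
        module
      exact heq ▸ hkey
    · intro q hq
      rw [Set.mem_vadd_set_iff_neg_vadd_mem, vadd_eq_add]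
      have hz := hstar q hq
      have hmem : (1/2:ℝ) • (q - (x + (1/(d:ℝ)) • (x - q))) ∈ (1/2:ℝ) • (Q - Q) :=
        Set.smul_mem_smul_set (Set.sub_mem_sub hq hz)
      have hmem2 := Set.smul_mem_smul_set (a := 2*(d:ℝ)/((d:ℝ)+1)) hmem
      convert hmem2 using 1
      match_scalars <;> field_simp <;> ring
end

section
/- Let $Q$ be a convex body in $\mathbb{R}^d$ such that $Q \subseteq -dQ$. Then $Q \subseteq \frac{2d}{d+1} Q_0$ where $Q_0 = \frac{1}{2}(Q-Q)$, and $\frac{2}{d+1} Q_0 \subseteq Q$. -/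
open scoped Pointwise

/-- If a convex body `Q ⊆ ℝ^d` satisfies `Q ⊆ -d Q`, then
`Q ⊆ (2d/(d+1)) Q₀` and `(2/(d+1)) Q₀ ⊆ Q`, where `Q₀ = (1/2)(Q - Q)`. -/
theorem stmt_4 (d : ℕ) (Q : Set (EuclideanSpace ℝ (Fin d)))
    (hQc : IsCompact Q) (hQconv : Convex ℝ Q) (hQint : (interior Q).Nonempty)
    (hQd : Q ⊆ (-(d : ℝ)) • Q) :
    Q ⊆ (2 * (d : ℝ) / ((d : ℝ) + 1)) • ((1 / 2 : ℝ) • (Q - Q)) ∧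
      (2 / ((d : ℝ) + 1)) • ((1 / 2 : ℝ) • (Q - Q)) ⊆ Q := by
  have hd1 : ((d : ℝ) + 1) ≠ 0 := by positivity
  constructor
  · intro x hx
    obtain ⟨y, hy, hxy⟩ := Set.mem_smul_set.mp (hQd hx)
    have h : (d : ℝ) • y = -x := by rw [← hxy, neg_smul, neg_neg]
    refine ⟨(1 / 2 : ℝ) • (x - y), ⟨x - y, ⟨x, hx, y, hy, rfl⟩, rfl⟩, ?_⟩
    have h2 : (d : ℝ) • (x - y) = ((d : ℝ) + 1) • x := by
      rw [smul_sub, h]; module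
    calc (2 * (d : ℝ) / ((d : ℝ) + 1)) • ((1 / 2 : ℝ) • (x - y))
        = ((2 * (d : ℝ) / ((d : ℝ) + 1)) * (1 / 2)) • (x - y) := smul_smul _ _ _
      _ = ((1 / ((d : ℝ) + 1)) * (d : ℝ)) • (x - y) := by
            congr 1; field_simp
      _ = (1 / ((d : ℝ) + 1)) • ((d : ℝ) • (x - y)) := (smul_smul _ _ _).symm
      _ = (1 / ((d : ℝ) + 1)) • (((d : ℝ) + 1) • x) := by rw [h2]
      _ = x := by rw [smul_smul, one_div, inv_mul_cancel₀ hd1, one_smul]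
  · rintro z ⟨w, ⟨u, ⟨q, hq, q', hq', rfl⟩, rfl⟩, rfl⟩
    obtain ⟨p, hp, hpq'⟩ := Set.mem_smul_set.mp (hQd hq')
    have hp' : (d : ℝ) • p = -q' := by rw [← hpq', neg_smul, neg_neg]
    have ha : (0 : ℝ) ≤ 1 / ((d : ℝ) + 1) := by positivity
    have hb : (0 : ℝ) ≤ (d : ℝ) / ((d : ℝ) + 1) := by positivity
    have hab : 1 / ((d : ℝ) + 1) + (d : ℝ) / ((d : ℝ) + 1) = 1 := by
      rw [← add_div, add_comm, div_self hd1]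
    have hmem := hQconv hq hp ha hb hab
    have heq : (2 / ((d : ℝ) + 1)) • ((1 / 2 : ℝ) • (q - q'))
        = (1 / ((d : ℝ) + 1)) • q + ((d : ℝ) / ((d : ℝ) + 1)) • p := by
      have h3 : ((d : ℝ) / ((d : ℝ) + 1)) • p = -((1 / ((d : ℝ) + 1)) • q') := by
        rw [show (d : ℝ) / ((d : ℝ) + 1) = (1 / ((d : ℝ) + 1)) * (d : ℝ) by ring,
          mul_smul, hp', smul_neg]
      rw [h3, smul_smul, smul_sub]
      rw [show (2 / ((d : ℝ) + 1)) * (1 / 2) = 1 / ((d : ℝ) + 1) by ring]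
      module
    show (2 / ((d : ℝ) + 1)) • ((1 / 2 : ℝ) • (q - q')) ∈ Q
    rw [heq]; exact hmem
end

section
/- Let $K$ be a convex body in $\mathbb{R}^d$, $d \ge 2$, and let $\mathcal{K} = \{x_i + \tau_i K : i = 1,\dots,n\}$ with $\tau_i > 0$ be a non-separable family, i.e., every hyperplane intersecting $\mathrm{conv}\left(\bigcup \mathcal{K}\right)$ intersects some member of $\mathcal{K}$. Then for every unit vector $u \in S^{d-1}$, $\mathrm{width}_u\left(\mathrm{conv} \bigcup \mathcal{K}\right) \le \left(\sum_{i=1}^n \tau_i\right) \mathrm{width}_u(K)$. -/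
open scoped Pointwise RealInnerProductSpace

/-- Width lemma: if `𝒦 = {x i + τ i • K}` is a non-separable family of positive homothets
of a convex body `K ⊆ ℝ^d`, then for every unit vector `u`,
`width_u (conv ⋃ 𝒦) ≤ (∑ τ i) · width_u K`. -/
theorem stmt_5 (d n : ℕ) (hd : 2 ≤ d) (hn : 1 ≤ n)
    (K : Set (EuclideanSpace ℝ (Fin d)))
    (hKc : IsCompact K) (hKconv : Convex ℝ K) (hKint : (interior K).Nonempty)
    (x : Fin n → EuclideanSpace ℝ (Fin d)) (τ : Fin n → ℝ) (hτ : ∀ i, 0 < τ i)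
    (hNS : ∀ (u : EuclideanSpace ℝ (Fin d)) (c : ℝ), u ≠ 0 →
      ({y | ⟪u, y⟫ = c} ∩ convexHull ℝ (⋃ i, x i +ᵥ τ i • K)).Nonempty →
      ∃ i, ({y | ⟪u, y⟫ = c} ∩ (x i +ᵥ τ i • K)).Nonempty)
    (u : EuclideanSpace ℝ (Fin d)) (hu : ‖u‖ = 1) :
    sSup ((fun y => ⟪u, y⟫) '' convexHull ℝ (⋃ i, x i +ᵥ τ i • K)) -
        sInf ((fun y => ⟪u, y⟫) '' convexHull ℝ (⋃ i, x i +ᵥ τ i • K)) ≤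
      (∑ i, τ i) * (sSup ((fun y => ⟪u, y⟫) '' K) - sInf ((fun y => ⟪u, y⟫) '' K)) := by
  classical
  have hu0 : u ≠ 0 := fun h => by simp [h] at hu
  set f : EuclideanSpace ℝ (Fin d) → ℝ := fun y => ⟪u, y⟫ with hf
  have hflin : IsLinearMap ℝ f := ⟨fun a b => inner_add_right _ _ _, fun c a => real_inner_smul_right _ _ _⟩
  have hfc : Continuous f := Continuous.inner continuous_const continuous_id
  have hK0 : K.Nonempty := hKint.mono interior_subset
  set mK := sInf (f '' K) with hmK
  set MK := sSup (f '' K) with hMK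
  have hfK : IsCompact (f '' K) := hKc.image hfc
  have hbd : ∀ k ∈ K, mK ≤ f k ∧ f k ≤ MK := fun k hk =>
    ⟨csInf_le hfK.bddBelow ⟨k, hk, rfl⟩, le_csSup hfK.bddAbove ⟨k, hk, rfl⟩⟩
  have hW : 0 ≤ MK - mK := by
    obtain ⟨k, hk⟩ := hK0
    have := hbd k hk; linarith [this.1, this.2]
  set S := ⋃ i, x i +ᵥ τ i • K with hS
  have hKi_eq : ∀ i, x i +ᵥ τ i • K = (fun z => x i + τ i • z) '' K := by
    intro i
    ext w
    simp only [Set.mem_vadd_set, Set.mem_smul_set, Set.mem_image]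
    constructor
    · rintro ⟨b, ⟨z, hz, rfl⟩, rfl⟩; exact ⟨z, hz, rfl⟩
    · rintro ⟨z, hz, rfl⟩; exact ⟨τ i • z, ⟨z, hz, rfl⟩, rfl⟩
  have hScomp : IsCompact S := isCompact_iUnion (fun i => by
    rw [hKi_eq i]
    exact hKc.image (continuous_const.add (continuous_const_smul (τ i))))
  have hSne : S.Nonempty := by
    obtain ⟨k, hk⟩ := hK0
    refine ⟨x ⟨0, hn⟩ + τ ⟨0, hn⟩ • k, Set.mem_iUnion.2 ⟨⟨0, hn⟩, ?_⟩⟩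
    rw [hKi_eq]; exact ⟨k, hk, rfl⟩
  set C := convexHull ℝ S with hC
  set A := sInf (f '' S) with hA
  set B := sSup (f '' S) with hB
  have hfS : IsCompact (f '' S) := hScomp.image hfc
  have hfSne : (f '' S).Nonempty := hSne.image f
  have hAB : A ≤ B := csInf_le_csSup hfSne hfS.bddBelow hfS.bddAbove
  -- f '' C = Icc A B
  have hfC : f '' C = Set.Icc A B := by
    rw [hC, hflin.image_convexHull]
    apply Set.Subset.antisymm
    · exact convexHull_min (fun r hr => ⟨csInf_le hfS.bddBelow hr, le_csSup hfS.bddAbove hr⟩)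
        (convex_Icc A B)
    · exact (convex_convexHull ℝ (f '' S)).ordConnected.out
        (subset_convexHull ℝ _ (hfS.sInf_mem hfSne))
        (subset_convexHull ℝ _ (hfS.sSup_mem hfSne))
  set c : Fin n → ℝ := fun i => ⟪u, x i⟫ + τ i * mK with hc
  have hsub : ∀ i, f '' (x i +ᵥ τ i • K) ⊆ Set.Icc (c i) (c i + τ i * (MK - mK)) := by
    intro i
    rintro _ ⟨w, hw, rfl⟩
    rw [hKi_eq i] at hw
    obtain ⟨z, hz, rfl⟩ := hw
    have hfz : f (x i + τ i • z) = ⟪u, x i⟫ + τ i * f z := by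
      rw [hflin.map_add, hflin.map_smul, smul_eq_mul]
    have h1 := mul_le_mul_of_nonneg_left (hbd z hz).1 (hτ i).le
    have h2 := mul_le_mul_of_nonneg_left (hbd z hz).2 (hτ i).le
    rw [hfz]
    constructor
    · simp only [hc]; nlinarith
    · simp only [hc]; nlinarith
  have hcover : Set.Icc A B ⊆ ⋃ i, Set.Icc (c i) (c i + τ i * (MK - mK)) := by
    intro r hr
    rw [← hfC] at hr
    obtain ⟨y, hy, hyr⟩ := hr
    obtain ⟨i, z, hz1, hz2⟩ := hNS u r hu0 ⟨y, hyr, hy⟩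
    exact Set.mem_iUnion.2 ⟨i, hsub i ⟨z, hz2, hz1⟩⟩
  -- measure argument
  have hμ : (MeasureTheory.volume (Set.Icc A B) : ENNReal) ≤
      ∑ i, MeasureTheory.volume (Set.Icc (c i) (c i + τ i * (MK - mK))) := by
    refine le_trans (MeasureTheory.measure_mono hcover) ?_
    refine le_trans (MeasureTheory.measure_iUnion_le _) ?_
    rw [tsum_fintype]
  rw [Real.volume_Icc] at hμ
  simp only [Real.volume_Icc, add_sub_cancel_left] at hμ
  have hsum : ∑ i, ENNReal.ofReal (τ i * (MK - mK)) = ENNReal.ofReal (∑ i, τ i * (MK - mK)) := by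
    rw [ENNReal.ofReal_sum_of_nonneg]
    exact fun i _ => mul_nonneg (hτ i).le hW
  rw [hsum] at hμ
  have hsumnn : 0 ≤ ∑ i, τ i * (MK - mK) := Finset.sum_nonneg fun i _ => mul_nonneg (hτ i).le hW
  have hfin : B - A ≤ ∑ i, τ i * (MK - mK) := (ENNReal.ofReal_le_ofReal_iff hsumnn).mp hμ
  rw [← Finset.sum_mul] at hfin
  -- rewrite goal
  have hgoalS : sSup (f '' C) = B := by rw [hfC]; exact csSup_Icc hAB
  have hgoalI : sInf (f '' C) = A := by rw [hfC]; exact csInf_Icc hAB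
  calc sSup (f '' C) - sInf (f '' C) = B - A := by rw [hgoalS, hgoalI]
    _ ≤ (∑ i, τ i) * (MK - mK) := hfin
end

section
/- Let $K$ be a convex body in $\mathbb{R}^d$, $d \ge 2$, and let $\mathcal{K} = \{x_i + \tau_i K : i=1,\dots,n\}$ with $\tau_i > 0$ be a non-separable family. Then there exists $z \in \mathbb{R}^d$ such that $\bigcup \mathcal{K} \subseteq z + d\left(\sum_{i=1}^n \tau_i\right) K$. -/
open scoped Pointwise RealInnerProductSpace

section Aux

private lemma aux_pad {α : Type*} {m : ℕ} (I : Finset α) (hne : I.Nonempty)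
    (hcard : I.card ≤ m) : ∃ y : Fin m → α, (∀ j, y j ∈ I) ∧ ∀ a ∈ I, ∃ j, y j = a := by
  classical
  obtain ⟨a₀, ha₀⟩ := hne
  refine ⟨fun j => if h : (j : ℕ) < I.card then (I.equivFin.symm ⟨j, h⟩ : α) else a₀, ?_, ?_⟩
  · intro j
    dsimp only
    split
    · exact Finset.coe_mem _
    · exact ha₀
  · intro a ha
    have hi : ((I.equivFin ⟨a, ha⟩ : Fin I.card) : ℕ) < I.card := (I.equivFin ⟨a, ha⟩).isLt
    refine ⟨⟨(I.equivFin ⟨a, ha⟩ : Fin I.card), lt_of_lt_of_le hi hcard⟩, ?_⟩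
    dsimp only
    rw [dif_pos hi]
    have : (⟨((I.equivFin ⟨a, ha⟩ : Fin I.card) : ℕ), hi⟩ : Fin I.card) = I.equivFin ⟨a, ha⟩ :=
      Fin.ext rfl
    rw [this, Equiv.symm_apply_apply]

private lemma aux_sum {E : Type*} [AddCommGroup E] [Module ℝ E] {S : Set E}
    (hS : Convex ℝ S) {ι : Type*} (t : Finset ι) (f : ι → E)
    (hf : ∀ k ∈ t, f k ∈ S) (ht : t.Nonempty) :
    ∑ k ∈ t, f k ∈ (t.card : ℝ) • S := by
  have hc : (0:ℝ) < t.card := by exact_mod_cast Finset.card_pos.2 ht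
  have hmem : ∑ k ∈ t, ((t.card : ℝ))⁻¹ • f k ∈ S := by
    refine hS.sum_mem (fun i _ => by positivity) ?_ hf
    rw [Finset.sum_const, nsmul_eq_mul]
    field_simp
  have h2 : (t.card : ℝ) • (∑ k ∈ t, ((t.card : ℝ))⁻¹ • f k) = ∑ k ∈ t, f k := by
    rw [Finset.smul_sum]
    simp [smul_smul, mul_inv_cancel₀ hc.ne']
  rw [← h2]
  exact Set.smul_mem_smul_set hmem

private lemma aux_mem {E : Type*} [NormedAddCommGroup E] [InnerProductSpace ℝ E]
    [CompleteSpace E] {S : Set E} (hconv : Convex ℝ S) (hclosed : IsClosed S) {v : E}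
    (h : ∀ u : E, ∃ w ∈ S, ⟪u, v⟫ ≤ ⟪u, w⟫) : v ∈ S := by
  by_contra hv
  obtain ⟨f, c, hfS, hcv⟩ := geometric_hahn_banach_closed_point hconv hclosed hv
  obtain ⟨w, hwS, hle⟩ := h ((InnerProductSpace.toDual ℝ E).symm f)
  rw [InnerProductSpace.toDual_symm_apply, InnerProductSpace.toDual_symm_apply] at hle
  have := hfS w hwS
  linarith
end Aux

/-- Any non-separable family `{x i + τ i • K}` of positive homothets of a convex body
`K ⊆ ℝ^d` is covered by a translate of `d (∑ τ i) • K`. -/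
theorem stmt_6 (d n : ℕ) (hd : 2 ≤ d) (hn : 1 ≤ n)
    (K : Set (EuclideanSpace ℝ (Fin d)))
    (hKc : IsCompact K) (hKconv : Convex ℝ K) (hKint : (interior K).Nonempty)
    (x : Fin n → EuclideanSpace ℝ (Fin d)) (τ : Fin n → ℝ) (hτ : ∀ i, 0 < τ i)
    (hNS : ∀ (u : EuclideanSpace ℝ (Fin d)) (c : ℝ), u ≠ 0 →
      ({y | ⟪u, y⟫ = c} ∩ convexHull ℝ (⋃ i, x i +ᵥ τ i • K)).Nonempty →
      ∃ i, ({y | ⟪u, y⟫ = c} ∩ (x i +ᵥ τ i • K)).Nonempty) :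
    ∃ z : EuclideanSpace ℝ (Fin d),
      (⋃ i, x i +ᵥ τ i • K) ⊆ z +ᵥ ((d : ℝ) * ∑ i, τ i) • K := by
  classical
  have hKne : K.Nonempty := hKint.mono interior_subset
  have hne : Nonempty (Fin n) := ⟨⟨0, hn⟩⟩
  have hd1 : ((d:ℝ) + 1) ≠ 0 := by positivity
  set T : ℝ := ∑ i, τ i with hT
  have hTpos : 0 < T := Finset.sum_pos (fun i _ => hτ i) Finset.univ_nonempty
  set A : Set (EuclideanSpace ℝ (Fin d)) := ⋃ i, x i +ᵥ τ i • K with hA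
  have hAne : A.Nonempty := by
    obtain ⟨k, hk⟩ := hKne
    exact ⟨x ⟨0, hn⟩ +ᵥ τ ⟨0, hn⟩ • k,
      Set.mem_iUnion.2 ⟨⟨0, hn⟩, Set.vadd_mem_vadd_set (Set.smul_mem_smul_set hk)⟩⟩
  -- Step A: width inequality
  have hwidth : ∀ (u : EuclideanSpace ℝ (Fin d)) (k₁ k₂ : EuclideanSpace ℝ (Fin d)),
      k₁ ∈ K → k₂ ∈ K → (∀ k ∈ K, ⟪u, k⟫ ≤ ⟪u, k₁⟫) → (∀ k ∈ K, ⟪u, k₂⟫ ≤ ⟪u, k⟫) →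
      ∀ p ∈ A, ∀ q ∈ A, ⟪u, p⟫ - ⟪u, q⟫ ≤ T * (⟪u, k₁⟫ - ⟪u, k₂⟫) := by
    intro u k₁ k₂ hk₁ hk₂ hmax hmin p hp q hq
    have hMm : ⟪u, k₂⟫ ≤ ⟪u, k₁⟫ := hmax k₂ hk₂
    rcases le_or_gt ⟪u, p⟫ ⟪u, q⟫ with hle | hlt
    · nlinarith
    have hu0 : u ≠ 0 := by
      rintro rfl
      simp [inner_zero_left] at hlt
    have hsub : Set.Icc ⟪u, q⟫ ⟪u, p⟫ ⊆
        ⋃ i, Set.Icc (⟪u, x i⟫ + τ i * ⟪u, k₂⟫) (⟪u, x i⟫ + τ i * ⟪u, k₁⟫) := by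
      intro c hc
      obtain ⟨hc1, hc2⟩ := hc
      have hden : 0 < ⟪u, p⟫ - ⟪u, q⟫ := sub_pos.2 hlt
      set t : ℝ := (c - ⟪u, q⟫) / (⟪u, p⟫ - ⟪u, q⟫) with htdef
      have ht0 : 0 ≤ t := div_nonneg (by linarith) hden.le
      have ht1 : t ≤ 1 := (div_le_one hden).2 (by linarith)
      have hyA : (1 - t) • q + t • p ∈ convexHull ℝ A :=
        (convex_convexHull ℝ A) (subset_convexHull ℝ A hq) (subset_convexHull ℝ A hp)
          (by linarith) ht0 (by ring)
      have hyc : ⟪u, (1 - t) • q + t • p⟫ = c := by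
        rw [inner_add_right, real_inner_smul_right, real_inner_smul_right]
        have h3 : t * (⟪u, p⟫ - ⟪u, q⟫) = c - ⟪u, q⟫ := div_mul_cancel₀ _ hden.ne'
        nlinarith [h3]
      obtain ⟨i, w, hw1, hw2⟩ := hNS u c hu0 ⟨_, hyc, hyA⟩
      rw [Set.mem_vadd_set] at hw2
      obtain ⟨b, hb, hbw⟩ := hw2
      rw [Set.mem_smul_set] at hb
      obtain ⟨k, hk, hkb⟩ := hb
      refine Set.mem_iUnion.2 ⟨i, ?_⟩
      have hwv : ⟪u, w⟫ = ⟪u, x i⟫ + τ i * ⟪u, k⟫ := by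
        rw [← hbw, vadd_eq_add, inner_add_right, ← hkb, real_inner_smul_right]
      have hcw : c = ⟪u, x i⟫ + τ i * ⟪u, k⟫ := by rw [← hw1]; exact hwv
      have hb1 := mul_le_mul_of_nonneg_left (hmax k hk) (hτ i).le
      have hb2 := mul_le_mul_of_nonneg_left (hmin k hk) (hτ i).le
      constructor
      · rw [hcw]; linarith
      · rw [hcw]; linarith
    have hvol := MeasureTheory.measure_mono (μ := MeasureTheory.volume) hsub
    rw [Real.volume_Icc] at hvol
    have hsum : MeasureTheory.volume
        (⋃ i, Set.Icc (⟪u, x i⟫ + τ i * ⟪u, k₂⟫) (⟪u, x i⟫ + τ i * ⟪u, k₁⟫)) ≤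
        ∑ i, ENNReal.ofReal (τ i * (⟪u, k₁⟫ - ⟪u, k₂⟫)) := by
      refine le_trans (MeasureTheory.measure_iUnion_le _) ?_
      rw [tsum_fintype]
      refine Finset.sum_le_sum fun i _ => ?_
      rw [Real.volume_Icc]
      apply le_of_eq
      congr 1
      ring
    have hfin := le_trans hvol hsum
    rw [← ENNReal.ofReal_sum_of_nonneg
        (fun i _ => mul_nonneg (hτ i).le (by linarith))] at hfin
    rw [ENNReal.ofReal_le_ofReal_iff
        (Finset.sum_nonneg fun i _ => mul_nonneg (hτ i).le (by linarith))] at hfin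
    calc ⟪u, p⟫ - ⟪u, q⟫ ≤ ∑ i, τ i * (⟪u, k₁⟫ - ⟪u, k₂⟫) := hfin
      _ = T * (⟪u, k₁⟫ - ⟪u, k₂⟫) := by rw [hT, Finset.sum_mul]
  -- Step B: a "d-center" s of K via Helly
  obtain ⟨s, hs⟩ : ∃ s : EuclideanSpace ℝ (Fin d), ∀ k ∈ K, ∃ k' ∈ K,
      ((d:ℝ) + 1) • s = k + (d:ℝ) • k' := by
    have hKsub : Nonempty ↥K := hKne.to_subtype
    set G : K → Set (EuclideanSpace ℝ (Fin d)) := fun k =>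
      (((d:ℝ)+1)⁻¹ • (k : EuclideanSpace ℝ (Fin d))) +ᵥ ((((d:ℝ)+1)⁻¹ * d) • K) with hG
    have hint : (⋂ k : K, G k).Nonempty := by
      apply Convex.helly_theorem_compact' (𝕜 := ℝ)
      · exact fun k => (hKconv.smul _).vadd _
      · exact fun k => (hKc.smul _).vadd _
      · intro I hI
        rcases I.eq_empty_or_nonempty with rfl | hIne
        · simp
        rw [finrank_euclideanSpace_fin] at hI
        obtain ⟨y, hyI, hcov⟩ := aux_pad I hIne hI
        set s₀ : EuclideanSpace ℝ (Fin d) :=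
          ((d:ℝ)+1)⁻¹ • ∑ j, ((y j : ↥K) : EuclideanSpace ℝ (Fin d)) with hs₀
        refine ⟨s₀, Set.mem_biInter ?_⟩
        intro k hk
        obtain ⟨j, rfl⟩ := hcov k hk
        have hsum_erase : ∑ kk ∈ Finset.univ.erase j, ((y kk : ↥K) : EuclideanSpace ℝ (Fin d)) =
            (∑ kk, ((y kk : ↥K) : EuclideanSpace ℝ (Fin d))) -
              ((y j : ↥K) : EuclideanSpace ℝ (Fin d)) :=
          Finset.sum_erase_eq_sub (Finset.mem_univ j)
        have hcarde : (((Finset.univ.erase j).card : ℕ) : ℝ) = d := by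
          rw [Finset.card_erase_of_mem (Finset.mem_univ j), Finset.card_univ, Fintype.card_fin]
          push_cast
          ring
        have hcardpos : (Finset.univ.erase j).Nonempty := by
          rw [← Finset.card_pos, Finset.card_erase_of_mem (Finset.mem_univ j),
            Finset.card_univ, Fintype.card_fin]
          omega
        have hmem := aux_sum hKconv (Finset.univ.erase j)
          (fun kk => ((y kk : ↥K) : EuclideanSpace ℝ (Fin d)))
          (fun kk _ => (y kk).2) hcardpos
        rw [hcarde] at hmem
        rw [Set.mem_smul_set] at hmem
        obtain ⟨k', hk', hk'e⟩ := hmem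
        rw [hG]
        refine Set.mem_vadd_set.2 ⟨(((d:ℝ)+1)⁻¹ * d) • k', Set.smul_mem_smul_set hk', ?_⟩
        have h5 : ∑ kk, ((y kk : ↥K) : EuclideanSpace ℝ (Fin d)) =
            (d:ℝ) • k' + ((y j : ↥K) : EuclideanSpace ℝ (Fin d)) := by
          rw [hk'e, hsum_erase]; abel
        rw [vadd_eq_add, hs₀, h5, smul_add, smul_smul]
        abel
    obtain ⟨s, hsmem⟩ := hint
    refine ⟨s, fun k hk => ?_⟩
    have hmem := Set.mem_iInter.1 hsmem ⟨k, hk⟩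
    rw [hG] at hmem
    rw [Set.mem_vadd_set] at hmem
    obtain ⟨b, hb, hbs⟩ := hmem
    rw [Set.mem_smul_set] at hb
    obtain ⟨k', hk', hkb⟩ := hb
    refine ⟨k', hk', ?_⟩
    rw [← hbs, vadd_eq_add, ← hkb, smul_add, smul_smul, smul_smul,
      mul_inv_cancel₀ hd1, one_smul,
      show ((d:ℝ)+1) * (((d:ℝ)+1)⁻¹ * d) = (d:ℝ) by field_simp]
  -- The symmetric-ish container S
  set S : Set (EuclideanSpace ℝ (Fin d)) := (((d:ℝ)+1) * T) • ((-s) +ᵥ K) with hSdef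
  have hSconv : Convex ℝ S := (hKconv.vadd _).smul _
  have hSclosed : IsClosed S := ((hKc.vadd _).smul _).isClosed
  have hdiff : ∀ p ∈ A, ∀ q ∈ A, p - q ∈ S := by
    intro p hp q hq
    apply aux_mem hSconv hSclosed
    intro u
    have hcont : ContinuousOn (fun y : EuclideanSpace ℝ (Fin d) => ⟪u, y⟫) K :=
      (continuous_const.inner continuous_id).continuousOn
    obtain ⟨k₁, hk₁, hmax⟩ := hKc.exists_isMaxOn hKne hcont
    obtain ⟨k₂, hk₂, hmin⟩ := hKc.exists_isMinOn hKne hcont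
    obtain ⟨k₃, hk₃, hk₃eq⟩ := hs k₂ hk₂
    have hkcK : ((d:ℝ)+1)⁻¹ • k₁ + (((d:ℝ)+1)⁻¹ * d) • k₃ ∈ K := by
      refine hKconv hk₁ hk₃ (by positivity) (by positivity) ?_
      field_simp
      ring
    have hk₂' : k₂ = ((d:ℝ)+1) • s - (d:ℝ) • k₃ := by rw [hk₃eq]; abel
    have e1 : (((d:ℝ)+1) * T) • (((d:ℝ)+1)⁻¹ • k₁) = T • k₁ := by
      rw [smul_smul, show ((d:ℝ)+1) * T * ((d:ℝ)+1)⁻¹ = T by field_simp]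
    have e2 : (((d:ℝ)+1) * T) • ((((d:ℝ)+1)⁻¹ * d) • k₃) = (T * d) • k₃ := by
      rw [smul_smul, show ((d:ℝ)+1) * T * (((d:ℝ)+1)⁻¹ * d) = T * d by field_simp]
    have key : (((d:ℝ)+1) * T) •
        ((-s) + (((d:ℝ)+1)⁻¹ • k₁ + (((d:ℝ)+1)⁻¹ * d) • k₃)) = T • (k₁ - k₂) := by
      rw [smul_add, smul_add, e1, e2, hk₂']
      module
    refine ⟨T • (k₁ - k₂), ?_, ?_⟩
    · rw [← key, hSdef]
      exact Set.smul_mem_smul_set (Set.vadd_mem_vadd_set hkcK)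
    · rw [inner_sub_right, real_inner_smul_right, inner_sub_right]
      exact hwidth u k₁ k₂ hk₁ hk₂ (fun k hk => hmax hk) (fun k hk => hmin hk) p hp q hq
  -- Step C: Helly for the covering translate
  have hAsub : Nonempty ↥A := hAne.to_subtype
  set Z : A → Set (EuclideanSpace ℝ (Fin d)) := fun p =>
    (p : EuclideanSpace ℝ (Fin d)) +ᵥ ((-((d:ℝ) * T)) • K) with hZ
  have hint : (⋂ p : A, Z p).Nonempty := by
    apply Convex.helly_theorem_compact' (𝕜 := ℝ)
    · exact fun p => (hKconv.smul _).vadd _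
    · exact fun p => (hKc.smul _).vadd _
    · intro I hI
      rcases I.eq_empty_or_nonempty with rfl | hIne
      · simp
      rw [finrank_euclideanSpace_fin] at hI
      obtain ⟨y, hyI, hcov⟩ := aux_pad I hIne hI
      set zb : EuclideanSpace ℝ (Fin d) :=
        ((d:ℝ)+1)⁻¹ • ∑ j, ((y j : ↥A) : EuclideanSpace ℝ (Fin d)) with hzb
      refine ⟨zb - ((d:ℝ) * T) • s, Set.mem_biInter ?_⟩
      intro p hp
      obtain ⟨j, rfl⟩ := hcov p hp
      -- sum over erase j of differences lies in d • S
      have hcarde : (((Finset.univ.erase j).card : ℕ) : ℝ) = d := by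
        rw [Finset.card_erase_of_mem (Finset.mem_univ j), Finset.card_univ, Fintype.card_fin]
        push_cast
        ring
      have hcardpos : (Finset.univ.erase j).Nonempty := by
        rw [← Finset.card_pos, Finset.card_erase_of_mem (Finset.mem_univ j),
          Finset.card_univ, Fintype.card_fin]
        omega
      have hmem := aux_sum hSconv (Finset.univ.erase j)
        (fun kk => ((y j : ↥A) : EuclideanSpace ℝ (Fin d)) - ((y kk : ↥A) : _))
        (fun kk _ => hdiff _ (y j).2 _ (y kk).2) hcardpos
      rw [hcarde, Set.mem_smul_set] at hmem
      obtain ⟨v, hv, hveq⟩ := hmem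
      rw [hSdef, Set.mem_smul_set] at hv
      obtain ⟨w, hw, hwv⟩ := hv
      rw [Set.mem_vadd_set] at hw
      obtain ⟨k, hkK, hkw⟩ := hw
      -- algebra: (y j) - zb = (d*T) • w
      have hsum_all : ∑ kk : Fin (d+1),
          (((y j : ↥A) : EuclideanSpace ℝ (Fin d)) - ((y kk : ↥A) : _)) =
          (d+1) • ((y j : ↥A) : EuclideanSpace ℝ (Fin d)) -
            ∑ kk, ((y kk : ↥A) : EuclideanSpace ℝ (Fin d)) := by
        rw [Finset.sum_sub_distrib, Finset.sum_const, Finset.card_univ, Fintype.card_fin]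
      have hsum_erase : ∑ kk ∈ Finset.univ.erase j,
          (((y j : ↥A) : EuclideanSpace ℝ (Fin d)) - ((y kk : ↥A) : _)) =
          ∑ kk : Fin (d+1), (((y j : ↥A) : EuclideanSpace ℝ (Fin d)) - ((y kk : ↥A) : _)) :=
        Finset.sum_erase _ (sub_self _)
      have hnsmul : (((d:ℝ))+1)⁻¹ • ((d+1) • ((y j : ↥A) : EuclideanSpace ℝ (Fin d))) =
          ((y j : ↥A) : EuclideanSpace ℝ (Fin d)) := by
        rw [← Nat.cast_smul_eq_nsmul ℝ, smul_smul]
        push_cast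
        rw [inv_mul_cancel₀ hd1, one_smul]
      have hyjz : ((y j : ↥A) : EuclideanSpace ℝ (Fin d)) - zb = ((d:ℝ) * T) • w := by
        have h6 : ((y j : ↥A) : EuclideanSpace ℝ (Fin d)) - zb =
            ((d:ℝ)+1)⁻¹ • ∑ kk ∈ Finset.univ.erase j,
              (((y j : ↥A) : EuclideanSpace ℝ (Fin d)) - ((y kk : ↥A) : _)) := by
          rw [hsum_erase, hsum_all, smul_sub, hnsmul, hzb]
        rw [h6, ← hveq, ← hwv, smul_smul, smul_smul]
        congr 1
        field_simp
      have hw' : w = -s + k := by rw [← hkw, vadd_eq_add]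
      have hyj : ((y j : ↥A) : EuclideanSpace ℝ (Fin d)) =
          zb + ((d:ℝ) * T) • (-s + k) := by rw [← hw', ← hyjz]; abel
      rw [hZ]
      refine Set.mem_vadd_set.2 ⟨(-((d:ℝ) * T)) • k, Set.smul_mem_smul_set hkK, ?_⟩
      rw [vadd_eq_add, hyj, smul_add, smul_neg, neg_smul]
      abel
  obtain ⟨z, hz⟩ := hint
  refine ⟨z, fun p hp => ?_⟩
  have hm := Set.mem_iInter.1 hz ⟨p, hp⟩
  rw [hZ] at hm
  rw [Set.mem_vadd_set] at hm
  obtain ⟨b, hb, hbz⟩ := hm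
  rw [Set.mem_smul_set] at hb
  obtain ⟨k, hkK, hkb⟩ := hb
  refine Set.mem_vadd_set.2 ⟨((d:ℝ) * T) • k, Set.smul_mem_smul_set hkK, ?_⟩
  rw [vadd_eq_add, ← hbz, vadd_eq_add, ← hkb, neg_smul]
  abel
end

section
/- Let $K_0$ be an $o$-symmetric convex body in $\mathbb{R}^d$, $d \ge 2$, and let $\mathcal{K} = \{x_i + \tau_i K_0 : i=1,\dots,n\}$ with $\tau_i > 0$ be a non-separable family. Set $x = \left(\sum_{i=1}^n \tau_i x_i\right)/\left(\sum_{i=1}^n \tau_i\right)$. Then $\bigcup \mathcal{K} \subseteq x + \left(\sum_{i=1}^n \tau_i\right) K_0$. -/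
open scoped Pointwise RealInnerProductSpace
open Finset

lemma aux_cover_length {ι : Type*} (s : Finset ι) (lo hi : ι → ℝ) (a P : ℝ)
    (h0 : ∀ j ∈ s, lo j ≤ hi j)
    (hsub : Set.Ioc a P ⊆ ⋃ j ∈ s, Set.Icc (lo j) (hi j)) :
    P - a ≤ ∑ j ∈ s, (hi j - lo j) := by
  have hm : MeasureTheory.volume (Set.Ioc a P) ≤
      MeasureTheory.volume (⋃ j ∈ s, Set.Icc (lo j) (hi j)) :=
    MeasureTheory.measure_mono hsub
  have hb : MeasureTheory.volume (⋃ j ∈ s, Set.Icc (lo j) (hi j)) ≤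
      ∑ j ∈ s, MeasureTheory.volume (Set.Icc (lo j) (hi j)) :=
    MeasureTheory.measure_biUnion_finset_le _ _
  rw [Real.volume_Ioc] at hm
  have h : ENNReal.ofReal (P - a) ≤ ENNReal.ofReal (∑ j ∈ s, (hi j - lo j)) := by
    refine (hm.trans hb).trans ?_
    rw [ENNReal.ofReal_sum_of_nonneg (fun j hj => sub_nonneg.2 (h0 j hj))]
    exact Finset.sum_le_sum fun j hj => by rw [Real.volume_Icc]
  exact (ENNReal.ofReal_le_ofReal_iff
    (Finset.sum_nonneg fun j hj => sub_nonneg.2 (h0 j hj))).1 h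

lemma aux_double_sum {n : ℕ} (τ : Fin n → ℝ) (hτ : ∀ i, 0 ≤ τ i) (b : Fin n → ℝ) :
    2 * ∑ i, τ i * ∑ j ∈ Finset.univ.filter (fun j => b i < b j), τ j
      ≤ (∑ i, τ i)^2 - ∑ i, (τ i)^2 := by
  classical
  set F : Finset (Fin n × Fin n) := Finset.univ ×ˢ Finset.univ with hF
  set g : Fin n × Fin n → ℝ := fun p => τ p.1 * τ p.2 with hg
  set Q : Finset (Fin n × Fin n) := F.filter (fun p => b p.1 < b p.2) with hQ
  set Q' : Finset (Fin n × Fin n) := F.filter (fun p => b p.2 < b p.1) with hQ'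
  set D : Finset (Fin n × Fin n) := F.filter (fun p => p.1 = p.2) with hD
  have h1 : ∑ i, τ i * ∑ j ∈ Finset.univ.filter (fun j => b i < b j), τ j
      = ∑ p ∈ Q, g p := by
    rw [hQ, hF, Finset.sum_filter, Finset.sum_product]
    refine Finset.sum_congr rfl fun i _ => ?_
    rw [Finset.mul_sum, Finset.sum_filter]
  have h2 : ∑ p ∈ Q, g p = ∑ p ∈ Q', g p := by
    have himg : Q' = Q.image Prod.swap := by
      ext ⟨i, j⟩
      simp only [hQ, hQ', hF, Finset.mem_image, Finset.mem_filter,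
        Finset.mem_product, Finset.mem_univ, true_and, and_true, Prod.exists]
      constructor
      · intro h; exact ⟨j, i, h, rfl⟩
      · rintro ⟨a, c, h, hs⟩
        rw [Prod.ext_iff] at hs
        obtain ⟨h1, h2⟩ := hs
        simp only [Prod.fst_swap, Prod.snd_swap] at h1 h2
        rw [← h1, ← h2]; exact h
    rw [himg, Finset.sum_image (fun p _ q _ h => Prod.swap_injective h)]
    exact Finset.sum_congr rfl fun p _ => by simp [hg, mul_comm]
  have hdisj : Disjoint Q Q' := by
    refine Finset.disjoint_left.2 fun p hp hp' => ?_
    simp only [hQ, hQ', Finset.mem_filter] at hp hp'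
    exact absurd hp'.2 (lt_asymm hp.2)
  have hdisj2 : Disjoint (Q ∪ Q') D := by
    refine Finset.disjoint_left.2 fun p hp hp' => ?_
    simp only [hQ, hQ', hD, Finset.mem_union, Finset.mem_filter] at hp hp'
    rcases hp with h | h
    · exact absurd (hp'.2 ▸ h.2) (lt_irrefl _)
    · exact absurd (hp'.2 ▸ h.2) (lt_irrefl _)
  have hle : ∑ p ∈ (Q ∪ Q') ∪ D, g p ≤ ∑ p ∈ F, g p := by
    refine Finset.sum_le_sum_of_subset_of_nonneg ?_ fun p _ _ =>
      mul_nonneg (hτ _) (hτ _)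
    exact Finset.union_subset (Finset.union_subset (Finset.filter_subset _ _)
      (Finset.filter_subset _ _)) (Finset.filter_subset _ _)
  rw [Finset.sum_union hdisj2, Finset.sum_union hdisj] at hle
  have hfull : ∑ p ∈ F, g p = (∑ i, τ i)^2 := by
    rw [hF, Finset.sum_product, sq, Finset.sum_mul_sum]
  have hdiag : ∑ p ∈ D, g p = ∑ i, (τ i)^2 := by
    have himg : D = Finset.univ.image (fun i => (i, i)) := by
      ext ⟨i, j⟩
      simp only [hD, hF, Finset.mem_filter, Finset.mem_product, Finset.mem_univ,
        true_and, Finset.mem_image, Prod.ext_iff]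
      constructor
      · intro h; exact ⟨i, ⟨rfl, h⟩⟩
      · rintro ⟨a, rfl, h⟩; exact h
    rw [himg, Finset.sum_image (fun p _ q _ h => by simpa [Prod.ext_iff] using h)]
    simp [hg, sq]
  rw [h1, h2]
  linarith [hle, hfull, hdiag, h2]

/-- Goodman–Goodman for symmetric bodies: if `K₀ = -K₀` is an `o`-symmetric convex body and
`{x i + τ i • K₀}` is a non-separable family, then the family is covered by
`x̄ + (∑ τ i) • K₀`, where `x̄ = (∑ τ i • x i) / (∑ τ i)`. -/
theorem stmt_7 (d n : ℕ) (hd : 2 ≤ d) (hn : 1 ≤ n)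
    (K₀ : Set (EuclideanSpace ℝ (Fin d)))
    (hKc : IsCompact K₀) (hKconv : Convex ℝ K₀) (hKint : (interior K₀).Nonempty)
    (hKsym : K₀ = -K₀)
    (x : Fin n → EuclideanSpace ℝ (Fin d)) (τ : Fin n → ℝ) (hτ : ∀ i, 0 < τ i)
    (hNS : ∀ (u : EuclideanSpace ℝ (Fin d)) (c : ℝ), u ≠ 0 →
      ({y | ⟪u, y⟫ = c} ∩ convexHull ℝ (⋃ i, x i +ᵥ τ i • K₀)).Nonempty →
      ∃ i, ({y | ⟪u, y⟫ = c} ∩ (x i +ᵥ τ i • K₀)).Nonempty) :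
    (⋃ i, x i +ᵥ τ i • K₀) ⊆ ((∑ i, τ i)⁻¹ • ∑ i, τ i • x i) +ᵥ (∑ i, τ i) • K₀ := by
  classical
  intro p hp
  by_contra hcon
  haveI : NeZero n := ⟨by omega⟩
  obtain ⟨k₁, hk₁i⟩ := hKint
  have hk₁ : k₁ ∈ K₀ := interior_subset hk₁i
  have hT : 0 < ∑ i, τ i := Finset.sum_pos (fun i _ => hτ i) Finset.univ_nonempty
  set T : ℝ := ∑ i, τ i with hTdef
  set xb : EuclideanSpace ℝ (Fin d) := T⁻¹ • ∑ i, τ i • x i with hxbdef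
  -- the target set is closed and convex
  have hclosed : IsClosed (xb +ᵥ T • K₀) := by
    rw [← Set.image_vadd]
    exact ((hKc.smul T).image (continuous_const_vadd xb)).isClosed
  have hconvS : Convex ℝ (xb +ᵥ T • K₀) := (hKconv.smul T).vadd xb
  obtain ⟨f, s₀, hfs, hfp⟩ := geometric_hahn_banach_closed_point hconvS hclosed hcon
  set v : EuclideanSpace ℝ (Fin d) :=
    (InnerProductSpace.toDual ℝ (EuclideanSpace ℝ (Fin d))).symm f with hvdef
  have hfv : ∀ y, ⟪v, y⟫ = f y := fun y => InnerProductSpace.toDual_symm_apply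
  -- maximizer of ⟪v,·⟫ on K₀
  have hcont : Continuous fun t : EuclideanSpace ℝ (Fin d) => ⟪v, t⟫ :=
    continuous_const.inner continuous_id
  obtain ⟨k₀, hk₀K, hk₀max⟩ := hKc.exists_isMaxOn ⟨k₁, hk₁⟩ hcont.continuousOn
  set h : ℝ := ⟪v, k₀⟫ with hhdef
  have hmax : ∀ k ∈ K₀, ⟪v, k⟫ ≤ h := fun k hk => hk₀max hk
  have hnegmem : ∀ k ∈ K₀, -k ∈ K₀ := by
    intro k hk
    rw [hKsym]
    exact Set.neg_mem_neg.2 hk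
  have hmin : ∀ k ∈ K₀, -h ≤ ⟪v, k⟫ := by
    intro k hk
    have := hmax (-k) (hnegmem k hk)
    rw [inner_neg_right] at this
    linarith
  have hh0 : 0 ≤ h := by have := hmin k₀ hk₀K; linarith
  set a : Fin n → ℝ := fun i => ⟪v, x i⟫ with hadef
  set b : Fin n → ℝ := fun i => a i + τ i * h with hbdef
  set P : ℝ := ⟪v, p⟫ with hPdef
  -- v ≠ 0
  have hz : xb + T • k₀ ∈ xb +ᵥ T • K₀ :=
    Set.vadd_mem_vadd_set (Set.smul_mem_smul_set hk₀K)
  have hv0 : v ≠ 0 := by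
    intro h0
    have h1 : ⟪v, xb + T • k₀⟫ < s₀ := by rw [hfv]; exact hfs _ hz
    have h2 : s₀ < ⟪v, p⟫ := by rw [hfv]; exact hfp
    rw [h0, inner_zero_left] at h1 h2
    linarith
  -- the separation inequality
  have hsep : ⟪v, xb⟫ + T * h < P := by
    have h1 : ⟪v, xb + T • k₀⟫ < s₀ := by rw [hfv]; exact hfs _ hz
    have h2 : s₀ < P := by rw [hPdef, hfv]; exact hfp
    have e : ⟪v, T • k₀⟫ = T * h := by rw [real_inner_smul_right, hhdef]
    rw [inner_add_right, e] at h1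
    linarith
  -- projection bounds for members
  have hproj : ∀ i, ∀ y ∈ x i +ᵥ τ i • K₀,
      a i - τ i * h ≤ ⟪v, y⟫ ∧ ⟪v, y⟫ ≤ b i := by
    rintro i y ⟨z, ⟨k, hk, rfl⟩, rfl⟩
    have h1 := hmax k hk
    have h2 := hmin k hk
    have : ⟪v, x i +ᵥ τ i • k⟫ = a i + τ i * ⟪v, k⟫ := by
      rw [vadd_eq_add, inner_add_right, real_inner_smul_right]
    rw [this]
    have hτi := (hτ i).le
    simp only [hbdef]
    constructor
    · nlinarith
    · nlinarith
  -- p belongs to some member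
  obtain ⟨j₀, hj₀⟩ := Set.mem_iUnion.1 hp
  -- cover claim
  have hcov : ∀ i, Set.Ioc (b i) P ⊆
      ⋃ j ∈ Finset.univ.filter (fun j => b i < b j),
        Set.Icc (a j - τ j * h) (a j + τ j * h) := by
    intro i c hc
    obtain ⟨hc1, hc2⟩ := hc
    have hPbi : b i < P := lt_of_lt_of_le hc1 hc2
    set s : ℝ := (c - b i) / (P - b i) with hsdef
    have hs0 : 0 ≤ s := div_nonneg (by linarith) (by linarith)
    have hs1 : s ≤ 1 := by
      rw [div_le_one (by linarith)]; linarith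
    have hqi : x i + τ i • k₀ ∈ ⋃ j, x j +ᵥ τ j • K₀ :=
      Set.mem_iUnion.2 ⟨i, Set.vadd_mem_vadd_set (Set.smul_mem_smul_set hk₀K)⟩
    have hqih : x i + τ i • k₀ ∈ convexHull ℝ (⋃ j, x j +ᵥ τ j • K₀) :=
      subset_convexHull ℝ _ hqi
    have hph : p ∈ convexHull ℝ (⋃ j, x j +ᵥ τ j • K₀) := subset_convexHull ℝ _ hp
    have hinner_qi : ⟪v, x i + τ i • k₀⟫ = b i := by
      rw [inner_add_right, real_inner_smul_right]
    have hzmem : (1 - s) • (x i + τ i • k₀) + s • p ∈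
        convexHull ℝ (⋃ j, x j +ᵥ τ j • K₀) :=
      (convex_convexHull ℝ _) hqih hph (by linarith) hs0 (by ring)
    have hzinner : ⟪v, (1 - s) • (x i + τ i • k₀) + s • p⟫ = c := by
      rw [inner_add_right, real_inner_smul_right, real_inner_smul_right,
        hinner_qi, ← hPdef]
      have hPne : P - b i ≠ 0 := ne_of_gt (by linarith)
      have hs' : s * (P - b i) = c - b i := by rw [hsdef]; exact div_mul_cancel₀ _ hPne
      linear_combination hs'
    obtain ⟨j, y, hy1, hy2⟩ := hNS v c hv0 ⟨_, hzinner, hzmem⟩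
    have hb := hproj j y hy2
    rw [hy1] at hb
    refine Set.mem_biUnion (Finset.mem_filter.2 ⟨Finset.mem_univ j, ?_⟩) ?_
    · have : c ≤ b j := hb.2
      linarith
    · exact ⟨hb.1, hb.2⟩
  -- length bound
  have hkey : ∀ i, P - b i ≤
      2 * h * ∑ j ∈ Finset.univ.filter (fun j => b i < b j), τ j := by
    intro i
    have := aux_cover_length (Finset.univ.filter (fun j => b i < b j))
      (fun j => a j - τ j * h) (fun j => a j + τ j * h) (b i) P
      (fun j _ => by
        have := mul_nonneg (hτ j).le hh0
        show a j - τ j * h ≤ a j + τ j * h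
        linarith) (hcov i)
    calc P - b i ≤ ∑ j ∈ Finset.univ.filter (fun j => b i < b j),
        ((a j + τ j * h) - (a j - τ j * h)) := this
      _ = 2 * h * ∑ j ∈ Finset.univ.filter (fun j => b i < b j), τ j := by
        rw [Finset.mul_sum]
        exact Finset.sum_congr rfl fun j _ => by ring
  -- summation
  have hsum : ∑ i, τ i * (P - b i) ≤ h * (T ^ 2 - ∑ i, (τ i) ^ 2) := by
    have h1 : ∑ i, τ i * (P - b i) ≤
        ∑ i, τ i * (2 * h * ∑ j ∈ Finset.univ.filter (fun j => b i < b j), τ j) :=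
      Finset.sum_le_sum fun i _ => mul_le_mul_of_nonneg_left (hkey i) (hτ i).le
    have h2 : ∑ i, τ i * (2 * h * ∑ j ∈ Finset.univ.filter (fun j => b i < b j), τ j)
        = h * (2 * ∑ i, τ i * ∑ j ∈ Finset.univ.filter (fun j => b i < b j), τ j) := by
      rw [Finset.mul_sum, Finset.mul_sum]
      exact Finset.sum_congr rfl fun i _ => by ring
    have h3 := aux_double_sum τ (fun i => (hτ i).le) b
    calc ∑ i, τ i * (P - b i) ≤ h * (2 * ∑ i, τ i *
          ∑ j ∈ Finset.univ.filter (fun j => b i < b j), τ j) := by rw [← h2]; exact h1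
      _ ≤ h * (T ^ 2 - ∑ i, (τ i) ^ 2) := mul_le_mul_of_nonneg_left h3 hh0
  -- final contradiction
  have e1 : ∑ i, τ i * P = ∑ i, τ i * (P - b i) + ∑ i, τ i * b i := by
    rw [← Finset.sum_add_distrib]
    exact Finset.sum_congr rfl fun i _ => by ring
  have e2 : ∑ i, τ i * b i = ∑ i, τ i * a i + h * ∑ i, (τ i) ^ 2 := by
    rw [Finset.mul_sum, ← Finset.sum_add_distrib]
    refine Finset.sum_congr rfl fun i _ => ?_
    simp only [hbdef]
    ring
  have e3 : T * P = ∑ i, τ i * P := by rw [hTdef, Finset.sum_mul]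
  have e4 : ⟪v, xb⟫ = T⁻¹ * ∑ i, τ i * a i := by
    rw [hxbdef, real_inner_smul_right, inner_sum]
    congr 1
    exact Finset.sum_congr rfl fun i _ => real_inner_smul_right v (x i) (τ i)
  rw [e4] at hsep
  have hsep' : ∑ i, τ i * a i + T * (T * h) < T * P := by
    have := mul_lt_mul_of_pos_left hsep hT
    rw [mul_add, ← mul_assoc, mul_inv_cancel₀ hT.ne', one_mul] at this
    linarith [this]
  have hTTh : T * (T * h) = h * T ^ 2 := by ring
  linarith [hsum, e1, e2, e3, hsep', hTTh]
end

section
/- Let $K_0$ be an $o$-symmetric convex body in $\mathbb{R}^d$ and let $\mathcal{K} = \{x_i + \tau_i K_0 : i=1,\dots,n\}$, $\tau_i>0$, be a non-separable family. Then for every unit vector $u$, the support function satisfies $h_{\mathrm{conv}\bigcup\mathcal{K}}(u) \le \langle x, u\rangle + \left(\sum_{i=1}^n\tau_i\right) h_{K_0}(u)$, where $x = \left(\sum_i \tau_i x_i\right)/\left(\sum_i \tau_i\right)$. -/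
open scoped Pointwise RealInnerProductSpace

lemma aux_pairs {n : ℕ} (τ b : Fin n → ℝ) (hτ : ∀ i, 0 ≤ τ i) :
    2 * ∑ j, ∑ k ∈ Finset.univ.filter (fun k => b j < b k), τ j * τ k
      ≤ (∑ i, τ i)^2 - ∑ i, (τ i)^2 := by
  have e1 : ∑ j, ∑ k ∈ Finset.univ.filter (fun k => b j < b k), τ j * τ k
        = ∑ j : Fin n, ∑ k : Fin n, if b j < b k then τ j * τ k else 0 :=
    Finset.sum_congr rfl fun j _ => by rw [Finset.sum_filter]
  rw [e1]
  have swap : ∑ j : Fin n, ∑ k : Fin n, (if b j < b k then τ j * τ k else 0)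
      = ∑ j : Fin n, ∑ k : Fin n, (if b k < b j then τ j * τ k else 0) := by
    rw [Finset.sum_comm]
    refine Finset.sum_congr rfl fun j _ => Finset.sum_congr rfl fun k _ => ?_
    rw [mul_comm]
  have key : ∑ j : Fin n, ∑ k : Fin n, ((if b j < b k then τ j * τ k else 0)
        + (if b k < b j then τ j * τ k else 0))
      ≤ ∑ j : Fin n, ∑ k : Fin n, (if j ≠ k then τ j * τ k else 0) := by
    refine Finset.sum_le_sum fun j _ => Finset.sum_le_sum fun k _ => ?_
    by_cases hjk : j = k
    · subst hjk; simp
    · have hnn : 0 ≤ τ j * τ k := mul_nonneg (hτ j) (hτ k)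
      simp only [hjk, if_pos, ne_eq, not_false_iff]
      rcases lt_trichotomy (b j) (b k) with h | h | h <;> split_ifs <;> linarith
  have expand : ∑ j : Fin n, ∑ k : Fin n, (if j ≠ k then τ j * τ k else 0)
      = (∑ i, τ i)^2 - ∑ i, (τ i)^2 := by
    have hpt : ∀ j k : Fin n,
        (if j ≠ k then τ j * τ k else 0) = τ j * τ k - if j = k then τ j * τ k else 0 := by
      intro j k; split_ifs with h1 h2 <;> simp_all
    simp_rw [hpt, Finset.sum_sub_distrib]
    congr 1
    · rw [sq, Finset.sum_mul_sum]
    · refine Finset.sum_congr rfl fun j _ => ?_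
      rw [Finset.sum_ite_eq Finset.univ j (fun k => τ j * τ k)]
      simp [sq]
  calc 2 * ∑ j : Fin n, ∑ k : Fin n, (if b j < b k then τ j * τ k else 0)
      = ∑ j : Fin n, ∑ k : Fin n, ((if b j < b k then τ j * τ k else 0)
        + (if b k < b j then τ j * τ k else 0)) := by
        simp_rw [Finset.sum_add_distrib]; rw [← swap]; ring
    _ ≤ _ := key
    _ = _ := expand

set_option maxHeartbeats 1000000 in
/-- Support function form: for an `o`-symmetric convex body `K₀` and a non-separable family
`{x i + τ i • K₀}`, for every unit vector `u`,
`h_{conv ⋃ 𝒦}(u) ≤ ⟪x̄, u⟫ + (∑ τ i) h_{K₀}(u)` where `x̄ = (∑ τ i • x i)/(∑ τ i)`. -/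
theorem stmt_8 (d n : ℕ) (hd : 2 ≤ d) (hn : 1 ≤ n)
    (K₀ : Set (EuclideanSpace ℝ (Fin d)))
    (hKc : IsCompact K₀) (hKconv : Convex ℝ K₀) (hKint : (interior K₀).Nonempty)
    (hKsym : K₀ = -K₀)
    (x : Fin n → EuclideanSpace ℝ (Fin d)) (τ : Fin n → ℝ) (hτ : ∀ i, 0 < τ i)
    (hNS : ∀ (u : EuclideanSpace ℝ (Fin d)) (c : ℝ), u ≠ 0 →
      ({y | ⟪u, y⟫ = c} ∩ convexHull ℝ (⋃ i, x i +ᵥ τ i • K₀)).Nonempty →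
      ∃ i, ({y | ⟪u, y⟫ = c} ∩ (x i +ᵥ τ i • K₀)).Nonempty)
    (u : EuclideanSpace ℝ (Fin d)) (hu : ‖u‖ = 1) :
    sSup ((fun y => ⟪y, u⟫) '' convexHull ℝ (⋃ i, x i +ᵥ τ i • K₀)) ≤
      ⟪(∑ i, τ i)⁻¹ • ∑ i, τ i • x i, u⟫ + (∑ i, τ i) * sSup ((fun y => ⟪y, u⟫) '' K₀) := by
  classical
  set f : EuclideanSpace ℝ (Fin d) → ℝ := fun y => ⟪y, u⟫ with hf
  have hfc : Continuous f := Continuous.inner continuous_id continuous_const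
  obtain ⟨w, hw⟩ := hKint
  have hK0ne : K₀.Nonempty := ⟨w, interior_subset hw⟩
  have hbdd : BddAbove (f '' K₀) := (hKc.image hfc).bddAbove
  set h := sSup (f '' K₀) with hh
  obtain ⟨z₀, hz₀K, hz₀⟩ : h ∈ f '' K₀ := (hKc.image hfc).sSup_mem (hK0ne.image f)
  have hle : ∀ z ∈ K₀, f z ≤ h := fun z hz => le_csSup hbdd ⟨z, hz, rfl⟩
  have hnegmem : ∀ z ∈ K₀, -z ∈ K₀ := by
    intro z hz; rw [hKsym]; simpa using hz
  have hgelow : ∀ z ∈ K₀, -h ≤ f z := by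
    intro z hz
    have h2 := hle (-z) (hnegmem z hz)
    have h3 : f (-z) = -f z := by simp [hf]
    rw [h3] at h2; linarith
  have h0 : (0 : EuclideanSpace ℝ (Fin d)) ∈ interior K₀ := by
    have hw' : -w ∈ interior K₀ := by
      have himg : Neg.neg '' interior K₀ = interior (Neg.neg '' K₀) :=
        (Homeomorph.neg (EuclideanSpace ℝ (Fin d))).image_interior K₀
      rw [Set.image_neg_eq_neg, Set.image_neg_eq_neg, ← hKsym] at himg
      rw [← himg]
      exact Set.neg_mem_neg.mpr hw
    have := hKconv.interior hw hw' (by norm_num : (0:ℝ) ≤ (1:ℝ)/2)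
      (by norm_num : (0:ℝ) ≤ (1:ℝ)/2) (by norm_num)
    simpa using this
  have hpos : 0 < h := by
    obtain ⟨ε, hε, hball⟩ := Metric.mem_nhds_iff.1 (mem_interior_iff_mem_nhds.1 h0)
    have hmem : (ε/2) • u ∈ K₀ := by
      apply hball
      rw [Metric.mem_ball, dist_zero_right, norm_smul, hu, mul_one, Real.norm_eq_abs,
        abs_of_pos (half_pos hε)]
      linarith
    have hv : f ((ε/2) • u) = ε/2 := by
      rw [hf]; simp only
      rw [real_inner_smul_left, real_inner_self_eq_norm_sq, hu]
      norm_num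
    nlinarith [hle _ hmem]
  -- notation
  set a : Fin n → ℝ := fun i => ⟪x i, u⟫ with ha
  set T := ∑ i, τ i with hT
  have hTpos : 0 < T := Finset.sum_pos (fun i _ => hτ i) ⟨⟨0, hn⟩, Finset.mem_univ _⟩
  set b : Fin n → ℝ := fun i => a i + τ i * h with hb
  set S := ⋃ i, x i +ᵥ τ i • K₀ with hS
  have hmemS : ∀ i (z : EuclideanSpace ℝ (Fin d)), z ∈ K₀ → x i + τ i • z ∈ S := by
    intro i z hz
    exact Set.mem_iUnion.2 ⟨i, ⟨τ i • z, Set.smul_mem_smul_set hz, rfl⟩⟩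
  have hmemchar : ∀ i (y : EuclideanSpace ℝ (Fin d)), y ∈ x i +ᵥ τ i • K₀ →
      ∃ z ∈ K₀, y = x i + τ i • z := by
    intro i y hy
    obtain ⟨v, hv, rfl⟩ := hy
    obtain ⟨z, hz, rfl⟩ := hv
    exact ⟨z, hz, rfl⟩
  have hfval : ∀ i (z : EuclideanSpace ℝ (Fin d)), f (x i + τ i • z) = a i + τ i * f z := by
    intro i z
    rw [hf]; simp only
    rw [inner_add_left, real_inner_smul_left]
  have hune : u ≠ 0 := by
    intro h0u; rw [h0u, norm_zero] at hu; norm_num at hu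
  -- max element
  obtain ⟨iM, _, hiM⟩ := Finset.exists_max_image Finset.univ b ⟨⟨0, hn⟩, Finset.mem_univ _⟩
  set M := b iM with hM
  -- covering inequality
  have hcov : ∀ j : Fin n, M - b j ≤
      ∑ k ∈ Finset.univ.filter (fun k => b j < b k), 2 * (τ k * h) := by
    intro j
    have hnnsum : (0:ℝ) ≤ ∑ k ∈ Finset.univ.filter (fun k => b j < b k), 2 * (τ k * h) :=
      Finset.sum_nonneg fun k _ => by nlinarith [hτ k, hpos]
    rcases le_or_gt M (b j) with hMj | hMj
    · linarith
    · have hsub : Set.Ioc (b j) M ⊆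
          ⋃ k ∈ Finset.univ.filter (fun k => b j < b k), Set.Icc (a k - τ k * h) (b k) := by
        rintro c ⟨hc1, hc2⟩
        set p := x j + τ j • z₀ with hp
        set q := x iM + τ iM • z₀ with hq
        have hfp : f p = b j := by rw [hp, hfval, hz₀]
        have hfq : f q = M := by rw [hq, hfval, hz₀]
        set t := (c - b j)/(M - b j) with ht
        have ht0 : 0 ≤ t := div_nonneg (by linarith) (by linarith)
        have ht1 : t ≤ 1 := by
          rw [ht, div_le_one (by linarith)]; linarith
        have hyhull : (1-t) • p + t • q ∈ convexHull ℝ S :=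
          (convex_convexHull ℝ S) (subset_convexHull ℝ S (hmemS j z₀ hz₀K))
            (subset_convexHull ℝ S (hmemS iM z₀ hz₀K)) (by linarith) ht0 (by ring)
        have hfy : f ((1-t) • p + t • q) = c := by
          rw [hf]; simp only
          rw [inner_add_left, real_inner_smul_left, real_inner_smul_left]
          show (1-t) * f p + t * f q = c
          rw [hfp, hfq]
          have hne' : M - b j ≠ 0 := by linarith
          field_simp [ht]
          have htm : t * (M - b j) = c - b j := by rw [ht]; exact div_mul_cancel₀ _ hne'
          linear_combination htm
        obtain ⟨k, y', hy'mem⟩ := hNS u c hune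
          ⟨(1-t) • p + t • q, by rw [Set.mem_setOf_eq, real_inner_comm]; exact hfy, hyhull⟩
        obtain ⟨hy'c, hy'k⟩ := hy'mem
        obtain ⟨z, hzK, rfl⟩ := hmemchar k y' hy'k
        have hcval : c = a k + τ k * f z := by
          rw [Set.mem_setOf_eq, real_inner_comm] at hy'c
          rw [← hy'c]; exact hfval k z
        have hzle := hle z hzK
        have hzge := hgelow z hzK
        have hck : c ≤ b k := by
          rw [hb]; simp only
          nlinarith [hτ k]
        have hk : b j < b k := lt_of_lt_of_le hc1 hck
        refine Set.mem_biUnion (Finset.mem_filter.2 ⟨Finset.mem_univ _, hk⟩) ?_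
        refine ⟨?_, hck⟩
        nlinarith [hτ k]
      have hm1 : MeasureTheory.volume (Set.Ioc (b j) M) ≤ MeasureTheory.volume
          (⋃ k ∈ Finset.univ.filter (fun k => b j < b k), Set.Icc (a k - τ k * h) (b k)) :=
        MeasureTheory.measure_mono hsub
      have hm2 := MeasureTheory.measure_biUnion_finset_le
        (μ := MeasureTheory.volume) (Finset.univ.filter (fun k => b j < b k))
        (fun k => Set.Icc (a k - τ k * h) (b k))
      have hmeas := hm1.trans hm2
      rw [Real.volume_Ioc] at hmeas
      have hsum : ∑ k ∈ Finset.univ.filter (fun k => b j < b k),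
          MeasureTheory.volume (Set.Icc (a k - τ k * h) (b k))
          = ENNReal.ofReal (∑ k ∈ Finset.univ.filter (fun k => b j < b k), 2 * (τ k * h)) := by
        rw [ENNReal.ofReal_sum_of_nonneg (fun k _ => by nlinarith [hτ k, hpos])]
        refine Finset.sum_congr rfl fun k _ => ?_
        rw [Real.volume_Icc]
        congr 1
        rw [hb]; simp only; ring
      rw [hsum] at hmeas
      exact (ENNReal.ofReal_le_ofReal_iff hnnsum).1 hmeas
  -- key bound
  have hkey : ∀ i, b i ≤ T⁻¹ * (∑ j, τ j * a j) + T * h := by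
    intro i
    have e1 : T * M - ∑ j, τ j * a j = ∑ j, τ j * (M - a j) := by
      simp_rw [mul_sub]
      rw [Finset.sum_sub_distrib, ← Finset.sum_mul, ← hT, mul_comm]
    have e2 : ∑ j, τ j * (M - a j)
        = ∑ j, τ j * (M - b j) + (∑ j, (τ j)^2) * h := by
      have hpt : ∀ j : Fin n, τ j * (M - a j) = τ j * (M - b j) + (τ j)^2 * h := by
        intro j; rw [hb]; simp only; ring
      rw [Finset.sum_congr rfl fun j _ => hpt j, Finset.sum_add_distrib, Finset.sum_mul]
    have e3 : ∑ j, τ j * (M - b j)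
        ≤ ∑ j, τ j * ∑ k ∈ Finset.univ.filter (fun k => b j < b k), 2 * (τ k * h) :=
      Finset.sum_le_sum fun j _ => mul_le_mul_of_nonneg_left (hcov j) (hτ j).le
    have e4 : ∑ j, τ j * ∑ k ∈ Finset.univ.filter (fun k => b j < b k), 2 * (τ k * h)
        = 2 * h * ∑ j, ∑ k ∈ Finset.univ.filter (fun k => b j < b k), τ j * τ k := by
      rw [Finset.mul_sum]
      refine Finset.sum_congr rfl fun j _ => ?_
      rw [Finset.mul_sum, Finset.mul_sum]
      refine Finset.sum_congr rfl fun k _ => ?_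
      ring
    have e5 := aux_pairs τ b (fun i => (hτ i).le)
    have e6 : 2 * h * ∑ j, ∑ k ∈ Finset.univ.filter (fun k => b j < b k), τ j * τ k
        ≤ h * ((∑ i, τ i)^2 - ∑ i, (τ i)^2) := by
      have h1 := mul_le_mul_of_nonneg_left e5 hpos.le
      calc 2 * h * ∑ j, ∑ k ∈ Finset.univ.filter (fun k => b j < b k), τ j * τ k
          = h * (2 * ∑ j, ∑ k ∈ Finset.univ.filter (fun k => b j < b k), τ j * τ k) := by ring
        _ ≤ h * ((∑ i, τ i)^2 - ∑ i, (τ i)^2) := h1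
    have hTM : T * M ≤ ∑ j, τ j * a j + T^2 * h := by
      rw [← hT] at e6
      have e7 : h * (T^2 - ∑ i, (τ i)^2) + (∑ j, (τ j)^2) * h = T^2 * h := by ring
      linarith [e1, e2, e3, e4, e6, e7]
    have hbM : b i ≤ M := hiM i (Finset.mem_univ i)
    have hMle : M ≤ T⁻¹ * (∑ j, τ j * a j) + T * h := by
      have hexp : T * (T⁻¹ * (∑ j, τ j * a j) + T * h) = ∑ j, τ j * a j + T^2 * h := by
        field_simp
      have := hTM.trans_eq hexp.symm
      exact le_of_mul_le_mul_left this hTpos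
    exact hbM.trans hMle
  -- RHS inner value
  have hRHS : ⟪T⁻¹ • ∑ i, τ i • x i, u⟫ = T⁻¹ * ∑ j, τ j * a j := by
    rw [real_inner_smul_left]
    congr 1
    rw [sum_inner]
    exact Finset.sum_congr rfl fun j _ => real_inner_smul_left _ _ _
  -- assemble
  have hne : (f '' convexHull ℝ S).Nonempty :=
    ⟨f (x ⟨0, hn⟩ + τ ⟨0, hn⟩ • z₀),
      ⟨_, subset_convexHull ℝ S (hmemS ⟨0, hn⟩ z₀ hz₀K), rfl⟩⟩
  refine csSup_le hne ?_
  rintro v ⟨y, hy, rfl⟩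
  have hlin : IsLinearMap ℝ f := ⟨fun p q => inner_add_left p q u, fun c p => real_inner_smul_left p u c⟩
  have hcvx : Convex ℝ {y | f y ≤ T⁻¹ * (∑ j, τ j * a j) + T * h} :=
    convex_halfSpace_le hlin _
  have hhull : convexHull ℝ S ⊆ {y | f y ≤ T⁻¹ * (∑ j, τ j * a j) + T * h} := by
    apply convexHull_min ?_ hcvx
    rintro y hyS
    obtain ⟨i, hyi⟩ := Set.mem_iUnion.1 hyS
    obtain ⟨z, hzK, rfl⟩ := hmemchar i _ hyi
    have h1 : f (x i + τ i • z) ≤ b i := by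
      rw [hfval, hb]
      simp only
      have := hle z hzK
      nlinarith [hτ i]
    exact le_trans h1 (hkey i)
  rw [hRHS]
  exact hhull hy
end

section
/- Let $K_1 = x_1 + \tau_1 K$ and $K_2 = x_2 + \tau_2 K$ be intersecting positive homothets of a convex body $K$ in $\mathbb{R}^d$, and let $K' = y + \tau' K$ be a positive homothet of $K$ containing $K_1 \cup K_2$ such that some pair of parallel supporting hyperplanes of $K'$ with common unit normal $u$ satisfies $H_1 \cap K_1 \neq \emptyset$ and $H_2 \cap K_2 \neq \emptyset$. Then $\tau' \cdot \mathrm{width}_u(K) \le \tau_1 \mathrm{width}_u(K) + \tau_2 \mathrm{width}_u(K)$, hence $\tau' \le \tau_1 + \tau_2$ (assuming $\mathrm{width}_u(K) > 0$). -/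
open scoped Pointwise RealInnerProductSpace

/-- If intersecting homothets `K₁ = x₁ + τ₁ • K` and `K₂ = x₂ + τ₂ • K` are contained in a
homothet `K' = y + τ' • K` which has a pair of parallel supporting hyperplanes with unit
normal `u` (given by levels `c₂ ≤ ⟪u,·⟫ ≤ c₁`) touching `K₁` resp. `K₂`, then
`τ' · width_u K ≤ τ₁ · width_u K + τ₂ · width_u K`, and hence `τ' ≤ τ₁ + τ₂`
whenever `width_u K > 0`. -/
theorem stmt_10 (d : ℕ) (hd : 2 ≤ d) (K : Set (EuclideanSpace ℝ (Fin d)))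
    (hKc : IsCompact K) (hKconv : Convex ℝ K) (hKint : (interior K).Nonempty)
    (x₁ x₂ y : EuclideanSpace ℝ (Fin d)) (τ₁ τ₂ τ' : ℝ)
    (hτ₁ : 0 < τ₁) (hτ₂ : 0 < τ₂) (hτ' : 0 < τ')
    (hint : ((x₁ +ᵥ τ₁ • K) ∩ (x₂ +ᵥ τ₂ • K)).Nonempty)
    (hcover : (x₁ +ᵥ τ₁ • K) ∪ (x₂ +ᵥ τ₂ • K) ⊆ y +ᵥ τ' • K)
    (u : EuclideanSpace ℝ (Fin d)) (hu : ‖u‖ = 1) (c₁ c₂ : ℝ)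
    (hsupp : ∀ z ∈ y +ᵥ τ' • K, c₂ ≤ ⟪u, z⟫ ∧ ⟪u, z⟫ ≤ c₁)
    (htouch₁ : ∃ p ∈ x₁ +ᵥ τ₁ • K, ⟪u, p⟫ = c₁)
    (htouch₂ : ∃ q ∈ x₂ +ᵥ τ₂ • K, ⟪u, q⟫ = c₂) :
    τ' * (sSup ((fun z => ⟪u, z⟫) '' K) - sInf ((fun z => ⟪u, z⟫) '' K)) ≤
        τ₁ * (sSup ((fun z => ⟪u, z⟫) '' K) - sInf ((fun z => ⟪u, z⟫) '' K)) +
          τ₂ * (sSup ((fun z => ⟪u, z⟫) '' K) - sInf ((fun z => ⟪u, z⟫) '' K)) ∧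
      (0 < sSup ((fun z => ⟪u, z⟫) '' K) - sInf ((fun z => ⟪u, z⟫) '' K) → τ' ≤ τ₁ + τ₂) := by
  set f : EuclideanSpace ℝ (Fin d) → ℝ := fun z => ⟪u, z⟫ with hf
  set S := sSup (f '' K) with hS
  set I := sInf (f '' K) with hI
  have hKne : K.Nonempty := hKint.mono interior_subset
  have hfc : Continuous f := by
    simpa [hf] using (innerSL ℝ u).continuous
  have hbdd : BddAbove (f '' K) := (hKc.image hfc).bddAbove
  have hbdd' : BddBelow (f '' K) := (hKc.image hfc).bddBelow
  -- bounds for points in homothets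
  have key : ∀ (x : EuclideanSpace ℝ (Fin d)) (τ : ℝ), 0 < τ →
      ∀ z ∈ x +ᵥ τ • K, f x + τ * I ≤ f z ∧ f z ≤ f x + τ * S := by
    intro x τ hτ z hz
    obtain ⟨w, hw, rfl⟩ := hz
    obtain ⟨k, hk, rfl⟩ := hw
    have hIk : I ≤ f k := csInf_le hbdd' ⟨k, hk, rfl⟩
    have hkS : f k ≤ S := le_csSup hbdd ⟨k, hk, rfl⟩
    have : f (x +ᵥ τ • k) = f x + τ * f k := by
      simp only [hf, vadd_eq_add]
      rw [inner_add_right, real_inner_smul_right]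
    rw [this]
    constructor <;> nlinarith
  obtain ⟨p, hp, hpc⟩ := htouch₁
  obtain ⟨q, hq, hqc⟩ := htouch₂
  obtain ⟨z, hz₁, hz₂⟩ := hint
  have h1 := key x₁ τ₁ hτ₁ p hp
  have h2 := key x₁ τ₁ hτ₁ z hz₁
  have h3 := key x₂ τ₂ hτ₂ q hq
  have h4 := key x₂ τ₂ hτ₂ z hz₂
  -- c₁ - c₂ ≤ τ₁ (S - I) + τ₂ (S - I)
  have hup : c₁ - c₂ ≤ τ₁ * (S - I) + τ₂ * (S - I) := by
    have := hpc; have := hqc; nlinarith [h1.1, h1.2, h2.1, h2.2, h3.1, h3.2, h4.1, h4.2]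
  -- τ' (S - I) ≤ c₁ - c₂
  have hlow : τ' * (S - I) ≤ c₁ - c₂ := by
    obtain ⟨kS, hkS, hkSe⟩ : ∃ k ∈ K, f k = S :=
      hKc.exists_isMaxOn hKne hfc.continuousOn |>.imp fun k ⟨hk, hmax⟩ =>
        ⟨hk, le_antisymm (le_csSup hbdd ⟨k, hk, rfl⟩)
          (csSup_le (hKne.image f) (by rintro _ ⟨w, hw, rfl⟩; exact hmax hw))⟩
    obtain ⟨kI, hkI, hkIe⟩ : ∃ k ∈ K, f k = I :=
      hKc.exists_isMinOn hKne hfc.continuousOn |>.imp fun k ⟨hk, hmin⟩ =>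
        ⟨hk, le_antisymm
          (le_csInf (hKne.image f) (by rintro _ ⟨w, hw, rfl⟩; exact hmin hw))
          (csInf_le hbdd' ⟨k, hk, rfl⟩)⟩
    have hmemS : (y +ᵥ τ' • kS) ∈ y +ᵥ τ' • K := ⟨τ' • kS, ⟨kS, hkS, rfl⟩, rfl⟩
    have hmemI : (y +ᵥ τ' • kI) ∈ y +ᵥ τ' • K := ⟨τ' • kI, ⟨kI, hkI, rfl⟩, rfl⟩
    have hSle := (hsupp _ hmemS).2
    have hIge := (hsupp _ hmemI).1
    have eS : ⟪u, y +ᵥ τ' • kS⟫ = f y + τ' * S := by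
      rw [vadd_eq_add, inner_add_right, real_inner_smul_right]
      rw [show ⟪u, kS⟫ = S from hkSe]
    have eI : ⟪u, y +ᵥ τ' • kI⟫ = f y + τ' * I := by
      rw [vadd_eq_add, inner_add_right, real_inner_smul_right]
      rw [show ⟪u, kI⟫ = I from hkIe]
    rw [eS] at hSle; rw [eI] at hIge
    linarith
  have main : τ' * (S - I) ≤ τ₁ * (S - I) + τ₂ * (S - I) := le_trans hlow hup
  refine ⟨main, fun hw => ?_⟩
  nlinarith
end

section
/- Let $K$ be a strictly convex body in $\mathbb{R}^2$ and let $K_1, \dots, K_n$ be positive homothets of $K$ whose union $\bigcup_{i=1}^n K_i$ is convex. Then there exists $i^*$ such that $\bigcup_{i=1}^n K_i = K_{i^*}$. -/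
open scoped RealInnerProductSpace Pointwise

namespace Stmt11Aux

variable {E : Type*} [NormedAddCommGroup E] [InnerProductSpace ℝ E]

noncomputable def hsup (K : Set E) (v : E) : ℝ := sSup ((fun p => ⟪p, v⟫) '' K)

lemma inner_le_hsup {K : Set E} (hKc : IsCompact K) {p : E} (v : E) (hp : p ∈ K) :
    ⟪p, v⟫ ≤ hsup K v :=
  le_csSup ((hKc.image (continuous_id.inner continuous_const)).bddAbove)
    (Set.mem_image_of_mem _ hp)

lemma exists_hsup {K : Set E} (hKc : IsCompact K) (hK0 : K.Nonempty) (v : E) :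
    ∃ p ∈ K, ⟪p, v⟫ = hsup K v := by
  have himage : IsCompact ((fun p => ⟪p, v⟫) '' K) :=
    hKc.image (continuous_id.inner continuous_const)
  have h := himage.sSup_mem (hK0.image fun p => ⟪p, v⟫)
  obtain ⟨p, hp, hpe⟩ := h
  exact ⟨p, hp, hpe⟩

lemma mem_homothet {K : Set E} {c p : E} {t : ℝ} :
    p ∈ c +ᵥ t • K ↔ ∃ y ∈ K, p = c + t • y := by
  constructor
  · intro hp
    obtain ⟨q, hq, rfl⟩ := Set.mem_vadd_set.1 hp
    obtain ⟨y, hy, rfl⟩ := Set.mem_smul_set.1 hq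
    exact ⟨y, hy, rfl⟩
  · rintro ⟨y, hy, rfl⟩
    exact Set.mem_vadd_set.2 ⟨t • y, Set.mem_smul_set.2 ⟨y, hy, rfl⟩, rfl⟩

lemma homothet_inner_le {K : Set E} (hKc : IsCompact K) {c : E} {t : ℝ} (ht : 0 ≤ t)
    {p : E} (v : E) (hp : p ∈ c +ᵥ t • K) :
    ⟪p, v⟫ ≤ ⟪c, v⟫ + t * hsup K v := by
  obtain ⟨y, hy, rfl⟩ := mem_homothet.1 hp
  rw [inner_add_left, real_inner_smul_left]
  exact add_le_add_right (mul_le_mul_of_nonneg_left (inner_le_hsup hKc v hy) ht) _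

lemma homothet_exists_inner {K : Set E} (hKc : IsCompact K) (hK0 : K.Nonempty) (c : E) (t : ℝ)
    (v : E) : ∃ p ∈ c +ᵥ t • K, ⟪p, v⟫ = ⟪c, v⟫ + t * hsup K v := by
  obtain ⟨y, hy, hye⟩ := exists_hsup hKc hK0 v
  exact ⟨c + t • y, mem_homothet.2 ⟨y, hy, rfl⟩, by
    rw [inner_add_left, real_inner_smul_left, hye]⟩

lemma maximizer_unique {K : Set E} (hKc : IsCompact K) (hKsc : StrictConvex ℝ K)
    {u : E} (hu : ‖u‖ = 1) {a b : E} (ha : a ∈ K) (hb : b ∈ K)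
    (hae : ⟪a, u⟫ = hsup K u) (hbe : ⟪b, u⟫ = hsup K u) : a = b := by
  by_contra hne
  have hz : (1/2 : ℝ) • a + (1/2 : ℝ) • b ∈ interior K :=
    hKsc ha hb hne (by norm_num) (by norm_num) (by norm_num)
  obtain ⟨ε, hε, hball⟩ := Metric.isOpen_iff.1 isOpen_interior _ hz
  set z := (1/2 : ℝ) • a + (1/2 : ℝ) • b with hzdef
  have hzK : z + (ε/2) • u ∈ K := by
    apply interior_subset
    apply hball
    rw [Metric.mem_ball, dist_eq_norm]
    have : z + (ε/2) • u - z = (ε/2) • u := by abel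
    rw [this, norm_smul, Real.norm_eq_abs, hu, mul_one, abs_of_pos (half_pos hε)]
    linarith
  have hle : ⟪z + (ε/2) • u, u⟫ ≤ hsup K u := inner_le_hsup hKc u hzK
  have hzu : ⟪z, u⟫ = hsup K u := by
    rw [hzdef, inner_add_left, real_inner_smul_left, real_inner_smul_left, hae, hbe]
    ring
  rw [inner_add_left, real_inner_smul_left, hzu, real_inner_self_eq_norm_mul_norm, hu] at hle
  nlinarith

lemma hsup_continuous {K : Set E} (hKc : IsCompact K) (hK0 : K.Nonempty) :
    Continuous (hsup K) := by
  obtain ⟨r, hr⟩ := hKc.isBounded.subset_closedBall 0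
  set R : ℝ := max r 0 with hR
  have hRnn : 0 ≤ R := le_max_right _ _
  have key : ∀ u v : E, hsup K u - hsup K v ≤ R * ‖u - v‖ := by
    intro u v
    obtain ⟨p, hp, hpe⟩ := exists_hsup hKc hK0 u
    have h1 : ⟪p, v⟫ ≤ hsup K v := inner_le_hsup hKc v hp
    have h2 : ⟪p, u - v⟫ ≤ ‖p‖ * ‖u - v‖ := real_inner_le_norm _ _
    have hpn : ‖p‖ ≤ R := by
      have := hr hp
      rw [Metric.mem_closedBall, dist_zero_right] at this
      exact le_trans this (le_max_left _ _)
    have h3 : ‖p‖ * ‖u - v‖ ≤ R * ‖u - v‖ :=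
      mul_le_mul_of_nonneg_right hpn (norm_nonneg _)
    have h4 : ⟪p, v⟫ + ⟪p, u - v⟫ = ⟪p, u⟫ := by
      rw [← inner_add_right]
      congr 1
      abel
    linarith [hpe ▸ h4]
  refine (LipschitzWith.of_dist_le_mul (K := R.toNNReal) (f := hsup K) ?_).continuous
  intro u v
  rw [Real.dist_eq, Real.coe_toNNReal _ hRnn, dist_eq_norm, abs_sub_le_iff]
  refine ⟨key u v, ?_⟩
  calc hsup K v - hsup K u ≤ R * ‖v - u‖ := key v u
    _ = R * ‖u - v‖ := by rw [norm_sub_rev]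

lemma core {K : Set E} (hKc : IsCompact K) (hK0 : K.Nonempty)
    (hKsc : StrictConvex ℝ K) {n : ℕ} {x : Fin n → E} {τ : Fin n → ℝ} (hτ : ∀ i, 0 < τ i)
    (hconv : Convex ℝ (⋃ k, x k +ᵥ τ k • K))
    {u : E} (hu : ‖u‖ = 1) {i j : Fin n}
    (hi : ∀ k, ⟪x k, u⟫ + τ k * hsup K u ≤ ⟪x i, u⟫ + τ i * hsup K u)
    (hj : ∀ k, ⟪x k, u⟫ + τ k * hsup K u ≤ ⟪x j, u⟫ + τ j * hsup K u) :
    ∃ q ∈ K, x i + τ i • q = x j + τ j • q := by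
  obtain ⟨y₀, hy₀, hy₀e⟩ := exists_hsup hKc hK0 u
  have hcj : ⟪x j, u⟫ + τ j * hsup K u = ⟪x i, u⟫ + τ i * hsup K u :=
    le_antisymm (hi j) (hj i)
  set c : ℝ := ⟪x i, u⟫ + τ i * hsup K u with hc
  set S : Set E := {p | p ∈ (⋃ k, x k +ᵥ τ k • K) ∧ ⟪p, u⟫ = c} with hS
  have hSconv : Convex ℝ S := by
    intro p hp q hq a b ha hb hab
    refine ⟨hconv hp.1 hq.1 ha hb hab, ?_⟩
    rw [inner_add_left, real_inner_smul_left, real_inner_smul_left, hp.2, hq.2,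
      ← add_mul, hab, one_mul]
  have hSsub : S ⊆ Set.range (fun k => x k + τ k • y₀) := by
    rintro p ⟨hpU, hpc⟩
    obtain ⟨k, hk⟩ := Set.mem_iUnion.1 hpU
    obtain ⟨y, hy, rfl⟩ := mem_homothet.1 hk
    have h4 : ⟪x k + τ k • y, u⟫ = ⟪x k, u⟫ + τ k * ⟪y, u⟫ := by
      rw [inner_add_left, real_inner_smul_left]
    have h5 : ⟪y, u⟫ ≤ hsup K u := inner_le_hsup hKc u hy
    have h6 : τ k * ⟪y, u⟫ ≤ τ k * hsup K u :=
      mul_le_mul_of_nonneg_left h5 (hτ k).le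
    have h7 : τ k * ⟪y, u⟫ = τ k * hsup K u := by
      have h3 := hi k
      rw [h4] at hpc
      linarith
    have h8 : ⟪y, u⟫ = hsup K u := mul_left_cancel₀ (hτ k).ne' h7
    have h9 : y = y₀ := maximizer_unique hKc hKsc hu hy hy₀ h8 hy₀e
    exact ⟨k, by rw [h9]⟩
  have hfin : S.Finite := (Set.finite_range _).subset hSsub
  have hpiS : x i + τ i • y₀ ∈ S := by
    refine ⟨Set.mem_iUnion.2 ⟨i, mem_homothet.2 ⟨y₀, hy₀, rfl⟩⟩, ?_⟩
    rw [inner_add_left, real_inner_smul_left, hy₀e]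
  have hpjS : x j + τ j • y₀ ∈ S := by
    refine ⟨Set.mem_iUnion.2 ⟨j, mem_homothet.2 ⟨y₀, hy₀, rfl⟩⟩, ?_⟩
    rw [inner_add_left, real_inner_smul_left, hy₀e]
    exact hcj
  refine ⟨y₀, hy₀, ?_⟩
  by_contra hne
  have hd : x j + τ j • y₀ - (x i + τ i • y₀) ≠ 0 := sub_ne_zero.2 (Ne.symm hne)
  set φ : ℝ → E := fun t => (x i + τ i • y₀) + t • (x j + τ j • y₀ - (x i + τ i • y₀)) with hφ
  have hmap : φ '' Set.Icc (0:ℝ) 1 ⊆ S := by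
    rintro _ ⟨t, ht, rfl⟩
    exact hSconv.add_smul_sub_mem hpiS hpjS ht
  have hinj : Set.InjOn φ (Set.Icc (0:ℝ) 1) := by
    intro s hs t ht hst
    simp only [hφ] at hst
    exact smul_left_injective ℝ hd (add_left_cancel hst)
  have hinf : (φ '' Set.Icc (0:ℝ) 1).Infinite :=
    (Set.infinite_image_iff hinj).2 (Set.Icc_infinite one_pos)
  exact (hfin.subset hmap).not_infinite hinf

lemma contain {K : Set E} (hKconv : Convex ℝ K) {xi xj : E} {τi τj : ℝ}
    (hτi : 0 < τi) (hτj : 0 < τj) (hle : τi ≤ τj) {q : E} (hq : q ∈ K)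
    (heq : xi + τi • q = xj + τj • q) :
    xi +ᵥ τi • K ⊆ xj +ᵥ τj • K := by
  intro p hp
  obtain ⟨y, hy, rfl⟩ := mem_homothet.1 hp
  have hτj' : τj ≠ 0 := hτj.ne'
  have hzK : (τi / τj) • y + (1 - τi / τj) • q ∈ K :=
    hKconv hy hq (by positivity) (sub_nonneg.2 ((div_le_one hτj).2 hle)) (by ring)
  refine mem_homothet.2 ⟨(τi / τj) • y + (1 - τi / τj) • q, hzK, ?_⟩
  have hxj : xj = xi + τi • q - τj • q := eq_sub_of_add_eq heq.symm
  rw [hxj]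
  match_scalars <;> (field_simp; try ring)

lemma fmono {K : Set E} (hKc : IsCompact K) (hK0 : K.Nonempty) {xi xj : E} {τi τj : ℝ}
    (hsub : xi +ᵥ τi • K ⊆ xj +ᵥ τj • K) (hτj : 0 ≤ τj) (v : E) :
    ⟪xi, v⟫ + τi * hsup K v ≤ ⟪xj, v⟫ + τj * hsup K v := by
  obtain ⟨p, hp, hpe⟩ := homothet_exists_inner hKc hK0 xi τi v
  rw [← hpe]
  exact homothet_inner_le hKc hτj v (hsub hp)

lemma homothet_isCompact {K : Set E} (hKc : IsCompact K) (c : E) (t : ℝ) :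
    IsCompact (c +ᵥ t • K) := by
  have h : c +ᵥ t • K = (fun y => c + t • y) '' K := by
    ext p
    rw [mem_homothet]
    constructor
    · rintro ⟨y, hy, rfl⟩; exact ⟨y, hy, rfl⟩
    · rintro ⟨y, hy, rfl⟩; exact ⟨y, hy, rfl⟩
  rw [h]
  exact hKc.image (continuous_const.add (continuous_const_smul t))

end Stmt11Aux


open scoped Pointwise

/-- If `K ⊆ ℝ²` is a strictly convex body and `x i + τ i • K`, `i = 1, …, n`, are positive
homothets of `K` whose union is convex, then the union equals one of the homothets. -/
theorem stmt_11 (K : Set (EuclideanSpace ℝ (Fin 2)))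
    (hKc : IsCompact K) (hKconv : Convex ℝ K) (hKint : (interior K).Nonempty)
    (hKsc : StrictConvex ℝ K)
    (n : ℕ) (hn : 1 ≤ n) (x : Fin n → EuclideanSpace ℝ (Fin 2)) (τ : Fin n → ℝ)
    (hτ : ∀ i, 0 < τ i)
    (hconv : Convex ℝ (⋃ i, x i +ᵥ τ i • K)) :
    ∃ i' : Fin n, (⋃ i, x i +ᵥ τ i • K) = x i' +ᵥ τ i' • K := by
  classical
  have hK0 : K.Nonempty := hKint.mono interior_subset
  haveI : Nonempty (Fin n) := ⟨⟨0, hn⟩⟩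
  set f : Fin n → EuclideanSpace ℝ (Fin 2) → ℝ :=
    fun k v => ⟪x k, v⟫ + τ k * Stmt11Aux.hsup K v with hf
  have hfc : ∀ k, Continuous (f k) := fun k =>
    (continuous_const.inner continuous_id).add
      (continuous_const.mul (Stmt11Aux.hsup_continuous hKc hK0))
  set sp := Metric.sphere (0 : EuclideanSpace ℝ (Fin 2)) 1 with hsp
  set A : Fin n → Set sp := fun i => {u : sp | ∀ k, f k ↑u ≤ f i ↑u} with hA
  have hAclosed : ∀ i, IsClosed (A i) := by
    intro i
    have h : A i = ⋂ k, {u : sp | f k ↑u ≤ f i ↑u} := by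
      ext u; simp [hA, Set.mem_iInter]
    rw [h]
    exact isClosed_iInter fun k =>
      isClosed_le ((hfc k).comp continuous_subtype_val) ((hfc i).comp continuous_subtype_val)
  have hAcover : ∀ u : sp, ∃ i, u ∈ A i := fun u => Finite.exists_max fun k => f k ↑u
  have hnorm : ∀ u : sp, ‖(u : EuclideanSpace ℝ (Fin 2))‖ = 1 := fun u => by
    have h2 : dist (u : EuclideanSpace ℝ (Fin 2)) 0 = 1 := u.2
    rwa [dist_zero_right] at h2
  have hKsub : ∀ (i j : Fin n) (u : sp), u ∈ A i → u ∈ A j → τ i ≤ τ j →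
      x i +ᵥ τ i • K ⊆ x j +ᵥ τ j • K := by
    intro i j u hui huj hij
    obtain ⟨q, hq, hqe⟩ := Stmt11Aux.core hKc hK0 hKsc hτ hconv (hnorm u) hui huj
    exact Stmt11Aux.contain hKconv (hτ i) (hτ j) hij hq hqe
  have hAmono : ∀ i j : Fin n, (x i +ᵥ τ i • K ⊆ x j +ᵥ τ j • K) → A i ⊆ A j := by
    intro i j hsub u hu k
    exact le_trans (hu k) (Stmt11Aux.fmono hKc hK0 hsub (hτ j).le ↑u)
  have hspne : (Metric.sphere (0 : EuclideanSpace ℝ (Fin 2)) 1).Nonempty :=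
    NormedSpace.sphere_nonempty.2 zero_le_one
  obtain ⟨u₀, hu₀⟩ := hspne
  obtain ⟨i₀, hi₀⟩ := hAcover ⟨u₀, hu₀⟩
  have hsfin : {i : Fin n | (A i).Nonempty}.Finite := Set.toFinite _
  obtain ⟨m, hmne, hmax'⟩ :=
    Set.Finite.exists_maximalFor A {i : Fin n | (A i).Nonempty} hsfin ⟨i₀, ⟨_, hi₀⟩⟩
  have hmax : ∀ j, j ∈ {i : Fin n | (A i).Nonempty} → A m ⊆ A j → A m = A j :=
    fun j hj h => le_antisymm h (hmax' hj h)
  set C : Set sp := ⋃ j, if A j ⊆ A m then ∅ else A j with hC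
  have hCclosed : IsClosed C := isClosed_iUnion_of_finite fun j => by
    by_cases h : A j ⊆ A m <;> simp only [h, if_true, if_false] <;>
      first | exact isClosed_empty | exact hAclosed j
  have hdisj : ∀ u, u ∈ A m → u ∉ C := by
    intro u hum huC
    obtain ⟨j, hj⟩ := Set.mem_iUnion.1 huC
    by_cases h : A j ⊆ A m
    · rw [if_pos h] at hj; exact hj
    · rw [if_neg h] at hj
      rcases le_total (τ j) (τ m) with hh | hh
      · exact h (hAmono j m (hKsub j m u hj hum hh))
      · have hmj : A m ⊆ A j := hAmono m j (hKsub m j u hum hj hh)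
        have heq : A m = A j := hmax j ⟨u, hj⟩ hmj
        exact h (heq ▸ Set.Subset.rfl)
  have hcover : A m ∪ C = Set.univ := by
    ext u
    simp only [Set.mem_union, Set.mem_univ, iff_true]
    obtain ⟨j, hj⟩ := hAcover u
    by_cases h : A j ⊆ A m
    · exact Or.inl (h hj)
    · exact Or.inr (Set.mem_iUnion.2 ⟨j, by rw [if_neg h]; exact hj⟩)
  have hrank : 1 < Module.rank ℝ (EuclideanSpace ℝ (Fin 2)) := by
    rw [← Module.finrank_eq_rank, finrank_euclideanSpace_fin]
    exact_mod_cast one_lt_two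
  haveI : ConnectedSpace sp := Subtype.connectedSpace (isConnected_sphere hrank 0 zero_le_one)
  have hAmopen : IsOpen (A m) := by
    have h : A m = Cᶜ := by
      ext u
      constructor
      · intro hu; exact hdisj u hu
      · intro hu
        have humem : u ∈ A m ∪ C := by rw [hcover]; trivial
        rcases humem with h' | h'
        · exact h'
        · exact absurd h' hu
    rw [h]
    exact hCclosed.isOpen_compl
  have hAmclopen : IsClopen (A m) := ⟨hAclosed m, hAmopen⟩
  have hAmuniv : A m = Set.univ := hAmclopen.eq_univ hmne
  have hdom : ∀ (v : EuclideanSpace ℝ (Fin 2)), ‖v‖ = 1 → ∀ j, f j v ≤ f m v := by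
    intro v hv j
    have hvsp : v ∈ sp := by rw [hsp, Metric.mem_sphere, dist_zero_right]; exact hv
    have hmem : (⟨v, hvsp⟩ : sp) ∈ A m := hAmuniv ▸ Set.mem_univ _
    exact hmem j
  have hKm : ∀ j, x j +ᵥ τ j • K ⊆ x m +ᵥ τ m • K := by
    intro j p hp
    by_contra hpm
    have hKmconv : Convex ℝ (x m +ᵥ τ m • K) := ((hKconv.smul _).vadd _)
    have hKmclosed : IsClosed (x m +ᵥ τ m • K) :=
      (Stmt11Aux.homothet_isCompact hKc _ _).isClosed
    obtain ⟨φ, s, hφ1, hφ2⟩ := geometric_hahn_banach_closed_point hKmconv hKmclosed hpm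
    set v := (InnerProductSpace.toDual ℝ (EuclideanSpace ℝ (Fin 2))).symm φ with hv
    have hvapp : ∀ w, ⟪v, w⟫ = φ w := fun w => InnerProductSpace.toDual_symm_apply
    obtain ⟨z₀, hz₀, hz₀e⟩ :=
      Stmt11Aux.homothet_exists_inner hKc hK0 (x m) (τ m) v
    have hvne : v ≠ 0 := by
      intro h0
      have hall : ∀ w, φ w = 0 := fun w => by rw [← hvapp w, h0, inner_zero_left]
      have h1 := hφ1 z₀ hz₀
      rw [hall z₀, hall p] at *
      linarith [hφ2]
    have hvn : ‖v‖ ≠ 0 := norm_ne_zero_iff.2 hvne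
    set w : EuclideanSpace ℝ (Fin 2) := ‖v‖⁻¹ • v with hw
    have hwn : ‖w‖ = 1 := by
      rw [hw, norm_smul, Real.norm_eq_abs, abs_of_nonneg (inv_nonneg.2 (norm_nonneg v)),
        inv_mul_cancel₀ hvn]
    have hjm := hdom w hwn j
    obtain ⟨z', hz', hz'e⟩ := Stmt11Aux.homothet_exists_inner hKc hK0 (x m) (τ m) w
    have hpw : ⟪p, w⟫ ≤ f j w := Stmt11Aux.homothet_inner_le hKc (hτ j).le w hp
    have hpwv : ⟪p, w⟫ = ‖v‖⁻¹ * φ p := by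
      rw [hw, real_inner_smul_right, real_inner_comm, hvapp]
    have hz'wv : ⟪z', w⟫ = ‖v‖⁻¹ * φ z' := by
      rw [hw, real_inner_smul_right, real_inner_comm, hvapp]
    have hlt : φ z' < φ p := lt_trans (hφ1 z' hz') hφ2
    have hvpos : 0 < ‖v‖⁻¹ := inv_pos.2 (norm_pos_iff.2 hvne)
    have : ⟪z', w⟫ < ⟪p, w⟫ := by
      rw [hpwv, hz'wv]
      exact mul_lt_mul_of_pos_left hlt hvpos
    have hfm : f m w = ⟪z', w⟫ := hz'e.symm
    have : f m w < f j w := by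
      calc f m w = ⟪z', w⟫ := hfm
        _ < ⟪p, w⟫ := this
        _ ≤ f j w := hpw
    linarith [hjm]
  refine ⟨m, Set.Subset.antisymm (Set.iUnion_subset hKm) ?_⟩
  exact Set.subset_iUnion (fun i => x i +ᵥ τ i • K) m
end

section
/- Let $K$ be a strictly convex body in $\mathbb{R}^d$, $d \ge 2$, let $0 \le k \le d-2$, and let $\mathcal{K} = \{K_i = x_i + \tau_i K : i=1,\dots,n\}$, $\tau_i > 0$, be a $k$-impassable family, i.e., every $k$-dimensional affine subspace intersecting $\mathrm{conv}\left(\bigcup\mathcal{K}\right)$ intersects some $K_i$. Then $\bigcup \mathcal{K} = K_{i^*}$ where $\tau_{i^*} = \max_i \tau_i$. -/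
open scoped Pointwise

open scoped RealInnerProductSpace

/-- In a strictly convex set, the maximizer of a nonzero linear functional is unique. -/
lemma aux_uniqueMax {E : Type*} [NormedAddCommGroup E] [InnerProductSpace ℝ E] {C : Set E}
    (hsc : StrictConvex ℝ C) {u y z : E} (hu : u ≠ 0) (hy : y ∈ C) (hz : z ∈ C)
    (hmy : ∀ w ∈ C, ⟪w, u⟫ ≤ ⟪y, u⟫) (hmz : ∀ w ∈ C, ⟪w, u⟫ ≤ ⟪z, u⟫) : y = z := by
  by_contra hyz
  have hm : (2⁻¹ : ℝ) • y + (2⁻¹ : ℝ) • z ∈ interior C :=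
    hsc hy hz hyz (by norm_num) (by norm_num) (by norm_num)
  set m := (2⁻¹ : ℝ) • y + (2⁻¹ : ℝ) • z with hmdef
  obtain ⟨δ, hδ, hball⟩ := Metric.mem_nhds_iff.mp (mem_interior_iff_mem_nhds.mp hm)
  have hun : (0:ℝ) < ‖u‖ := norm_pos_iff.mpr hu
  set w := m + (δ / (2 * ‖u‖)) • u with hwdef
  have hwC : w ∈ C := by
    apply hball
    have hd : dist w m = δ / (2 * ‖u‖) * ‖u‖ := by
      rw [hwdef, dist_eq_norm, add_sub_cancel_left, norm_smul, Real.norm_eq_abs,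
        abs_of_pos (by positivity)]
    have hval : δ / (2 * ‖u‖) * ‖u‖ = δ / 2 := by field_simp
    rw [Metric.mem_ball, hd, hval]
    linarith
  have hyzc : ⟪y, u⟫ = ⟪z, u⟫ := le_antisymm (hmz y hy) (hmy z hz)
  have h1 : ⟪w, u⟫ = ⟪y, u⟫ + (δ / (2 * ‖u‖)) * ‖u‖ ^ 2 := by
    rw [hwdef, inner_add_left, real_inner_smul_left, hmdef, inner_add_left,
      real_inner_smul_left, real_inner_smul_left, real_inner_self_eq_norm_sq, ← hyzc]
    ring
  have h2 : ⟪w, u⟫ ≤ ⟪y, u⟫ := hmy w hwC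
  have : 0 < (δ / (2 * ‖u‖)) * ‖u‖ ^ 2 := by positivity
  linarith

/-- A convex set contained in a finite set is a subsingleton. -/
lemma aux_convex_finite {E : Type*} [NormedAddCommGroup E] [NormedSpace ℝ E] {s t : Set E}
    (hs : Convex ℝ s) (hst : s ⊆ t) (ht : t.Finite) : s.Subsingleton := by
  intro a ha b hb
  by_contra hab
  have hinj : Set.InjOn (fun θ : ℝ => a + θ • (b - a)) (Set.Icc (0:ℝ) 1) := by
    intro θ1 _ θ2 _ h
    simp only at h
    have : θ1 • (b - a) = θ2 • (b - a) := by
      have := add_left_cancel h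
      exact this
    exact smul_left_injective ℝ (sub_ne_zero.mpr (Ne.symm hab)) this
  have hmaps : ∀ θ ∈ Set.Icc (0:ℝ) 1, a + θ • (b - a) ∈ s := by
    intro θ hθ
    exact hs.add_smul_sub_mem ha hb hθ
  have : (Set.Icc (0:ℝ) 1).Finite := by
    apply Set.Finite.of_finite_image _ hinj
    exact (ht.subset hst).subset (by rintro _ ⟨θ, hθ, rfl⟩; exact hmaps θ hθ)
  exact (Set.Icc_infinite (by norm_num : (0:ℝ) < 1)) this

/-- Given finitely many nonzero vectors, there is a vector not orthogonal to any of them. -/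
lemma aux_exists_inner_ne_zero {E : Type*} [NormedAddCommGroup E] [InnerProductSpace ℝ E]
    (F : Finset E) (hF : ∀ v ∈ F, v ≠ 0) : ∃ w : E, ∀ v ∈ F, ⟪v, w⟫ ≠ 0 := by
  classical
  induction F using Finset.induction with
  | empty => exact ⟨0, by simp⟩
  | @insert v S hvS ih =>
    obtain ⟨w, hw⟩ := ih (fun v' hv' => hF v' (Finset.mem_insert_of_mem hv'))
    have hv : v ≠ 0 := hF v (Finset.mem_insert_self v S)
    set bad : Set ℝ := (fun v' : E => -⟪v', w⟫ / ⟪v', v⟫) '' (insert v S : Finset E) with hbad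
    have hbadfin : bad.Finite := (Set.Finite.image _ (Finset.finite_toSet _))
    obtain ⟨ε, hε⟩ := (hbadfin.infinite_compl).nonempty
    refine ⟨w + ε • v, ?_⟩
    intro v' hv'
    rw [inner_add_right, real_inner_smul_right]
    by_cases hvv : ⟪v', v⟫ = 0
    · have hv'S : v' ∈ S := by
        rcases Finset.mem_insert.mp hv' with rfl | h
        · exact absurd (inner_self_eq_zero.mp hvv) hv
        · exact h
      simpa [hvv] using hw v' hv'S
    · intro hcontra
      have hval : -(⟪v', w⟫:ℝ) / ⟪v', v⟫ = ε := by field_simp; linarith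
      exact hε ⟨v', by simpa using hv', hval⟩

lemma aux_exists_flat (d k : ℕ) (hk : k + 2 ≤ d) (u : EuclideanSpace ℝ (Fin d)) (hu : u ≠ 0)
    (q : EuclideanSpace ℝ (Fin d)) (T : Set (EuclideanSpace ℝ (Fin d))) (hT : T.Finite)
    (hq : q ∉ T) :
    ∃ A : AffineSubspace ℝ (EuclideanSpace ℝ (Fin d)), Module.finrank ℝ A.direction = k ∧
      q ∈ A ∧ (∀ w ∈ A, ⟪w, u⟫ = ⟪q, u⟫) ∧ ∀ w ∈ A, w ∉ T := by
  classical
  have hdim : Module.finrank ℝ (EuclideanSpace ℝ (Fin d)) = d := finrank_euclideanSpace_fin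
  -- vectors to avoid
  set F : Finset (EuclideanSpace ℝ (Fin d)) := insert u ((hT.toFinset).image (fun t => t - q)) with hF
  have hFne : ∀ v ∈ F, v ≠ 0 := by
    intro v hv
    rcases Finset.mem_insert.mp hv with rfl | hv
    · exact hu
    · obtain ⟨t, ht, rfl⟩ := Finset.mem_image.mp hv
      rw [Set.Finite.mem_toFinset] at ht
      exact sub_ne_zero.mpr (by rintro rfl; exact hq ht)
  obtain ⟨w, hw⟩ := aux_exists_inner_ne_zero F hFne
  have hwne : w ≠ 0 := by
    rintro rfl
    exact hw u (Finset.mem_insert_self _ _) (inner_zero_right u)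
  -- the subspace M = u^⊥ ⊓ w^⊥ has finrank ≥ d - 2 ≥ k
  haveI : Fact (Module.finrank ℝ (EuclideanSpace ℝ (Fin d)) = (d - 1) + 1) :=
    ⟨by rw [hdim]; omega⟩
  have hdu : Module.finrank ℝ ((ℝ ∙ u)ᗮ : Submodule ℝ (EuclideanSpace ℝ (Fin d))) = d - 1 :=
    Submodule.finrank_orthogonal_span_singleton hu
  have hdw : Module.finrank ℝ ((ℝ ∙ w)ᗮ : Submodule ℝ (EuclideanSpace ℝ (Fin d))) = d - 1 :=
    Submodule.finrank_orthogonal_span_singleton hwne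
  set M : Submodule ℝ (EuclideanSpace ℝ (Fin d)) := (ℝ ∙ u)ᗮ ⊓ (ℝ ∙ w)ᗮ with hM
  have hMrank : k ≤ Module.finrank ℝ M := by
    have hsum := Submodule.finrank_sup_add_finrank_inf_eq ((ℝ ∙ u)ᗮ) ((ℝ ∙ w)ᗮ)
    have hle := Submodule.finrank_le (((ℝ ∙ u)ᗮ ⊔ (ℝ ∙ w)ᗮ : Submodule ℝ (EuclideanSpace ℝ (Fin d))))
    rw [hdim] at hle
    show k ≤ Module.finrank ℝ (((ℝ ∙ u)ᗮ ⊓ (ℝ ∙ w)ᗮ : Submodule ℝ (EuclideanSpace ℝ (Fin d))))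
    omega
  obtain ⟨s, hscard, hsli⟩ := exists_finset_linearIndependent_of_le_finrank hMrank
  set V : Submodule ℝ (EuclideanSpace ℝ (Fin d)) :=
    Submodule.span ℝ (Set.range fun i : s => ((i : M) : EuclideanSpace ℝ (Fin d))) with hV
  have hVM : V ≤ M := by
    rw [hV, Submodule.span_le]
    rintro _ ⟨i, rfl⟩
    exact (i : M).2
  have hVrank : Module.finrank ℝ V = k := by
    have hli2 : LinearIndependent ℝ (fun i : s => ((i : M) : EuclideanSpace ℝ (Fin d))) := by
      exact hsli.map' M.subtype (Submodule.ker_subtype M)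
    rw [hV, finrank_span_eq_card hli2]
    simpa using hscard
  refine ⟨AffineSubspace.mk' q V, ?_, AffineSubspace.self_mem_mk' q V, ?_, ?_⟩
  · rw [AffineSubspace.direction_mk']; exact hVrank
  · intro w' hw'
    have hv : w' - q ∈ V := by
      have := AffineSubspace.mem_mk'.mp hw'
      simpa using this
    have hvo : w' - q ∈ (ℝ ∙ u)ᗮ := (le_trans hVM inf_le_left) hv
    have : ⟪u, w' - q⟫ = 0 := (Submodule.mem_orthogonal _ _).mp hvo u (Submodule.mem_span_singleton_self u)
    have : ⟪w' - q, u⟫ = 0 := by rwa [real_inner_comm]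
    rw [inner_sub_left] at this
    linarith
  · intro w' hw' hw'T
    have hv : w' - q ∈ V := by
      have := AffineSubspace.mem_mk'.mp hw'
      simpa using this
    have hvo : w' - q ∈ (ℝ ∙ w)ᗮ := (le_trans hVM inf_le_right) hv
    have h0 : ⟪w, w' - q⟫ = 0 := (Submodule.mem_orthogonal _ _).mp hvo w (Submodule.mem_span_singleton_self w)
    have hmem : w' - q ∈ F := Finset.mem_insert_of_mem
      (Finset.mem_image.mpr ⟨w', (Set.Finite.mem_toFinset hT).mpr hw'T, rfl⟩)
    exact hw _ hmem (by rwa [real_inner_comm])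


set_option maxHeartbeats 1000000 in
/-- For a strictly convex body `K ⊆ ℝ^d` and a `k`-impassable family of positive homothets
with `0 ≤ k ≤ d - 2`, the union of the family equals the member with the largest
homothety ratio. -/
theorem stmt_12 (d k n : ℕ) (hd : 2 ≤ d) (hk : k + 2 ≤ d) (hn : 1 ≤ n)
    (K : Set (EuclideanSpace ℝ (Fin d)))
    (hKc : IsCompact K) (hKconv : Convex ℝ K) (hKint : (interior K).Nonempty)
    (hKsc : StrictConvex ℝ K)
    (x : Fin n → EuclideanSpace ℝ (Fin d)) (τ : Fin n → ℝ) (hτ : ∀ i, 0 < τ i)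
    (hIP : ∀ A : AffineSubspace ℝ (EuclideanSpace ℝ (Fin d)),
      Module.finrank ℝ A.direction = k →
      ((A : Set (EuclideanSpace ℝ (Fin d))) ∩ convexHull ℝ (⋃ i, x i +ᵥ τ i • K)).Nonempty →
      ∃ i, ((A : Set (EuclideanSpace ℝ (Fin d))) ∩ (x i +ᵥ τ i • K)).Nonempty) :
    ∃ i' : Fin n, (∀ i, τ i ≤ τ i') ∧ (⋃ i, x i +ᵥ τ i • K) = x i' +ᵥ τ i' • K := by
  classical
  haveI : Nonempty (Fin n) := Fin.pos_iff_nonempty.mp (by omega)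
  have hKne : K.Nonempty := hKint.mono interior_subset
  -- support point of K
  have hKmax : ∀ u : EuclideanSpace ℝ (Fin d), ∃ a, a ∈ K ∧ ∀ z ∈ K, ⟪z, u⟫ ≤ ⟪a, u⟫ := by
    intro u
    obtain ⟨a, haK, hmax⟩ := hKc.exists_isMaxOn hKne
      ((continuous_id.inner continuous_const).continuousOn
        (f := fun z : EuclideanSpace ℝ (Fin d) => (⟪z, u⟫ : ℝ)))
    exact ⟨a, haK, fun z hz => hmax hz⟩
  choose sK hsKmem hsKmax using hKmax
  -- membership characterization for the homothets
  have hKichar : ∀ (i : Fin n) (w : EuclideanSpace ℝ (Fin d)),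
      w ∈ x i +ᵥ τ i • K ↔ ∃ z ∈ K, w = x i + τ i • z := by
    intro i w
    simp only [Set.mem_vadd_set, Set.mem_smul_set, vadd_eq_add]
    constructor
    · rintro ⟨-, ⟨z, hz, rfl⟩, rfl⟩; exact ⟨z, hz, rfl⟩
    · rintro ⟨z, hz, rfl⟩; exact ⟨τ i • z, ⟨z, hz, rfl⟩, rfl⟩
  have hKicomp : ∀ i, IsCompact (x i +ᵥ τ i • K) := by
    intro i
    rw [← Set.image_vadd, ← Set.image_smul]
    exact (hKc.image (continuous_const_smul (τ i))).image (continuous_const_vadd (x i))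
  have hKisc : ∀ i, StrictConvex ℝ (x i +ᵥ τ i • K) := fun i => (hKsc.smul (τ i)).vadd (x i)
  have hKiconv : ∀ i, Convex ℝ (x i +ᵥ τ i • K) := fun i => (hKconv.smul (τ i)).vadd (x i)
  have hKisubC : ∀ i, (x i +ᵥ τ i • K) ⊆ convexHull ℝ (⋃ j, x j +ᵥ τ j • K) :=
    fun i => (Set.subset_iUnion (fun j => x j +ᵥ τ j • K) i).trans (subset_convexHull ℝ _)
  -- support functions
  set f : Fin n → EuclideanSpace ℝ (Fin d) → ℝ :=
    fun i u => ⟪x i, u⟫ + τ i * ⟪sK u, u⟫ with hf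
  set p : Fin n → EuclideanSpace ℝ (Fin d) → EuclideanSpace ℝ (Fin d) :=
    fun i u => x i + τ i • sK u with hp
  have hpmem : ∀ i u, p i u ∈ x i +ᵥ τ i • K := by
    intro i u; exact (hKichar i _).mpr ⟨sK u, hsKmem u, rfl⟩
  have hpval : ∀ i u, ⟪p i u, u⟫ = f i u := by
    intro i u
    simp only [hp, hf, inner_add_left, real_inner_smul_left]
  have hfub : ∀ (i : Fin n) (u : EuclideanSpace ℝ (Fin d)),
      ∀ w ∈ x i +ᵥ τ i • K, ⟪w, u⟫ ≤ f i u := by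
    intro i u w hw
    obtain ⟨z, hz, rfl⟩ := (hKichar i w).mp hw
    simp only [hf, inner_add_left, real_inner_smul_left]
    have := hsKmax u z hz
    nlinarith [hτ i]
  have hpmax : ∀ (i : Fin n) (u : EuclideanSpace ℝ (Fin d)),
      ∀ w ∈ x i +ᵥ τ i • K, ⟪w, u⟫ ≤ ⟪p i u, u⟫ := by
    intro i u w hw; rw [hpval]; exact hfub i u w hw
  -- upper bound over the convex hull
  have hC_ub : ∀ (i : Fin n) (u : EuclideanSpace ℝ (Fin d)), (∀ m, f m u ≤ f i u) →
      ∀ w ∈ convexHull ℝ (⋃ j, x j +ᵥ τ j • K), ⟪w, u⟫ ≤ f i u := by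
    intro i u hmax w hw
    have hsub : convexHull ℝ (⋃ j, x j +ᵥ τ j • K) ⊆ {w | ⟪w, u⟫ ≤ f i u} := by
      apply convexHull_min
      · intro w hw
        obtain ⟨j, hj⟩ := Set.mem_iUnion.mp hw
        exact le_trans (hfub j u w hj) (hmax j)
      · intro a ha b hb s t hs ht hst
        simp only [Set.mem_setOf_eq] at ha hb ⊢
        rw [inner_add_left, real_inner_smul_left, real_inner_smul_left]
        have hsum : s * f i u + t * f i u = f i u := by linear_combination (f i u) * hst
        linarith [mul_le_mul_of_nonneg_left ha hs, mul_le_mul_of_nonneg_left hb ht]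
    exact hsub hw
  -- Stage 1 : unique maximizer over the hull
  have hQ : ∀ u : EuclideanSpace ℝ (Fin d), u ≠ 0 →
      ∀ y ∈ convexHull ℝ (⋃ j, x j +ᵥ τ j • K), ∀ z ∈ convexHull ℝ (⋃ j, x j +ᵥ τ j • K),
      (∀ w ∈ convexHull ℝ (⋃ j, x j +ᵥ τ j • K), ⟪w, u⟫ ≤ ⟪y, u⟫) →
      (∀ w ∈ convexHull ℝ (⋃ j, x j +ᵥ τ j • K), ⟪w, u⟫ ≤ ⟪z, u⟫) → y = z := by
    intro u hu y hy z hz hmy hmz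
    have hyzc : ⟪z, u⟫ = ⟪y, u⟫ := le_antisymm (hmy z hz) (hmz y hy)
    set T : Set (EuclideanSpace ℝ (Fin d)) :=
      ⋃ m, ((x m +ᵥ τ m • K) ∩ {w | ⟪w, u⟫ = ⟪y, u⟫}) with hT
    have hTsub : ∀ m : Fin n, ((x m +ᵥ τ m • K) ∩ {w | ⟪w, u⟫ = ⟪y, u⟫}).Subsingleton := by
      intro m a ⟨haK, hac⟩ b ⟨hbK, hbc⟩
      simp only [Set.mem_setOf_eq] at hac hbc
      refine aux_uniqueMax (hKisc m) hu haK hbK ?_ ?_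
      · intro w hw; rw [hac]; exact le_trans (hmy w (hKisubC m hw)) le_rfl
      · intro w hw; rw [hbc]; exact le_trans (hmy w (hKisubC m hw)) le_rfl
    have hTfin : T.Finite := Set.finite_iUnion (fun m => (hTsub m).finite)
    have hQT : ∀ q ∈ convexHull ℝ (⋃ j, x j +ᵥ τ j • K), ⟪q, u⟫ = ⟪y, u⟫ → q ∈ T := by
      intro q hqC hqc
      by_contra hqT
      obtain ⟨A, hA, hqA, hAhyp, hAT⟩ := aux_exists_flat d k hk u hu q T hTfin hqT
      obtain ⟨m, r, hrA, hrK⟩ := hIP A hA ⟨q, hqA, hqC⟩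
      have hrc : ⟪r, u⟫ = ⟪y, u⟫ := by rw [hAhyp r hrA, hqc]
      exact hAT r hrA (Set.mem_iUnion.mpr ⟨m, hrK, hrc⟩)
    -- the maximizing face of the hull is convex and contained in the finite set T
    have hQconv : Convex ℝ ((convexHull ℝ (⋃ j, x j +ᵥ τ j • K)) ∩ {w | ⟪w, u⟫ = ⟪y, u⟫}) := by
      intro a ⟨haC, hac⟩ b ⟨hbC, hbc⟩ s t hs ht hst
      simp only [Set.mem_setOf_eq] at hac hbc
      constructor
      · exact (convex_convexHull ℝ _) haC hbC hs ht hst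
      · simp only [Set.mem_setOf_eq, inner_add_left, real_inner_smul_left, hac, hbc]
        linear_combination (inner ℝ y u : ℝ) * hst
    have hsub : ((convexHull ℝ (⋃ j, x j +ᵥ τ j • K)) ∩ {w | ⟪w, u⟫ = ⟪y, u⟫}) ⊆ T := by
      rintro q ⟨hqC, hqc⟩; exact hQT q hqC hqc
    have hss := aux_convex_finite hQconv hsub hTfin
    exact hss ⟨hy, rfl⟩ ⟨hz, hyzc⟩

  -- Stage 2 : connectedness of the sphere and the dominating body
  set A : Fin n → Set (EuclideanSpace ℝ (Fin d)) :=
    fun i => {u | ‖u‖ = 1 ∧ ∀ m, f m u ≤ f i u} with hA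
  obtain ⟨R, hR⟩ := hKc.isBounded.exists_norm_le
  have hsupcont : Continuous (fun u : EuclideanSpace ℝ (Fin d) => (⟪sK u, u⟫ : ℝ)) := by
    have hlip : ∀ u v : EuclideanSpace ℝ (Fin d),
        (⟪sK u, u⟫ : ℝ) - ⟪sK v, v⟫ ≤ (max R 0) * ‖u - v‖ := by
      intro u v
      have h1 : (⟪sK u, u⟫ : ℝ) = ⟪sK u, v⟫ + ⟪sK u, u - v⟫ := by
        rw [← inner_add_right]; congr 1; abel
      have h2 : (⟪sK u, v⟫ : ℝ) ≤ ⟪sK v, v⟫ := hsKmax v (sK u) (hsKmem u)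
      have h3 : (⟪sK u, u - v⟫ : ℝ) ≤ ‖sK u‖ * ‖u - v‖ := real_inner_le_norm _ _
      have h4 : ‖sK u‖ * ‖u - v‖ ≤ (max R 0) * ‖u - v‖ :=
        mul_le_mul_of_nonneg_right (le_trans (hR _ (hsKmem u)) (le_max_left _ _)) (norm_nonneg _)
      linarith
    refine (LipschitzWith.of_dist_le_mul
      (f := fun u : EuclideanSpace ℝ (Fin d) => (⟪sK u, u⟫ : ℝ))
      (K := ⟨max R 0, le_max_right _ _⟩) ?_).continuous
    intro u v
    rw [Real.dist_eq, dist_eq_norm, abs_sub_le_iff]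
    constructor
    · exact hlip u v
    · calc (⟪sK v, v⟫ : ℝ) - ⟪sK u, u⟫ ≤ (max R 0) * ‖v - u‖ := hlip v u
        _ = (max R 0) * ‖u - v‖ := by rw [norm_sub_rev]
  have hfcont : ∀ i, Continuous (f i) := by
    intro i
    simp only [hf]
    exact (continuous_const.inner continuous_id).add (continuous_const.mul hsupcont)
  have hAclosed : ∀ i, IsClosed (A i) := by
    intro i
    have hrepr : A i = {u : EuclideanSpace ℝ (Fin d) | ‖u‖ = 1} ∩
        ⋂ m, {u | f m u ≤ f i u} := by
      ext u; simp [hA, Set.mem_iInter, and_comm]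
    rw [hrepr]
    exact (isClosed_eq continuous_norm continuous_const).inter
      (isClosed_iInter fun m => isClosed_le (hfcont m) (hfcont i))
  have hcover : ∀ u : EuclideanSpace ℝ (Fin d), ‖u‖ = 1 → ∃ i, u ∈ A i := by
    intro u hu
    obtain ⟨i, hi⟩ := Finite.exists_max (fun i => f i u)
    exact ⟨i, hu, hi⟩
  -- comparability of active bodies
  have hfacta : ∀ (i j : Fin n) (u : EuclideanSpace ℝ (Fin d)), u ∈ A i → u ∈ A j →
      (∀ v, ‖v‖ = 1 → f i v ≤ f j v) ∨ (∀ v, ‖v‖ = 1 → f j v ≤ f i v) := by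
    intro i j u hui huj
    obtain ⟨hu1, humaxi⟩ := hui
    obtain ⟨-, humaxj⟩ := huj
    have hu0 : u ≠ 0 := fun h => by simp [h] at hu1
    have hpi : p i u = p j u := by
      refine hQ u hu0 _ (hKisubC i (hpmem i u)) _ (hKisubC j (hpmem j u)) ?_ ?_
      · intro w hw; rw [hpval]; exact hC_ub i u humaxi w hw
      · intro w hw; rw [hpval]; exact hC_ub j u humaxj w hw
    have hxx : x i - x j = (τ j - τ i) • sK u := by
      have heq : x i + τ i • sK u = x j + τ j • sK u := hpi
      rw [sub_smul]
      rw [sub_eq_sub_iff_add_eq_add]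
      rw [heq]; abel
    have hkey : ∀ v : EuclideanSpace ℝ (Fin d),
        f i v - f j v = (τ i - τ j) * ((⟪sK v, v⟫ : ℝ) - ⟪sK u, v⟫) := by
      intro v
      have hx : (⟪x i, v⟫ : ℝ) - ⟪x j, v⟫ = (τ j - τ i) * ⟪sK u, v⟫ := by
        rw [← inner_sub_left, hxx, real_inner_smul_left]
      simp only [hf]
      linear_combination hx
    have hnn : ∀ v : EuclideanSpace ℝ (Fin d), (0:ℝ) ≤ ⟪sK v, v⟫ - ⟪sK u, v⟫ :=
      fun v => sub_nonneg.mpr (hsKmax v _ (hsKmem u))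
    rcases le_total (τ i) (τ j) with h | h
    · left; intro v hv
      nlinarith [hkey v, mul_nonneg (sub_nonneg.mpr h) (hnn v)]
    · right; intro v hv
      nlinarith [hkey v, mul_nonneg (sub_nonneg.mpr h) (hnn v)]
  -- width argument
  obtain ⟨a0, ha0⟩ := hKint
  obtain ⟨ρ, hρ, hball0⟩ := Metric.mem_nhds_iff.mp (mem_interior_iff_mem_nhds.mp ha0)
  have hwid : ∀ v : EuclideanSpace ℝ (Fin d), ‖v‖ = 1 → ⟪a0, v⟫ + ρ/2 ≤ ⟪sK v, v⟫ := by
    intro v hv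
    have hmem : a0 + (ρ/2) • v ∈ K := by
      apply hball0
      rw [Metric.mem_ball, dist_eq_norm, add_sub_cancel_left, norm_smul, Real.norm_eq_abs,
        abs_of_pos (by positivity), hv, mul_one]
      linarith
    have hle := hsKmax v _ hmem
    rw [inner_add_left, real_inner_smul_left] at hle
    have hvv : (⟪v, v⟫ : ℝ) = 1 := by rw [real_inner_self_eq_norm_sq, hv]; norm_num
    rw [hvv] at hle
    linarith
  obtain ⟨v0, hv0n⟩ : ∃ v0 : EuclideanSpace ℝ (Fin d), ‖v0‖ = 1 :=
    ⟨EuclideanSpace.single (⟨0, by omega⟩ : Fin d) (1:ℝ), by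
      simp [EuclideanSpace.norm_single]⟩
  have hwidth : ∀ i j : Fin n, (∀ v, ‖v‖ = 1 → f i v ≤ f j v) → τ i ≤ τ j := by
    intro i j hij
    have h1 := hij v0 hv0n
    have hneg : ‖-v0‖ = 1 := by rw [norm_neg, hv0n]
    have h2 := hij (-v0) hneg
    simp only [hf] at h1 h2
    rw [inner_neg_right (𝕜 := ℝ) (x := x i) (y := v0)] at h2
    rw [inner_neg_right (𝕜 := ℝ) (x := x j) (y := v0)] at h2
    have hw1 := hwid v0 hv0n
    have hw2 := hwid (-v0) hneg
    rw [inner_neg_right (𝕜 := ℝ) (x := a0) (y := v0)] at hw2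
    nlinarith [hτ i, hτ j, hρ, h1, h2, hw1, hw2]
  have hreq : ∀ i j : Fin n, (∀ v, ‖v‖ = 1 → f i v ≤ f j v) → τ j ≤ τ i →
      (∀ v, ‖v‖ = 1 → f j v ≤ f i v) := by
    intro i j hij hji
    have hττ : τ i = τ j := le_antisymm (hwidth i j hij) hji
    have hxij : x i = x j := by
      by_contra hne
      have hxs : x i - x j ≠ 0 := sub_ne_zero.mpr hne
      set v := ‖x i - x j‖⁻¹ • (x i - x j) with hv
      have hvn : ‖v‖ = 1 := by
        rw [hv, norm_smul, Real.norm_eq_abs, abs_of_pos (inv_pos.mpr (norm_pos_iff.mpr hxs)),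
          inv_mul_cancel₀ (norm_ne_zero_iff.mpr hxs)]
      have hle := hij v hvn
      simp only [hf, hττ] at hle
      have h2 : (⟪x i - x j, v⟫ : ℝ) ≤ 0 := by rw [inner_sub_left]; linarith
      rw [hv, real_inner_smul_right, real_inner_self_eq_norm_sq] at h2
      have hpos : (0:ℝ) < ‖x i - x j‖⁻¹ * ‖x i - x j‖ ^ 2 :=
        mul_pos (inv_pos.mpr (norm_pos_iff.mpr hxs)) (pow_pos (norm_pos_iff.mpr hxs) 2)
      linarith
    intro v hv
    simp only [hf, hττ, hxij]
    exact le_rfl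
  -- choose the active index with the largest ratio
  obtain ⟨i0, hi0⟩ := hcover v0 hv0n
  set act : Finset (Fin n) := Finset.univ.filter (fun i => (A i).Nonempty) with hact
  have hactne : act.Nonempty := by
    refine ⟨i0, ?_⟩
    simp only [hact, Finset.mem_filter, Finset.mem_univ, true_and]
    exact ⟨v0, hi0⟩
  obtain ⟨i', hi'act, hi'max⟩ := act.exists_max_image τ hactne
  have hi'A : (A i').Nonempty := by
    simpa only [hact, Finset.mem_filter, Finset.mem_univ, true_and] using hi'act
  have hτmaxact : ∀ j : Fin n, (A j).Nonempty → τ j ≤ τ i' := by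
    intro j hj
    exact hi'max j (by simp only [hact, Finset.mem_filter, Finset.mem_univ, true_and]; exact hj)
  have hri' : ∀ v, ‖v‖ = 1 → f i' v ≤ f i' v := fun v _ => le_rfl
  have hdisj : ∀ (j j' : Fin n) (u : EuclideanSpace ℝ (Fin d)), u ∈ A j →
      (∀ v, ‖v‖ = 1 → f j v ≤ f i' v) → u ∈ A j' →
      ¬(∀ v, ‖v‖ = 1 → f j' v ≤ f i' v) → False := by
    intro j j' u huj hj huj' hj'
    have hui' : u ∈ A i' := ⟨huj.1, fun m => le_trans (huj.2 m) (hj u huj.1)⟩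
    rcases hfacta i' j' u hui' huj' with h | h
    · exact hj' (hreq i' j' h (hτmaxact j' ⟨u, huj'⟩))
    · exact hj' h
  -- all active bodies are dominated by i'
  have hBempty : ∀ j : Fin n, ¬(∀ v, ‖v‖ = 1 → f j v ≤ f i' v) → A j = ∅ := by
    intro j hj
    by_contra hne
    obtain ⟨u1, hu1⟩ := Set.nonempty_iff_ne_empty.mpr hne
    set Bg : Set (EuclideanSpace ℝ (Fin d)) :=
      ⋃ m : {m : Fin n // ∀ v, ‖v‖ = 1 → f m v ≤ f i' v}, A m with hBg
    set Bb : Set (EuclideanSpace ℝ (Fin d)) :=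
      ⋃ m : {m : Fin n // ¬ ∀ v, ‖v‖ = 1 → f m v ≤ f i' v}, A m with hBb
    have hBgclosed : IsClosed Bg := isClosed_iUnion_of_finite (fun m => hAclosed m)
    have hBbclosed : IsClosed Bb := isClosed_iUnion_of_finite (fun m => hAclosed m)
    have hdisj2 : ∀ w, w ∈ Bg → w ∈ Bb → False := by
      intro w hwg hwb
      obtain ⟨⟨m, hm⟩, hwm⟩ := Set.mem_iUnion.mp hwg
      obtain ⟨⟨m', hm'⟩, hwm'⟩ := Set.mem_iUnion.mp hwb
      exact hdisj m m' w hwm hm hwm' hm'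
    have hsubS : Metric.sphere (0 : EuclideanSpace ℝ (Fin d)) 1 ⊆ Bg ∪ Bb := by
      intro w hw
      rw [mem_sphere_zero_iff_norm] at hw
      obtain ⟨m, hm⟩ := hcover w hw
      by_cases hrm : ∀ v, ‖v‖ = 1 → f m v ≤ f i' v
      · exact Or.inl (Set.mem_iUnion.mpr ⟨⟨m, hrm⟩, hm⟩)
      · exact Or.inr (Set.mem_iUnion.mpr ⟨⟨m, hrm⟩, hm⟩)
    have hconn : IsPreconnected (Metric.sphere (0 : EuclideanSpace ℝ (Fin d)) 1) := by
      refine (isConnected_sphere ?_ 0 zero_le_one).isPreconnected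
      have hfr : Module.finrank ℝ (EuclideanSpace ℝ (Fin d)) = d := finrank_euclideanSpace_fin
      have := Module.finrank_eq_rank (R := ℝ) (M := EuclideanSpace ℝ (Fin d))
      rw [hfr] at this
      rw [← this]
      exact_mod_cast (by omega : 1 < d)
    obtain ⟨u2, hu2⟩ := hi'A
    have hgne : (Metric.sphere (0:EuclideanSpace ℝ (Fin d)) 1 ∩ Bbᶜ).Nonempty := by
      refine ⟨u2, ?_, ?_⟩
      · rw [mem_sphere_zero_iff_norm]; exact hu2.1
      · intro hcon; exact hdisj2 u2 (Set.mem_iUnion.mpr ⟨⟨i', hri'⟩, hu2⟩) hcon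
    have hbne : (Metric.sphere (0:EuclideanSpace ℝ (Fin d)) 1 ∩ Bgᶜ).Nonempty := by
      refine ⟨u1, ?_, ?_⟩
      · rw [mem_sphere_zero_iff_norm]; exact hu1.1
      · intro hcon; exact hdisj2 u1 hcon (Set.mem_iUnion.mpr ⟨⟨j, hj⟩, hu1⟩)
    obtain ⟨w, hws, hwmem⟩ := hconn Bbᶜ Bgᶜ hBbclosed.isOpen_compl hBgclosed.isOpen_compl
      (by
        intro w hw
        by_cases hwb : w ∈ Bb
        · by_cases hwg : w ∈ Bg
          · exact absurd (hdisj2 w hwg hwb) not_false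
          · exact Or.inr hwg
        · exact Or.inl hwb) hgne hbne
    rcases hsubS hws with hcase | hcase
    · exact hwmem.2 hcase
    · exact hwmem.1 hcase
  have hdom : ∀ (i : Fin n) (v : EuclideanSpace ℝ (Fin d)), ‖v‖ = 1 → f i v ≤ f i' v := by
    intro i v hv
    obtain ⟨m, hm⟩ := hcover v hv
    by_cases hrm : ∀ v, ‖v‖ = 1 → f m v ≤ f i' v
    · exact le_trans (hm.2 i) (hrm v hv)
    · rw [hBempty m hrm] at hm; exact absurd hm (Set.notMem_empty v)
  -- conclusion
  refine ⟨i', fun i => hwidth i i' (hdom i), ?_⟩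
  apply Set.Subset.antisymm
  · apply Set.iUnion_subset
    intro i w hw
    by_contra hwn
    obtain ⟨φ, c, hφ1, hφ2⟩ :=
      geometric_hahn_banach_closed_point (hKiconv i') ((hKicomp i').isClosed) hwn
    set v := (InnerProductSpace.toDual ℝ (EuclideanSpace ℝ (Fin d))).symm φ with hv
    have hφv : ∀ z : EuclideanSpace ℝ (Fin d), (⟪v, z⟫ : ℝ) = φ z := fun z =>
      InnerProductSpace.toDual_symm_apply (x := z) (y := φ)
    have hvne : v ≠ 0 := by
      intro h
      have h1 := hφ1 _ (hpmem i' 0)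
      have h2 : φ (p i' 0) = 0 := by rw [← hφv, h]; exact inner_zero_left _
      have h3 : φ w = 0 := by rw [← hφv, h]; exact inner_zero_left _
      linarith
    set v1 := ‖v‖⁻¹ • v with hv1
    have hv1n : ‖v1‖ = 1 := by
      rw [hv1, norm_smul, Real.norm_eq_abs, abs_of_pos (inv_pos.mpr (norm_pos_iff.mpr hvne)),
        inv_mul_cancel₀ (norm_ne_zero_iff.mpr hvne)]
    have hvpos : (0:ℝ) < ‖v‖⁻¹ := inv_pos.mpr (norm_pos_iff.mpr hvne)
    have hinner : ∀ z : EuclideanSpace ℝ (Fin d), (⟪z, v1⟫ : ℝ) = ‖v‖⁻¹ * φ z := by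
      intro z
      rw [hv1, real_inner_smul_right, real_inner_comm, hφv]
    have hA1 : f i' v1 < ‖v‖⁻¹ * c := by
      rw [← hpval i' v1, hinner]
      exact mul_lt_mul_of_pos_left (hφ1 _ (hpmem i' v1)) hvpos
    have hA2 : ‖v‖⁻¹ * c < (⟪w, v1⟫ : ℝ) := by
      rw [hinner]
      exact mul_lt_mul_of_pos_left hφ2 hvpos
    have hA3 : (⟪w, v1⟫ : ℝ) ≤ f i v1 := hfub i v1 w hw
    have hA4 := hdom i v1 hv1n
    exact lt_irrefl _ (lt_trans hA1 (lt_of_lt_of_le hA2 (le_trans hA3 hA4)))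
  · exact Set.subset_iUnion (fun j => x j +ᵥ τ j • K) i'
end

section
/- Let $K_1 = x_1 + \tau_1 K$ and $K_2 = x_2 + \tau_2 K$ be positive homothets of a convex body $K$ in $\mathbb{R}^2$ whose union $K_1 \cup K_2$ is convex and such that neither is contained in the other. If $\tau_1 = \tau_2$ (they are translates) and $p$ is a boundary point of $K_1 \cup K_2$ lying in $K_1 \cap K_2$, then the translation vector $x_2 - x_1$ is parallel to every supporting line of $K_1 \cup K_2$ at $p$. -/
open scoped Pointwise RealInnerProductSpace

/-- If `K₁ = x₁ + τ • K` and `K₂ = x₂ + τ • K` are translates of a positive homothet of a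
plane convex body `K` with convex union, neither contained in the other, and `p` is a
boundary point of the union lying in `K₁ ∩ K₂`, then `x₂ - x₁` is parallel to every
supporting line of the union at `p` (i.e. orthogonal to every outer normal at `p`). -/
theorem stmt_15 (K : Set (EuclideanSpace ℝ (Fin 2)))
    (hKc : IsCompact K) (hKconv : Convex ℝ K) (hKint : (interior K).Nonempty)
    (x₁ x₂ : EuclideanSpace ℝ (Fin 2)) (τ : ℝ) (hτ : 0 < τ)
    (hconv : Convex ℝ ((x₁ +ᵥ τ • K) ∪ (x₂ +ᵥ τ • K)))
    (h12 : ¬ (x₁ +ᵥ τ • K) ⊆ (x₂ +ᵥ τ • K)) (h21 : ¬ (x₂ +ᵥ τ • K) ⊆ (x₁ +ᵥ τ • K))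
    (p : EuclideanSpace ℝ (Fin 2))
    (hpbd : p ∈ frontier ((x₁ +ᵥ τ • K) ∪ (x₂ +ᵥ τ • K)))
    (hpmem : p ∈ (x₁ +ᵥ τ • K) ∩ (x₂ +ᵥ τ • K)) :
    ∀ u : EuclideanSpace ℝ (Fin 2), u ≠ 0 →
      (∀ z ∈ (x₁ +ᵥ τ • K) ∪ (x₂ +ᵥ τ • K), ⟪u, z⟫ ≤ ⟪u, p⟫) →
      ⟪u, x₂ - x₁⟫ = 0 := by
  intro u _ hu
  obtain ⟨hp1, hp2⟩ := hpmem
  rw [Set.mem_vadd_set_iff_neg_vadd_mem] at hp1 hp2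
  have h1 : p + (x₂ - x₁) ∈ (x₂ +ᵥ τ • K) := by
    rw [Set.mem_vadd_set_iff_neg_vadd_mem]
    convert hp1 using 1
    simp [vadd_eq_add]
    abel
  have h2 : p - (x₂ - x₁) ∈ (x₁ +ᵥ τ • K) := by
    rw [Set.mem_vadd_set_iff_neg_vadd_mem]
    convert hp2 using 1
    simp [vadd_eq_add]
    abel
  have e1 := hu _ (Or.inr h1)
  have e2 := hu _ (Or.inl h2)
  rw [inner_add_right] at e1
  rw [inner_sub_right] at e2
  linarith
end

section
/- Place three unit-side regular triangles $T_1, T_2, T_3$ inside a regular triangle $T$ of side length $2 + \frac{2}{\sqrt 3}$ so that each side of $T$ contains a side of one $T_i$, the vertices of $T_i$ on that side dividing it into segments of lengths $\frac{2}{3}+\frac{1}{\sqrt 3}$, $1$, $\frac{1}{3}+\frac{1}{\sqrt 3}$ in counterclockwise order. Then for each pair $i \neq j$, the convex hull $\mathrm{conv}(T_i \cup T_j)$ intersects the remaining triangle $T_k$ ($\{i,j,k\}=\{1,2,3\}$); consequently $\{T_1,T_2,T_3\}$ is a non-separable family, but the smallest homothet of $T$ containing $T_1 \cup T_2 \cup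 T_3$ has homothety ratio $\frac{2}{3}+\frac{2}{3\sqrt 3} > 1$ times the sum $3$ of the homothety ratios. -/
open scoped Pointwise

noncomputable section

/-- Side length of the big regular triangle. -/
def GG.s : ℝ := 2 + 2 / Real.sqrt 3

/-- First subdivision length on each side. -/
def GG.a : ℝ := 2 / 3 + 1 / Real.sqrt 3

/-- The big regular triangle `T` with vertices `(0,0)`, `(s,0)`, `(s/2, s√3/2)`. -/
def GG.T : Set (ℝ × ℝ) :=
  convexHull ℝ {(0, 0), (GG.s, 0), (GG.s / 2, GG.s * Real.sqrt 3 / 2)}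

/-- The unit regular triangle on the side from `(0,0)` to `(s,0)`. -/
def GG.T1 : Set (ℝ × ℝ) :=
  convexHull ℝ {(GG.a, 0), (GG.a + 1, 0), (GG.a + 1 / 2, Real.sqrt 3 / 2)}

/-- The unit regular triangle on the side from `(s,0)` to `(s/2, s√3/2)`. -/
def GG.T2 : Set (ℝ × ℝ) :=
  convexHull ℝ {(GG.s - GG.a / 2, GG.a * Real.sqrt 3 / 2),
    (GG.s - (GG.a + 1) / 2, (GG.a + 1) * Real.sqrt 3 / 2),
    (GG.s - GG.a / 2 - 1, GG.a * Real.sqrt 3 / 2)}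

/-- The unit regular triangle on the side from `(s/2, s√3/2)` to `(0,0)`. -/
def GG.T3 : Set (ℝ × ℝ) :=
  convexHull ℝ {((GG.s - GG.a) / 2, (GG.s - GG.a) * Real.sqrt 3 / 2),
    ((GG.s - GG.a - 1) / 2, (GG.s - GG.a - 1) * Real.sqrt 3 / 2),
    ((GG.s - GG.a) / 2 + 1 / 2, (GG.s - GG.a) * Real.sqrt 3 / 2 - Real.sqrt 3 / 2)}

namespace GGaux

lemma hr : Real.sqrt 3 * Real.sqrt 3 = 3 := Real.mul_self_sqrt (by norm_num)

lemma hpos : 0 < Real.sqrt 3 := Real.sqrt_pos.mpr (by norm_num)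

lemma hlt2 : Real.sqrt 3 < 2 := by nlinarith [hr, hpos]

lemma h1lt : 1 < Real.sqrt 3 := by nlinarith [hr, hpos]

lemma hinv : (Real.sqrt 3)⁻¹ = Real.sqrt 3 * (3 : ℝ)⁻¹ := by
  rw [inv_eq_one_div, div_eq_iff hpos.ne']
  linear_combination (-1/3) * hr

lemma mem3 {u v w : ℝ × ℝ} {a b c : ℝ} (ha : 0 ≤ a) (hb : 0 ≤ b) (hc : 0 ≤ c)
    (habc : a + b + c = 1) :
    a • u + b • v + c • w ∈ convexHull ℝ ({u, v, w} : Set (ℝ × ℝ)) := by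
  have h₀ : ∀ i ∈ (Finset.univ : Finset (Fin 3)), 0 ≤ ![a, b, c] i := by
    intro i _; fin_cases i <;> simpa
  have h₁ : ∑ i, ![a, b, c] i = 1 := by
    simpa [Fin.sum_univ_three] using habc
  have hz : ∀ i ∈ (Finset.univ : Finset (Fin 3)),
      ![u, v, w] i ∈ convexHull ℝ ({u, v, w} : Set (ℝ × ℝ)) := by
    intro i _; fin_cases i <;> exact subset_convexHull ℝ _ (by simp)
  have := (convex_convexHull ℝ ({u, v, w} : Set (ℝ × ℝ))).sum_mem h₀ h₁ hz
  simpa [Fin.sum_univ_three, add_assoc] using this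

lemma lin (α β : ℝ) : IsLinearMap ℝ (fun y : ℝ × ℝ => α * y.1 + β * y.2) :=
  ⟨fun x y => by simp only [Prod.fst_add, Prod.snd_add]; ring,
   fun c x => by simp only [Prod.smul_fst, Prod.smul_snd, smul_eq_mul]; ring⟩

lemma halfspace_lt (α β c : ℝ) : Convex ℝ {y : ℝ × ℝ | α * y.1 + β * y.2 < c} :=
  convex_halfSpace_lt (lin α β) c

lemma halfspace_le (α β c : ℝ) : Convex ℝ {y : ℝ × ℝ | α * y.1 + β * y.2 ≤ c} :=
  convex_halfSpace_le (lin α β) c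

lemma hull3_le {u v w : ℝ × ℝ} (α β m : ℝ) (hu : α * u.1 + β * u.2 ≤ m)
    (hv : α * v.1 + β * v.2 ≤ m) (hw : α * w.1 + β * w.2 ≤ m) {x : ℝ × ℝ}
    (hx : x ∈ convexHull ℝ ({u, v, w} : Set (ℝ × ℝ))) : α * x.1 + β * x.2 ≤ m := by
  refine convexHull_min ?_ (halfspace_le α β m) hx
  intro p hp
  simp only [Set.mem_insert_iff, Set.mem_singleton_iff] at hp
  rcases hp with rfl | rfl | rfl <;> assumption

lemma side3 {α β c : ℝ} {v₁ v₂ v₃ : ℝ × ℝ}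
    (h : ¬ ({y : ℝ × ℝ | α * y.1 + β * y.2 = c} ∩
      convexHull ℝ ({v₁, v₂, v₃} : Set (ℝ × ℝ))).Nonempty) :
    (∀ x ∈ convexHull ℝ ({v₁, v₂, v₃} : Set (ℝ × ℝ)), α * x.1 + β * x.2 < c) ∨
      (∀ x ∈ convexHull ℝ ({v₁, v₂, v₃} : Set (ℝ × ℝ)), c < α * x.1 + β * x.2) := by
  have hne : ∀ x ∈ convexHull ℝ ({v₁, v₂, v₃} : Set (ℝ × ℝ)), α * x.1 + β * x.2 ≠ c := by
    intro x hx hcx; exact h ⟨x, hcx, hx⟩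
  have cross : ∀ p ∈ convexHull ℝ ({v₁, v₂, v₃} : Set (ℝ × ℝ)),
      ∀ q ∈ convexHull ℝ ({v₁, v₂, v₃} : Set (ℝ × ℝ)),
      α * p.1 + β * p.2 < c → c < α * q.1 + β * q.2 → False := by
    intro p hp q hq hpc hqc
    have hd : 0 < (α * q.1 + β * q.2) - (α * p.1 + β * p.2) := by linarith
    set t : ℝ := (c - (α * p.1 + β * p.2)) / ((α * q.1 + β * q.2) - (α * p.1 + β * p.2))
      with htdef
    have ht0 : 0 ≤ t := div_nonneg (by linarith) hd.le
    have ht1 : t ≤ 1 := by rw [htdef, div_le_one hd]; linarith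
    have hxmem : (1 - t) • p + t • q ∈ convexHull ℝ ({v₁, v₂, v₃} : Set (ℝ × ℝ)) :=
      (convex_convexHull ℝ _) hp hq (by linarith) ht0 (by ring)
    apply hne _ hxmem
    have hc : t * ((α * q.1 + β * q.2) - (α * p.1 + β * p.2))
        = c - (α * p.1 + β * p.2) := by
      rw [htdef]; exact div_mul_cancel₀ _ hd.ne'
    simp only [Prod.fst_add, Prod.snd_add, Prod.smul_fst, Prod.smul_snd, smul_eq_mul]
    linear_combination hc
  have hv1 : v₁ ∈ convexHull ℝ ({v₁, v₂, v₃} : Set (ℝ × ℝ)) := subset_convexHull ℝ _ (by simp)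
  have hv2 : v₂ ∈ convexHull ℝ ({v₁, v₂, v₃} : Set (ℝ × ℝ)) := subset_convexHull ℝ _ (by simp)
  have hv3 : v₃ ∈ convexHull ℝ ({v₁, v₂, v₃} : Set (ℝ × ℝ)) := subset_convexHull ℝ _ (by simp)
  rcases lt_trichotomy (α * v₁.1 + β * v₁.2) c with h1 | h1 | h1
  · left
    have h2 : α * v₂.1 + β * v₂.2 < c := by
      rcases lt_trichotomy (α * v₂.1 + β * v₂.2) c with h' | h' | h'
      · exact h'
      · exact absurd h' (hne _ hv2)
      · exact (cross v₁ hv1 v₂ hv2 h1 h').elim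
    have h3 : α * v₃.1 + β * v₃.2 < c := by
      rcases lt_trichotomy (α * v₃.1 + β * v₃.2) c with h' | h' | h'
      · exact h'
      · exact absurd h' (hne _ hv3)
      · exact (cross v₁ hv1 v₃ hv3 h1 h').elim
    intro x hx
    refine convexHull_min ?_ (halfspace_lt α β c) hx
    intro p hp
    simp only [Set.mem_insert_iff, Set.mem_singleton_iff] at hp
    rcases hp with rfl | rfl | rfl <;> assumption
  · exact absurd h1 (hne _ hv1)
  · right
    have h2 : c < α * v₂.1 + β * v₂.2 := by
      rcases lt_trichotomy (α * v₂.1 + β * v₂.2) c with h' | h' | h'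
      · exact (cross v₂ hv2 v₁ hv1 h' h1).elim
      · exact absurd h' (hne _ hv2)
      · exact h'
    have h3 : c < α * v₃.1 + β * v₃.2 := by
      rcases lt_trichotomy (α * v₃.1 + β * v₃.2) c with h' | h' | h'
      · exact (cross v₃ hv3 v₁ hv1 h' h1).elim
      · exact absurd h' (hne _ hv3)
      · exact h'
    intro x hx
    have hsub : convexHull ℝ ({v₁, v₂, v₃} : Set (ℝ × ℝ)) ⊆
        {y : ℝ × ℝ | -α * y.1 + -β * y.2 < -c} := by
      refine convexHull_min ?_ (halfspace_lt (-α) (-β) (-c))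
      intro p hp
      simp only [Set.mem_insert_iff, Set.mem_singleton_iff] at hp
      rcases hp with rfl | rfl | rfl <;> simp only [Set.mem_setOf_eq] <;> linarith
    have := hsub hx
    simp only [Set.mem_setOf_eq] at this
    linarith

lemma sep12 {α β c : ℝ} {S1 S2 S3 : Set (ℝ × ℝ)}
    (hS : (convexHull ℝ (S1 ∪ S2) ∩ S3).Nonempty)
    (h1 : ∀ x ∈ S1, α * x.1 + β * x.2 < c) (h2 : ∀ x ∈ S2, α * x.1 + β * x.2 < c)
    (h3 : ∀ x ∈ S3, c < α * x.1 + β * x.2) : False := by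
  obtain ⟨p, hp, hp3⟩ := hS
  have hlt : α * p.1 + β * p.2 < c := by
    have hsub : convexHull ℝ (S1 ∪ S2) ⊆ {y : ℝ × ℝ | α * y.1 + β * y.2 < c} :=
      convexHull_min (Set.union_subset h1 h2) (halfspace_lt α β c)
    exact hsub hp
  linarith [h3 p hp3]

lemma mem_vadd_smul {z x y : ℝ × ℝ} {σ : ℝ} {S : Set (ℝ × ℝ)} (hy : y ∈ S)
    (hx : z + σ • y = x) : x ∈ z +ᵥ σ • S :=
  Set.mem_vadd_set.mpr ⟨σ • y, Set.smul_mem_smul_set hy, hx⟩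

end GGaux


set_option maxHeartbeats 1000000 in
/-- The Goodman–Goodman counterexample: the three unit triangles `T1, T2, T3` placed in the
regular triangle of side `2 + 2/√3` are such that the convex hull of any two of them meets
the third; consequently they form a non-separable family, yet the smallest homothet of the
unit triangle containing their union has ratio `3 · (2/3 + 2/(3√3))`, and
`2/3 + 2/(3√3) > 1`. -/
theorem stmt_16 :
    ((convexHull ℝ (GG.T1 ∪ GG.T2) ∩ GG.T3).Nonempty ∧
      (convexHull ℝ (GG.T2 ∪ GG.T3) ∩ GG.T1).Nonempty ∧
      (convexHull ℝ (GG.T1 ∪ GG.T3) ∩ GG.T2).Nonempty) ∧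
    (∀ (u : ℝ × ℝ) (c : ℝ), u ≠ 0 →
      ({y : ℝ × ℝ | u.1 * y.1 + u.2 * y.2 = c} ∩
          convexHull ℝ (GG.T1 ∪ GG.T2 ∪ GG.T3)).Nonempty →
      ({y : ℝ × ℝ | u.1 * y.1 + u.2 * y.2 = c} ∩ GG.T1).Nonempty ∨
        ({y : ℝ × ℝ | u.1 * y.1 + u.2 * y.2 = c} ∩ GG.T2).Nonempty ∨
        ({y : ℝ × ℝ | u.1 * y.1 + u.2 * y.2 = c} ∩ GG.T3).Nonempty) ∧
    (∃ z : ℝ × ℝ,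
      GG.T1 ∪ GG.T2 ∪ GG.T3 ⊆ z +ᵥ ((2 / 3 + 2 / (3 * Real.sqrt 3)) * 3) • GG.T1) ∧
    (∀ σ : ℝ, 0 < σ → (∃ z : ℝ × ℝ, GG.T1 ∪ GG.T2 ∪ GG.T3 ⊆ z +ᵥ σ • GG.T1) →
      (2 / 3 + 2 / (3 * Real.sqrt 3)) * 3 ≤ σ) ∧
    1 < 2 / 3 + 2 / (3 * Real.sqrt 3) := by
  -- vertex memberships
  have hA1 : ((GG.a, 0) : ℝ × ℝ) ∈ GG.T1 := by
    unfold GG.T1; exact subset_convexHull ℝ _ (by simp)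
  have hC1 : ((GG.a + 1 / 2, Real.sqrt 3 / 2) : ℝ × ℝ) ∈ GG.T1 := by
    unfold GG.T1; exact subset_convexHull ℝ _ (by simp)
  have hP2 : ((GG.s - GG.a / 2, GG.a * Real.sqrt 3 / 2) : ℝ × ℝ) ∈ GG.T2 := by
    unfold GG.T2; exact subset_convexHull ℝ _ (by simp)
  have hR2 : ((GG.s - GG.a / 2 - 1, GG.a * Real.sqrt 3 / 2) : ℝ × ℝ) ∈ GG.T2 := by
    unfold GG.T2; exact subset_convexHull ℝ _ (by simp)
  have hP3 : (((GG.s - GG.a) / 2, (GG.s - GG.a) * Real.sqrt 3 / 2) : ℝ × ℝ) ∈ GG.T3 := by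
    unfold GG.T3; exact subset_convexHull ℝ _ (by simp)
  have hR3 : (((GG.s - GG.a) / 2 + 1 / 2,
      (GG.s - GG.a) * Real.sqrt 3 / 2 - Real.sqrt 3 / 2) : ℝ × ℝ) ∈ GG.T3 := by
    unfold GG.T3; exact subset_convexHull ℝ _ (by simp)
  have hc20 : (0 : ℝ) ≤ 2 - Real.sqrt 3 := by linarith [GGaux.hlt2]
  have hc10 : (0 : ℝ) ≤ Real.sqrt 3 - 1 := by linarith [GGaux.h1lt]
  -- fact1
  have fact1 : (convexHull ℝ (GG.T1 ∪ GG.T2) ∩ GG.T3).Nonempty := by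
    have hcomb := (convex_convexHull ℝ (GG.T1 ∪ GG.T2))
      (subset_convexHull ℝ _ (Set.mem_union_left _ hA1))
      (subset_convexHull ℝ _ (Set.mem_union_right _ hR2)) hc20 hc10 (by ring)
    have he : (2 - Real.sqrt 3) • ((GG.a, 0) : ℝ × ℝ) +
        (Real.sqrt 3 - 1) • ((GG.s - GG.a / 2 - 1, GG.a * Real.sqrt 3 / 2) : ℝ × ℝ) =
        (((GG.s - GG.a) / 2 + 1 / 2,
          (GG.s - GG.a) * Real.sqrt 3 / 2 - Real.sqrt 3 / 2) : ℝ × ℝ) := by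
      simp only [Prod.smul_mk, Prod.mk_add_mk, smul_eq_mul, Prod.mk.injEq]
      constructor
      · simp only [GG.s, GG.a, div_eq_mul_inv, mul_inv, GGaux.hinv]
        linear_combination (1/6) * GGaux.hr
      · simp only [GG.s, GG.a, div_eq_mul_inv, mul_inv, GGaux.hinv]
        linear_combination (1/6 * Real.sqrt 3) * GGaux.hr
    rw [he] at hcomb
    exact ⟨_, hcomb, hR3⟩
  -- fact2
  have fact2 : (convexHull ℝ (GG.T2 ∪ GG.T3) ∩ GG.T1).Nonempty := by
    have hcomb := (convex_convexHull ℝ (GG.T2 ∪ GG.T3))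
      (subset_convexHull ℝ _ (Set.mem_union_left _ hP2))
      (subset_convexHull ℝ _ (Set.mem_union_right _ hR3)) hc20 hc10 (by ring)
    have he : (2 - Real.sqrt 3) • ((GG.s - GG.a / 2, GG.a * Real.sqrt 3 / 2) : ℝ × ℝ) +
        (Real.sqrt 3 - 1) • (((GG.s - GG.a) / 2 + 1 / 2,
          (GG.s - GG.a) * Real.sqrt 3 / 2 - Real.sqrt 3 / 2) : ℝ × ℝ) =
        ((GG.a + 1 / 2, Real.sqrt 3 / 2) : ℝ × ℝ) := by
      simp only [Prod.smul_mk, Prod.mk_add_mk, smul_eq_mul, Prod.mk.injEq]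
      constructor
      · simp only [GG.s, GG.a, div_eq_mul_inv, mul_inv, GGaux.hinv]
        linear_combination (-1/3) * GGaux.hr
      · simp only [GG.s, GG.a, div_eq_mul_inv, mul_inv, GGaux.hinv]
        linear_combination (0 : ℝ) * GGaux.hr
    rw [he] at hcomb
    exact ⟨_, hcomb, hC1⟩
  -- fact3
  have fact3 : (convexHull ℝ (GG.T1 ∪ GG.T3) ∩ GG.T2).Nonempty := by
    have hcomb := (convex_convexHull ℝ (GG.T1 ∪ GG.T3))
      (subset_convexHull ℝ _ (Set.mem_union_right _ hP3))
      (subset_convexHull ℝ _ (Set.mem_union_left _ hC1)) hc20 hc10 (by ring)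
    have he : (2 - Real.sqrt 3) • (((GG.s - GG.a) / 2, (GG.s - GG.a) * Real.sqrt 3 / 2) : ℝ × ℝ) +
        (Real.sqrt 3 - 1) • ((GG.a + 1 / 2, Real.sqrt 3 / 2) : ℝ × ℝ) =
        ((GG.s - GG.a / 2 - 1, GG.a * Real.sqrt 3 / 2) : ℝ × ℝ) := by
      simp only [Prod.smul_mk, Prod.mk_add_mk, smul_eq_mul, Prod.mk.injEq]
      constructor
      · simp only [GG.s, GG.a, div_eq_mul_inv, mul_inv, GGaux.hinv]
        linear_combination (1/6) * GGaux.hr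
      · simp only [GG.s, GG.a, div_eq_mul_inv, mul_inv, GGaux.hinv]
        linear_combination (-1/6 * Real.sqrt 3) * GGaux.hr
    rw [he] at hcomb
    exact ⟨_, hcomb, hR2⟩
  refine ⟨⟨fact1, fact2, fact3⟩, ?_, ?_, ?_, ?_⟩
  · -- non-separability
    intro u c _ hne
    by_contra hcon
    have n1' : ¬ ({y : ℝ × ℝ | u.1 * y.1 + u.2 * y.2 = c} ∩ GG.T1).Nonempty :=
      fun h => hcon (Or.inl h)
    have n2' : ¬ ({y : ℝ × ℝ | u.1 * y.1 + u.2 * y.2 = c} ∩ GG.T2).Nonempty :=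
      fun h => hcon (Or.inr (Or.inl h))
    have n3' : ¬ ({y : ℝ × ℝ | u.1 * y.1 + u.2 * y.2 = c} ∩ GG.T3).Nonempty :=
      fun h => hcon (Or.inr (Or.inr h))
    have D1 := GGaux.side3 (α := u.1) (β := u.2) (c := c)
      (v₁ := ((GG.a, 0) : ℝ × ℝ)) (v₂ := ((GG.a + 1, 0) : ℝ × ℝ))
      (v₃ := ((GG.a + 1 / 2, Real.sqrt 3 / 2) : ℝ × ℝ))
      (by unfold GG.T1 at n1'; exact n1')
    have D2 := GGaux.side3 (α := u.1) (β := u.2) (c := c)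
      (v₁ := ((GG.s - GG.a / 2, GG.a * Real.sqrt 3 / 2) : ℝ × ℝ))
      (v₂ := ((GG.s - (GG.a + 1) / 2, (GG.a + 1) * Real.sqrt 3 / 2) : ℝ × ℝ))
      (v₃ := ((GG.s - GG.a / 2 - 1, GG.a * Real.sqrt 3 / 2) : ℝ × ℝ))
      (by unfold GG.T2 at n2'; exact n2')
    have D3 := GGaux.side3 (α := u.1) (β := u.2) (c := c)
      (v₁ := (((GG.s - GG.a) / 2, (GG.s - GG.a) * Real.sqrt 3 / 2) : ℝ × ℝ))
      (v₂ := (((GG.s - GG.a - 1) / 2, (GG.s - GG.a - 1) * Real.sqrt 3 / 2) : ℝ × ℝ))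
      (v₃ := (((GG.s - GG.a) / 2 + 1 / 2,
        (GG.s - GG.a) * Real.sqrt 3 / 2 - Real.sqrt 3 / 2) : ℝ × ℝ))
      (by unfold GG.T3 at n3'; exact n3')
    obtain ⟨p, hpL, hpU⟩ := hne
    have hpc : u.1 * p.1 + u.2 * p.2 = c := hpL
    have D1' : (∀ x ∈ GG.T1, u.1 * x.1 + u.2 * x.2 < c) ∨
        (∀ x ∈ GG.T1, c < u.1 * x.1 + u.2 * x.2) := D1
    have D2' : (∀ x ∈ GG.T2, u.1 * x.1 + u.2 * x.2 < c) ∨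
        (∀ x ∈ GG.T2, c < u.1 * x.1 + u.2 * x.2) := D2
    have D3' : (∀ x ∈ GG.T3, u.1 * x.1 + u.2 * x.2 < c) ∨
        (∀ x ∈ GG.T3, c < u.1 * x.1 + u.2 * x.2) := D3
    rcases D1' with d1 | d1 <;> rcases D2' with d2 | d2 <;> rcases D3' with d3 | d3
    · -- all low
      have hsub : convexHull ℝ (GG.T1 ∪ GG.T2 ∪ GG.T3) ⊆
          {y : ℝ × ℝ | u.1 * y.1 + u.2 * y.2 < c} :=
        convexHull_min (Set.union_subset (Set.union_subset d1 d2) d3)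
          (GGaux.halfspace_lt u.1 u.2 c)
      have := hsub hpU
      simp only [Set.mem_setOf_eq] at this
      linarith
    · exact (GGaux.sep12 fact1 d1 d2 d3).elim
    · exact (GGaux.sep12 fact3 d1 d3 d2).elim
    · exact (GGaux.sep12 (α := -u.1) (β := -u.2) (c := -c) fact2
        (fun x hx => by have := d2 x hx; linarith)
        (fun x hx => by have := d3 x hx; linarith)
        (fun x hx => by have := d1 x hx; linarith)).elim
    · exact (GGaux.sep12 fact2 d2 d3 d1).elim
    · exact (GGaux.sep12 (α := -u.1) (β := -u.2) (c := -c) fact3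
        (fun x hx => by have := d1 x hx; linarith)
        (fun x hx => by have := d3 x hx; linarith)
        (fun x hx => by have := d2 x hx; linarith)).elim
    · exact (GGaux.sep12 (α := -u.1) (β := -u.2) (c := -c) fact1
        (fun x hx => by have := d1 x hx; linarith)
        (fun x hx => by have := d2 x hx; linarith)
        (fun x hx => by have := d3 x hx; linarith)).elim
    · -- all high
      have hsub : convexHull ℝ (GG.T1 ∪ GG.T2 ∪ GG.T3) ⊆
          {y : ℝ × ℝ | -u.1 * y.1 + -u.2 * y.2 < -c} :=
        convexHull_min (Set.union_subset (Set.union_subset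
          (fun x hx => by have := d1 x hx; simp only [Set.mem_setOf_eq]; linarith)
          (fun x hx => by have := d2 x hx; simp only [Set.mem_setOf_eq]; linarith))
          (fun x hx => by have := d3 x hx; simp only [Set.mem_setOf_eq]; linarith))
          (GGaux.halfspace_lt (-u.1) (-u.2) (-c))
      have := hsub hpU
      simp only [Set.mem_setOf_eq] at this
      linarith
  · -- containment in the homothet
    refine ⟨((-(GG.s * GG.a), 0) : ℝ × ℝ), ?_⟩
    have hmA1 : (((GG.a, 0) : ℝ × ℝ)) ∈
        ((-(GG.s * GG.a), 0) : ℝ × ℝ) +ᵥ ((2 / 3 + 2 / (3 * Real.sqrt 3)) * 3) • GG.T1 := by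
      refine GGaux.mem_vadd_smul (y := (3/4 - Real.sqrt 3/12) • (((GG.a, 0) : ℝ × ℝ)) + (1/4 + Real.sqrt 3/12) • (((GG.a + 1, 0) : ℝ × ℝ)) + (0:ℝ) • (((GG.a + 1 / 2, Real.sqrt 3 / 2) : ℝ × ℝ))) ?_ ?_
      · unfold GG.T1
        exact GGaux.mem3 (by nlinarith [GGaux.hlt2]) (by nlinarith [GGaux.hpos.le]) (le_refl 0) (by ring)
      · simp only [Prod.smul_mk, Prod.mk_add_mk, smul_eq_mul, Prod.mk.injEq]
        constructor
        · simp only [GG.s, GG.a, div_eq_mul_inv, mul_inv, GGaux.hinv]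
          linear_combination (1/18) * GGaux.hr
        · simp only [GG.s, GG.a, div_eq_mul_inv, mul_inv, GGaux.hinv]
          linear_combination 0 * GGaux.hr
    have hmB1 : (((GG.a + 1, 0) : ℝ × ℝ)) ∈
        ((-(GG.s * GG.a), 0) : ℝ × ℝ) +ᵥ ((2 / 3 + 2 / (3 * Real.sqrt 3)) * 3) • GG.T1 := by
      refine GGaux.mem_vadd_smul (y := (Real.sqrt 3/6) • (((GG.a, 0) : ℝ × ℝ)) + (1 - Real.sqrt 3/6) • (((GG.a + 1, 0) : ℝ × ℝ)) + (0:ℝ) • (((GG.a + 1 / 2, Real.sqrt 3 / 2) : ℝ × ℝ))) ?_ ?_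
      · unfold GG.T1
        exact GGaux.mem3 (by nlinarith [GGaux.hpos.le]) (by nlinarith [GGaux.hlt2]) (le_refl 0) (by ring)
      · simp only [Prod.smul_mk, Prod.mk_add_mk, smul_eq_mul, Prod.mk.injEq]
        constructor
        · simp only [GG.s, GG.a, div_eq_mul_inv, mul_inv, GGaux.hinv]
          linear_combination (-1/9) * GGaux.hr
        · simp only [GG.s, GG.a, div_eq_mul_inv, mul_inv, GGaux.hinv]
          linear_combination 0 * GGaux.hr
    have hmC1 : (((GG.a + 1 / 2, Real.sqrt 3 / 2) : ℝ × ℝ)) ∈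
        ((-(GG.s * GG.a), 0) : ℝ × ℝ) +ᵥ ((2 / 3 + 2 / (3 * Real.sqrt 3)) * 3) • GG.T1 := by
      refine GGaux.mem_vadd_smul (y := (Real.sqrt 3/6) • (((GG.a, 0) : ℝ × ℝ)) + (1/4 + Real.sqrt 3/12) • (((GG.a + 1, 0) : ℝ × ℝ)) + (3/4 - Real.sqrt 3/4) • (((GG.a + 1 / 2, Real.sqrt 3 / 2) : ℝ × ℝ))) ?_ ?_
      · unfold GG.T1
        exact GGaux.mem3 (by nlinarith [GGaux.hpos.le]) (by nlinarith [GGaux.hpos.le]) (by nlinarith [GGaux.hlt2]) (by ring)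
      · simp only [Prod.smul_mk, Prod.mk_add_mk, smul_eq_mul, Prod.mk.injEq]
        constructor
        · simp only [GG.s, GG.a, div_eq_mul_inv, mul_inv, GGaux.hinv]
          linear_combination (-1/36) * GGaux.hr
        · simp only [GG.s, GG.a, div_eq_mul_inv, mul_inv, GGaux.hinv]
          linear_combination (-1/12*Real.sqrt 3) * GGaux.hr
    have hmP2 : (((GG.s - GG.a / 2, GG.a * Real.sqrt 3 / 2) : ℝ × ℝ)) ∈
        ((-(GG.s * GG.a), 0) : ℝ × ℝ) +ᵥ ((2 / 3 + 2 / (3 * Real.sqrt 3)) * 3) • GG.T1 := by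
      refine GGaux.mem_vadd_smul (y := (0:ℝ) • (((GG.a, 0) : ℝ × ℝ)) + (3/4 - Real.sqrt 3/12) • (((GG.a + 1, 0) : ℝ × ℝ)) + (1/4 + Real.sqrt 3/12) • (((GG.a + 1 / 2, Real.sqrt 3 / 2) : ℝ × ℝ))) ?_ ?_
      · unfold GG.T1
        exact GGaux.mem3 (le_refl 0) (by nlinarith [GGaux.hlt2]) (by nlinarith [GGaux.hpos.le]) (by ring)
      · simp only [Prod.smul_mk, Prod.mk_add_mk, smul_eq_mul, Prod.mk.injEq]
        constructor
        · simp only [GG.s, GG.a, div_eq_mul_inv, mul_inv, GGaux.hinv]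
          linear_combination (-1/36) * GGaux.hr
        · simp only [GG.s, GG.a, div_eq_mul_inv, mul_inv, GGaux.hinv]
          linear_combination (1/36*Real.sqrt 3) * GGaux.hr
    have hmQ2 : (((GG.s - (GG.a + 1) / 2, (GG.a + 1) * Real.sqrt 3 / 2) : ℝ × ℝ)) ∈
        ((-(GG.s * GG.a), 0) : ℝ × ℝ) +ᵥ ((2 / 3 + 2 / (3 * Real.sqrt 3)) * 3) • GG.T1 := by
      refine GGaux.mem_vadd_smul (y := (0:ℝ) • (((GG.a, 0) : ℝ × ℝ)) + (Real.sqrt 3/6) • (((GG.a + 1, 0) : ℝ × ℝ)) + (1 - Real.sqrt 3/6) • (((GG.a + 1 / 2, Real.sqrt 3 / 2) : ℝ × ℝ))) ?_ ?_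
      · unfold GG.T1
        exact GGaux.mem3 (le_refl 0) (by nlinarith [GGaux.hpos.le]) (by nlinarith [GGaux.hlt2]) (by ring)
      · simp only [Prod.smul_mk, Prod.mk_add_mk, smul_eq_mul, Prod.mk.injEq]
        constructor
        · simp only [GG.s, GG.a, div_eq_mul_inv, mul_inv, GGaux.hinv]
          linear_combination (1/18) * GGaux.hr
        · simp only [GG.s, GG.a, div_eq_mul_inv, mul_inv, GGaux.hinv]
          linear_combination (-1/18*Real.sqrt 3) * GGaux.hr
    have hmR2 : (((GG.s - GG.a / 2 - 1, GG.a * Real.sqrt 3 / 2) : ℝ × ℝ)) ∈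
        ((-(GG.s * GG.a), 0) : ℝ × ℝ) +ᵥ ((2 / 3 + 2 / (3 * Real.sqrt 3)) * 3) • GG.T1 := by
      refine GGaux.mem_vadd_smul (y := (3/4 - Real.sqrt 3/4) • (((GG.a, 0) : ℝ × ℝ)) + (Real.sqrt 3/6) • (((GG.a + 1, 0) : ℝ × ℝ)) + (1/4 + Real.sqrt 3/12) • (((GG.a + 1 / 2, Real.sqrt 3 / 2) : ℝ × ℝ))) ?_ ?_
      · unfold GG.T1
        exact GGaux.mem3 (by nlinarith [GGaux.hlt2]) (by nlinarith [GGaux.hpos.le]) (by nlinarith [GGaux.hpos.le]) (by ring)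
      · simp only [Prod.smul_mk, Prod.mk_add_mk, smul_eq_mul, Prod.mk.injEq]
        constructor
        · simp only [GG.s, GG.a, div_eq_mul_inv, mul_inv, GGaux.hinv]
          linear_combination (5/36) * GGaux.hr
        · simp only [GG.s, GG.a, div_eq_mul_inv, mul_inv, GGaux.hinv]
          linear_combination (1/36*Real.sqrt 3) * GGaux.hr
    have hmP3 : ((((GG.s - GG.a) / 2, (GG.s - GG.a) * Real.sqrt 3 / 2) : ℝ × ℝ)) ∈
        ((-(GG.s * GG.a), 0) : ℝ × ℝ) +ᵥ ((2 / 3 + 2 / (3 * Real.sqrt 3)) * 3) • GG.T1 := by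
      refine GGaux.mem_vadd_smul (y := (1/4 + Real.sqrt 3/12) • (((GG.a, 0) : ℝ × ℝ)) + (0:ℝ) • (((GG.a + 1, 0) : ℝ × ℝ)) + (3/4 - Real.sqrt 3/12) • (((GG.a + 1 / 2, Real.sqrt 3 / 2) : ℝ × ℝ))) ?_ ?_
      · unfold GG.T1
        exact GGaux.mem3 (by nlinarith [GGaux.hpos.le]) (le_refl 0) (by nlinarith [GGaux.hlt2]) (by ring)
      · simp only [Prod.smul_mk, Prod.mk_add_mk, smul_eq_mul, Prod.mk.injEq]
        constructor
        · simp only [GG.s, GG.a, div_eq_mul_inv, mul_inv, GGaux.hinv]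
          linear_combination (-1/36) * GGaux.hr
        · simp only [GG.s, GG.a, div_eq_mul_inv, mul_inv, GGaux.hinv]
          linear_combination (-1/36*Real.sqrt 3) * GGaux.hr
    have hmQ3 : ((((GG.s - GG.a - 1) / 2, (GG.s - GG.a - 1) * Real.sqrt 3 / 2) : ℝ × ℝ)) ∈
        ((-(GG.s * GG.a), 0) : ℝ × ℝ) +ᵥ ((2 / 3 + 2 / (3 * Real.sqrt 3)) * 3) • GG.T1 := by
      refine GGaux.mem_vadd_smul (y := (1 - Real.sqrt 3/6) • (((GG.a, 0) : ℝ × ℝ)) + (0:ℝ) • (((GG.a + 1, 0) : ℝ × ℝ)) + (Real.sqrt 3/6) • (((GG.a + 1 / 2, Real.sqrt 3 / 2) : ℝ × ℝ))) ?_ ?_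
      · unfold GG.T1
        exact GGaux.mem3 (by nlinarith [GGaux.hlt2]) (le_refl 0) (by nlinarith [GGaux.hpos.le]) (by ring)
      · simp only [Prod.smul_mk, Prod.mk_add_mk, smul_eq_mul, Prod.mk.injEq]
        constructor
        · simp only [GG.s, GG.a, div_eq_mul_inv, mul_inv, GGaux.hinv]
          linear_combination (1/18) * GGaux.hr
        · simp only [GG.s, GG.a, div_eq_mul_inv, mul_inv, GGaux.hinv]
          linear_combination (1/18*Real.sqrt 3) * GGaux.hr
    have hmR3 : ((((GG.s - GG.a) / 2 + 1 / 2, (GG.s - GG.a) * Real.sqrt 3 / 2 - Real.sqrt 3 / 2) : ℝ × ℝ)) ∈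
        ((-(GG.s * GG.a), 0) : ℝ × ℝ) +ᵥ ((2 / 3 + 2 / (3 * Real.sqrt 3)) * 3) • GG.T1 := by
      refine GGaux.mem_vadd_smul (y := (1/4 + Real.sqrt 3/12) • (((GG.a, 0) : ℝ × ℝ)) + (3/4 - Real.sqrt 3/4) • (((GG.a + 1, 0) : ℝ × ℝ)) + (Real.sqrt 3/6) • (((GG.a + 1 / 2, Real.sqrt 3 / 2) : ℝ × ℝ))) ?_ ?_
      · unfold GG.T1
        exact GGaux.mem3 (by nlinarith [GGaux.hpos.le]) (by nlinarith [GGaux.hlt2]) (by nlinarith [GGaux.hpos.le]) (by ring)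
      · simp only [Prod.smul_mk, Prod.mk_add_mk, smul_eq_mul, Prod.mk.injEq]
        constructor
        · simp only [GG.s, GG.a, div_eq_mul_inv, mul_inv, GGaux.hinv]
          linear_combination (-1/9) * GGaux.hr
        · simp only [GG.s, GG.a, div_eq_mul_inv, mul_inv, GGaux.hinv]
          linear_combination (1/18*Real.sqrt 3) * GGaux.hr

    have hconv : Convex ℝ (((-(GG.s * GG.a), 0) : ℝ × ℝ) +ᵥ
        ((2 / 3 + 2 / (3 * Real.sqrt 3)) * 3) • GG.T1) :=
      ((convex_convexHull ℝ _).smul _).vadd _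
    refine Set.union_subset (Set.union_subset ?_ ?_) ?_
    · unfold GG.T1
      refine convexHull_min ?_ hconv
      intro p hp
      simp only [Set.mem_insert_iff, Set.mem_singleton_iff] at hp
      rcases hp with rfl | rfl | rfl
      · exact hmA1
      · exact hmB1
      · exact hmC1
    · unfold GG.T2
      refine convexHull_min ?_ hconv
      intro p hp
      simp only [Set.mem_insert_iff, Set.mem_singleton_iff] at hp
      rcases hp with rfl | rfl | rfl
      · exact hmP2
      · exact hmQ2
      · exact hmR2
    · unfold GG.T3
      refine convexHull_min ?_ hconv
      intro p hp
      simp only [Set.mem_insert_iff, Set.mem_singleton_iff] at hp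
      rcases hp with rfl | rfl | rfl
      · exact hmP3
      · exact hmQ3
      · exact hmR3
  · -- minimality
    intro σ hσ ⟨z, hz⟩
    obtain ⟨y1, hy1, hy1e⟩ := Set.mem_vadd_set.mp
      (hz (Set.mem_union_left _ (Set.mem_union_left _ hA1)))
    obtain ⟨q1, hq1, rfl⟩ := hy1
    obtain ⟨y2, hy2, hy2e⟩ := Set.mem_vadd_set.mp
      (hz (Set.mem_union_left _ (Set.mem_union_right _ hP2)))
    obtain ⟨q2, hq2, rfl⟩ := hy2
    obtain ⟨y3, hy3, hy3e⟩ := Set.mem_vadd_set.mp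
      (hz (Set.mem_union_right _ hP3))
    obtain ⟨q3, hq3, rfl⟩ := hy3
    have E11 : z.1 + σ * q1.1 = GG.a := by
      have := congrArg Prod.fst hy1e
      simpa [Prod.fst_add, Prod.smul_fst, smul_eq_mul] using this
    have E12 : z.2 + σ * q1.2 = 0 := by
      have := congrArg Prod.snd hy1e
      simpa [Prod.snd_add, Prod.smul_snd, smul_eq_mul] using this
    have E21 : z.1 + σ * q2.1 = GG.s - GG.a / 2 := by
      have := congrArg Prod.fst hy2e
      simpa [Prod.fst_add, Prod.smul_fst, smul_eq_mul] using this
    have E22 : z.2 + σ * q2.2 = GG.a * Real.sqrt 3 / 2 := by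
      have := congrArg Prod.snd hy2e
      simpa [Prod.snd_add, Prod.smul_snd, smul_eq_mul] using this
    have E31 : z.1 + σ * q3.1 = (GG.s - GG.a) / 2 := by
      have := congrArg Prod.fst hy3e
      simpa [Prod.fst_add, Prod.smul_fst, smul_eq_mul] using this
    have E32 : z.2 + σ * q3.2 = (GG.s - GG.a) * Real.sqrt 3 / 2 := by
      have := congrArg Prod.snd hy3e
      simpa [Prod.snd_add, Prod.smul_snd, smul_eq_mul] using this
    unfold GG.T1 at hq1 hq2 hq3
    have B1 : 0 * q1.1 + (-1) * q1.2 ≤ 0 := by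
      refine GGaux.hull3_le 0 (-1) 0 ?_ ?_ ?_ hq1 <;> norm_num
      linarith [GGaux.hpos]
    have B2 : Real.sqrt 3 / 2 * q2.1 + 1 / 2 * q2.2 ≤ Real.sqrt 3 * (GG.a + 1) / 2 := by
      refine GGaux.hull3_le (Real.sqrt 3 / 2) (1 / 2) (Real.sqrt 3 * (GG.a + 1) / 2)
        ?_ ?_ ?_ hq2 <;> norm_num
      · linarith [GGaux.hpos]
      · linarith
      · linarith
    have B3 : -(Real.sqrt 3) / 2 * q3.1 + 1 / 2 * q3.2 ≤ -(Real.sqrt 3 * GG.a / 2) := by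
      refine GGaux.hull3_le (-(Real.sqrt 3) / 2) (1 / 2) (-(Real.sqrt 3 * GG.a / 2))
        ?_ ?_ ?_ hq3 <;> norm_num
      · linarith
      · linarith [GGaux.hpos]
      · linarith
    have B1' := mul_le_mul_of_nonneg_left B1 hσ.le
    have B2' := mul_le_mul_of_nonneg_left B2 hσ.le
    have B3' := mul_le_mul_of_nonneg_left B3 hσ.le
    have M21 : Real.sqrt 3 * (z.1 + σ * q2.1) = Real.sqrt 3 * (GG.s - GG.a / 2) := by
      rw [E21]
    have M31 : Real.sqrt 3 * (z.1 + σ * q3.1) = Real.sqrt 3 * ((GG.s - GG.a) / 2) := by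
      rw [E31]
    have v2 : Real.sqrt 3 / 2 * (GG.s - GG.a / 2) + 1 / 2 * (GG.a * Real.sqrt 3 / 2)
        = Real.sqrt 3 + 1 := by
      simp only [GG.s, GG.a, div_eq_mul_inv, mul_inv, GGaux.hinv]
      linear_combination (1/3) * GGaux.hr
    have v3 : -(Real.sqrt 3) / 2 * ((GG.s - GG.a) / 2)
        + 1 / 2 * ((GG.s - GG.a) * Real.sqrt 3 / 2) = 0 := by ring
    have key : Real.sqrt 3 + 1 ≤ σ * (Real.sqrt 3 / 2) := by
      nlinarith [B1', B2', B3', E12, E22, E32, M21, M31, v2, v3]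
    have hσval : (2 / 3 + 2 / (3 * Real.sqrt 3)) * 3 = 2 + 2 * Real.sqrt 3 / 3 := by
      simp only [div_eq_mul_inv, mul_inv, GGaux.hinv]; ring
    rw [hσval]
    have hmul := mul_le_mul_of_nonneg_left key GGaux.hpos.le
    nlinarith [hmul, GGaux.hr, GGaux.hpos]
  · -- the ratio exceeds 1
    have h1 : (1 : ℝ) / 3 < 2 / (3 * Real.sqrt 3) := by
      rw [div_lt_div_iff₀ (by norm_num) (by positivity)]
      nlinarith [GGaux.hlt2, GGaux.hpos]
    linarith

end
end
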